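/- arXiv:1403.0166 — 8 statements merged into one kernel-verified Lean document; each statement's English description precedes it below -/
import Mathlib

section
/- Let J satisfy (J), let a : ℝ → ℝ be bounded and continuous with a_− := inf a, a_+ := sup a, let λ > a_+, and let φ > 0 be continuous on ℝ and satisfy (J*φ)(x) = (1 + λ − a(x))φ(x) for all x ≥ b. Then with C := C_J (1 + λ − a_−), where C_J := ‖J′‖_∞ / inf_{x∈[−δ,δ]}(J*J)(x), one has |(J*φ)′(x)| ≤ C (J*φ)(x) for every x ≥ b + δ; consequently (J*φ)(y) ≤ e^{C|x−y|} (J*φ)(x) for all x, y ∈ [b+δ, ∞). -/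
open MeasureTheory Filter Real Set

/-- Convolution `(J*φ)(x) = ∫ J(y) φ(x−y) dy`. -/
noncomputable def convol (J φ : ℝ → ℝ) : ℝ → ℝ := fun x => ∫ y, J y * φ (x - y)

/-- `C_J = ‖J′‖_∞ / inf_{x∈[−δ,δ]} (J*J)(x)`. -/
noncomputable def CJconst (J : ℝ → ℝ) (δ : ℝ) : ℝ :=
  (⨆ y : ℝ, |deriv J y|) / sInf (convol J J '' Set.Icc (-δ) δ)

/-- derivative bound `|(J*φ)′(x)| ≤ C (J*φ)(x)` for `x ≥ b + δ`, with
`C = C_J (1 + λ − a_−)`, and the resulting Harnack bound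
`(J*φ)(y) ≤ e^{C|x−y|} (J*φ)(x)` on `[b+δ, ∞)`. -/
theorem stmt3 (J a φ : ℝ → ℝ) (δ am ap lam b : ℝ) (hδ : 0 < δ)
    (hJC1 : ContDiff ℝ 1 J) (hJnonneg : ∀ x, 0 ≤ J x)
    (hJeven : ∀ x, J (-x) = J x) (hJanti : AntitoneOn J (Set.Ici 0))
    (hJsupp : tsupport J = Set.Icc (-δ) δ) (hJint : (∫ y, J y) = 1)
    (haC : Continuous a)
    (ham : IsGLB (Set.range a) am) (hap : IsLUB (Set.range a) ap)
    (hlam : ap < lam)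
    (hφC : Continuous φ) (hφpos : ∀ x, 0 < φ x)
    (heq : ∀ x, b ≤ x → convol J φ x = (1 + lam - a x) * φ x) :
    (∀ x, b + δ ≤ x → DifferentiableAt ℝ (convol J φ) x ∧
      |deriv (convol J φ) x| ≤
        CJconst J δ * (1 + lam - am) * convol J φ x) ∧
    (∀ x y, b + δ ≤ x → b + δ ≤ y →
      convol J φ y ≤
        Real.exp (CJconst J δ * (1 + lam - am) * |x - y|) * convol J φ x) := by
  have hJcont : Continuous J := hJC1.continuous
  have hJcs : HasCompactSupport J := by
    rw [HasCompactSupport, hJsupp]; exact isCompact_Icc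
  have hconv : ∀ g h : ℝ → ℝ,
      convol g h = MeasureTheory.convolution g h (ContinuousLinearMap.mul ℝ ℝ) volume :=
    fun _ _ => rfl
  -- J is positive on (-δ, δ)
  have hJpos : ∀ x : ℝ, |x| < δ → 0 < J x := by
    intro x hx
    rcases (hJnonneg x).lt_or_eq with h | h
    · exact h
    exfalso
    have habs : ∀ s : ℝ, J s = J |s| := by
      intro s
      rcases abs_choice s with h1 | h1
      · rw [h1]
      · rw [h1, hJeven]
    have hzero : ∀ s : ℝ, |x| ≤ s → J s = 0 := by
      intro s hs
      have h2 : J s ≤ J |x| := hJanti (abs_nonneg x) ((abs_nonneg x).trans hs) hs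
      have hx0 : J |x| = 0 := by rw [← habs x, ← h]
      exact le_antisymm (hx0 ▸ h2) (hJnonneg s)
    have hsub : tsupport J ⊆ Set.Icc (-|x|) |x| := by
      apply closure_minimal _ isClosed_Icc
      intro s hs
      rcases le_or_gt |x| |s| with hle | hlt
      · exact absurd ((habs s).trans (hzero _ hle)) hs
      · have := abs_lt.mp hlt
        exact ⟨this.1.le, this.2.le⟩
    have hδmem : δ ∈ tsupport J := by
      rw [hJsupp]; exact ⟨by linarith, le_rfl⟩
    have := (hsub hδmem).2
    linarith
  -- the convolution J*J
  have hJJcont : Continuous (convol J J) := by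
    rw [hconv]
    exact hJcs.continuous_convolution_left _ hJcont hJcont.locallyIntegrable
  have hJJcs : HasCompactSupport (convol J J) := by
    rw [hconv]
    exact hJcs.convolution _ hJcs
  have hJJnonneg : ∀ y, 0 ≤ convol J J y := fun y =>
    integral_nonneg fun t => mul_nonneg (hJnonneg t) (hJnonneg _)
  have hInt : ∀ (g k : ℝ → ℝ), HasCompactSupport g → Continuous g → Continuous k → ∀ x : ℝ,
      Integrable (fun t => g t * k (x - t)) volume := by
    intro g k hgc hg hk x
    exact hgc.convolutionExists_left_of_continuous_right (ContinuousLinearMap.mul ℝ ℝ)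
      hg.locallyIntegrable hk x
  have hJJpos : ∀ y ∈ Set.Icc (-δ) δ, 0 < convol J J y := by
    intro y hy
    have hyδ : |y| ≤ δ := abs_le.mpr ⟨hy.1, hy.2⟩
    have h2 : |y / 2| < δ := by
      rw [abs_div, abs_two]
      linarith [abs_nonneg y]
    have hint : Integrable (fun t => J t * J (y - t)) volume := hInt J J hJcs hJcont hJcont y
    have : (0:ℝ) < ∫ t, J t * J (y - t) := by
      rw [integral_pos_iff_support_of_nonneg
        (fun t => mul_nonneg (hJnonneg t) (hJnonneg _)) hint]
      have hopen : IsOpen (Function.support fun t => J t * J (y - t)) := by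
        have hc : Continuous fun t => J t * J (y - t) :=
          hJcont.mul (hJcont.comp (continuous_const.sub continuous_id))
        rw [Function.support_eq_preimage]
        exact (isOpen_compl_singleton).preimage hc
      apply hopen.measure_pos volume
      refine ⟨y / 2, ?_⟩
      have h1 : 0 < J (y / 2) := hJpos _ h2
      have h3 : 0 < J (y - y / 2) := by
        rw [show y - y / 2 = y / 2 by ring]; exact h1
      exact (mul_pos h1 h3).ne'
    exact this
  -- the infimum m
  set m := sInf (convol J J '' Set.Icc (-δ) δ) with hmdef
  have hKc : IsCompact (convol J J '' Set.Icc (-δ) δ) := isCompact_Icc.image hJJcont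
  have hKne : (convol J J '' Set.Icc (-δ) δ).Nonempty :=
    ⟨_, Set.mem_image_of_mem _ (Set.left_mem_Icc.mpr (by linarith))⟩
  have hmpos : 0 < m := by
    obtain ⟨y, hy, hym⟩ := hKc.sInf_mem hKne
    rw [hmdef, ← hym]
    exact hJJpos y hy
  have hmle : ∀ y ∈ Set.Icc (-δ) δ, m ≤ convol J J y := fun y hy =>
    csInf_le hKc.bddBelow (Set.mem_image_of_mem _ hy)
  -- the supremum M
  have hderivJcont : Continuous (deriv J) := hJC1.continuous_deriv le_rfl
  have hderivJcs : HasCompactSupport (deriv J) := hJcs.deriv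
  have hMbdd : BddAbove (Set.range fun y => |deriv J y|) := by
    simpa [Real.norm_eq_abs] using
      hderivJcont.norm.bddAbove_range_of_hasCompactSupport hderivJcs.norm
  set M := ⨆ y : ℝ, |deriv J y| with hMdef
  have hMle : ∀ y, |deriv J y| ≤ M := fun y => le_ciSup hMbdd y
  have hM0 : 0 ≤ M := (abs_nonneg _).trans (hMle 0)
  have hCJ : CJconst J δ = M / m := by rw [hMdef, hmdef]; rfl
  -- basic facts about f = convol J φ
  set f := convol J φ with hfdef
  have hφloc : LocallyIntegrable φ volume := hφC.locallyIntegrable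
  have hfd : ∀ x, HasDerivAt f (convol (deriv J) φ x) x := by
    intro x
    rw [hfdef, hconv J φ, hconv (deriv J) φ]
    exact hJcs.hasDerivAt_convolution_left _ hJC1 hφloc x
  have hfcont : Continuous f := continuous_iff_continuousAt.mpr fun x => (hfd x).continuousAt
  have haam : ∀ x, am ≤ a x := fun x => ham.1 ⟨x, rfl⟩
  have haap : ∀ x, a x ≤ ap := fun x => hap.1 ⟨x, rfl⟩
  have hfposb : ∀ x, b ≤ x → 0 < f x := by
    intro x hx
    rw [heq x hx]
    have := haap x
    exact mul_pos (by linarith) (hφpos x)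
  -- associativity of convolution
  have hassoc : ∀ x : ℝ, convol (convol J J) φ x = convol J f x := by
    intro x
    rw [hfdef, hconv J J, hconv _ φ, hconv J φ, hconv J _]
    exact convolution_assoc (ContinuousLinearMap.mul ℝ ℝ) (ContinuousLinearMap.mul ℝ ℝ)
      (ContinuousLinearMap.mul ℝ ℝ) (ContinuousLinearMap.mul ℝ ℝ)
      (fun a b c => mul_assoc a b c)
      hJcont.aestronglyMeasurable hJcont.aestronglyMeasurable hφC.aestronglyMeasurable
      (Eventually.of_forall fun y =>
        hJcs.convolutionExists_left_of_continuous_right _ hJcont.locallyIntegrable hJcont y)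
      (Eventually.of_forall fun y =>
        hJcs.norm.convolutionExists_left_of_continuous_right _
          hJcont.norm.locallyIntegrable hφC.norm y)
      (hJcs.norm.convolutionExists_left_of_continuous_right _ hJcont.norm.locallyIntegrable
        (hJcs.norm.continuous_convolution_left _ hJcont.norm hφC.norm.locallyIntegrable) x)
  -- the key derivative bound
  have hkey : ∀ x, b + δ ≤ x → |convol (deriv J) φ x| ≤ CJconst J δ * (1 + lam - am) * f x := by
    intro x hx
    have h1 : |convol (deriv J) φ x| ≤ ∫ y, |deriv J y| * φ (x - y) := by
      have hn := norm_integral_le_integral_norm (fun y => deriv J y * φ (x - y)) (μ := volume)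
      simp only [Real.norm_eq_abs, abs_mul] at hn
      calc |convol (deriv J) φ x| = |∫ y, deriv J y * φ (x - y)| := rfl
        _ ≤ ∫ y, |deriv J y| * |φ (x - y)| := hn
        _ = ∫ y, |deriv J y| * φ (x - y) := by
            congr 1; funext y; rw [abs_of_pos (hφpos _)]
    have h2 : (∫ y, |deriv J y| * φ (x - y)) ≤
        ∫ y, (M / m) * (convol J J y * φ (x - y)) := by
      refine integral_mono
        (hInt (fun y => |deriv J y|) φ (hderivJcs.comp_left (g := abs) abs_zero)
          hderivJcont.abs hφC x)
        ((hInt (convol J J) φ hJJcs hJJcont hφC x).const_mul (M / m)) ?_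
      intro y
      by_cases hyδ : |y| ≤ δ
      · have hy1 : |deriv J y| ≤ (M / m) * convol J J y := by
          calc |deriv J y| ≤ M := hMle y
            _ = (M / m) * m := by field_simp
            _ ≤ (M / m) * convol J J y := by
                exact mul_le_mul_of_nonneg_left
                  (hmle y (abs_le.mp hyδ |> fun h => ⟨h.1, h.2⟩)) (div_nonneg hM0 hmpos.le)
        have := mul_le_mul_of_nonneg_right hy1 (hφpos (x - y)).le
        simpa [mul_assoc] using this
      · have hd0 : deriv J y = 0 := by
          apply image_eq_zero_of_notMem_tsupport
          intro hmem
          have hsub2 : tsupport (deriv J) ⊆ tsupport J :=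
            closure_minimal support_deriv_subset (isClosed_tsupport J)
          have := hsub2 hmem
          rw [hJsupp] at this
          exact hyδ (abs_le.mpr ⟨this.1, this.2⟩)
        simp only [hd0, abs_zero, zero_mul]
        exact mul_nonneg (div_nonneg hM0 hmpos.le)
          (mul_nonneg (hJJnonneg y) (hφpos _).le)
    have h5 : convol J f x ≤ (1 + lam - am) * f x := by
      have hle : ∀ z : ℝ, J z * f (x - z) ≤ J z * ((1 + lam - am) * φ (x - z)) := by
        intro z
        rcases (hJnonneg z).lt_or_eq with hz | hz
        · apply mul_le_mul_of_nonneg_left _ (hJnonneg z)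
          have hzsupp : z ∈ tsupport J := subset_closure (fun h0 => hz.ne' h0)
          rw [hJsupp] at hzsupp
          have hxz : b ≤ x - z := by
            have := hzsupp.2; linarith
          rw [heq _ hxz]
          apply mul_le_mul_of_nonneg_right _ (hφpos _).le
          linarith [haam (x - z)]
        · rw [← hz]; simp
      calc convol J f x = ∫ z, J z * f (x - z) := rfl
        _ ≤ ∫ z, J z * ((1 + lam - am) * φ (x - z)) :=
            integral_mono (hInt J f hJcs hJcont hfcont x)
              (hInt J (fun w => (1 + lam - am) * φ w) hJcs hJcont
                (continuous_const.mul hφC) x) hle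
        _ = (1 + lam - am) * ∫ z, J z * φ (x - z) := by
            simp_rw [mul_left_comm _ (1 + lam - am)]
            rw [integral_const_mul]
        _ = (1 + lam - am) * f x := rfl
    calc |convol (deriv J) φ x| ≤ ∫ y, |deriv J y| * φ (x - y) := h1
      _ ≤ ∫ y, (M / m) * (convol J J y * φ (x - y)) := h2
      _ = (M / m) * convol (convol J J) φ x := by rw [integral_const_mul]; rfl
      _ = (M / m) * convol J f x := by rw [hassoc]
      _ ≤ (M / m) * ((1 + lam - am) * f x) :=
          mul_le_mul_of_nonneg_left h5 (div_nonneg hM0 hmpos.le)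
      _ = CJconst J δ * (1 + lam - am) * f x := by rw [hCJ]; ring
  have part1 : ∀ x, b + δ ≤ x → DifferentiableAt ℝ f x ∧
      |deriv f x| ≤ CJconst J δ * (1 + lam - am) * f x := by
    intro x hx
    refine ⟨(hfd x).differentiableAt, ?_⟩
    rw [(hfd x).deriv]
    exact hkey x hx
  refine ⟨part1, ?_⟩
  intro x y hx hy
  have hbd : ∀ z ∈ Set.Ici (b + δ), b ≤ z := fun z hz => by
    have := mem_Ici.mp hz; linarith
  have hlog : ∀ z ∈ Set.Ici (b + δ),
      HasDerivWithinAt (fun w => Real.log (f w)) (convol (deriv J) φ z / f z)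
        (Set.Ici (b + δ)) z := by
    intro z hz
    exact ((hfd z).log (hfposb z (hbd z hz)).ne').hasDerivWithinAt
  have hbound : ∀ z ∈ Set.Ici (b + δ), ‖convol (deriv J) φ z / f z‖ ≤
      CJconst J δ * (1 + lam - am) := by
    intro z hz
    have hfz : 0 < f z := hfposb z (hbd z hz)
    rw [Real.norm_eq_abs, abs_div, abs_of_pos hfz, div_le_iff₀ hfz]
    exact hkey z (mem_Ici.mp hz)
  have hmvt := (convex_Ici (b + δ)).norm_image_sub_le_of_norm_hasDerivWithin_le
    hlog hbound (mem_Ici.mpr hx) (mem_Ici.mpr hy)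
  have hfx : 0 < f x := hfposb x (by linarith)
  have hfy : 0 < f y := hfposb y (by linarith)
  have h1 : Real.log (f y) - Real.log (f x) ≤ CJconst J δ * (1 + lam - am) * |x - y| := by
    have h2 := le_trans (le_abs_self _) hmvt
    rw [Real.norm_eq_abs, abs_sub_comm] at h2
    exact h2
  calc f y = Real.exp (Real.log (f y)) := (Real.exp_log hfy).symm
    _ ≤ Real.exp (CJconst J δ * (1 + lam - am) * |x - y| + Real.log (f x)) :=
        Real.exp_le_exp.mpr (by linarith)
    _ = Real.exp (CJconst J δ * (1 + lam - am) * |x - y|) * f x := by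
        rw [Real.exp_add, Real.exp_log hfx]
end

section
/- Let J satisfy (J), let a : ℝ → ℝ be bounded and continuous with a_− := inf a, a_+ := sup a, let λ > a_+, and let φ > 0 be continuous on ℝ, satisfy (J*φ)(x) = (1 + λ − a(x))φ(x) for all x ≥ b, and lim_{x→∞} φ(x) = 0. Then there exist constants C = C(J, λ−a_−) > 0 and m = m(J, λ−a_−, λ−a_+) > 0 such that (J*φ)(y) ≤ (C/m) e^{−m(y−x)} (J*φ)(x) whenever y ≥ x ≥ b + δ; one may take C = C_J(1+λ−a_−) with C_J := ‖J′‖_∞ / inf_{x∈[−δ,δ]}(J*J)(x), and m = δ^{−1} e^{−Cδ} (λ−a_+)/(1+λ−a_+). -/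
open MeasureTheory Filter Real Set Topology
open scoped Convolution ENNReal

lemma convol_eq_convolution (J φ : ℝ → ℝ) :
    convol J φ = (J ⋆[ContinuousLinearMap.mul ℝ ℝ, volume] φ) := by
  funext x
  simp [convol, convolution_def]

lemma integrable_kernel {J φ : ℝ → ℝ} (hJc : Continuous J) (hJcs : HasCompactSupport J)
    (hφC : Continuous φ) (x : ℝ) : Integrable fun w => J w * φ (x - w) := by
  apply Continuous.integrable_of_hasCompactSupport
  · exact hJc.mul (hφC.comp (continuous_const.sub continuous_id))
  · exact hJcs.mul_right

lemma convol_cont {J φ : ℝ → ℝ} (hJc : Continuous J) (hJcs : HasCompactSupport J)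
    (hφC : Continuous φ) : Continuous (convol J φ) := by
  rw [convol_eq_convolution]
  exact hJcs.continuous_convolution_left _ hJc hφC.locallyIntegrable

section Jfacts
variable {J : ℝ → ℝ} {δ : ℝ}

lemma J_eq_abs (hJeven : ∀ x, J (-x) = J x) (w : ℝ) : J w = J |w| := by
  rcases abs_cases w with ⟨h, _⟩ | ⟨h, _⟩
  · rw [h]
  · rw [h, hJeven]

lemma J_le_J0 (hJeven : ∀ x, J (-x) = J x) (hJanti : AntitoneOn J (Set.Ici 0)) (w : ℝ) :
    J w ≤ J 0 := by
  rw [J_eq_abs hJeven w]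
  exact hJanti (le_refl (0:ℝ)) (abs_nonneg w) (abs_nonneg w)

lemma J_zero_outside (hJsupp : tsupport J = Set.Icc (-δ) δ) {w : ℝ} (hw : w ∉ Set.Icc (-δ) δ) :
    J w = 0 := image_eq_zero_of_notMem_tsupport (hJsupp ▸ hw)

lemma J_cs (hJsupp : tsupport J = Set.Icc (-δ) δ) : HasCompactSupport J := by
  rw [HasCompactSupport, hJsupp]; exact isCompact_Icc

lemma J_delta_zero (hδ : 0 < δ) (hJc : Continuous J)
    (hJsupp : tsupport J = Set.Icc (-δ) δ) : J δ = 0 := by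
  have h1 : Tendsto J (nhdsWithin δ (Set.Ioi δ)) (nhds (J δ)) :=
    (hJc.tendsto δ).mono_left nhdsWithin_le_nhds
  have h2 : Tendsto J (nhdsWithin δ (Set.Ioi δ)) (nhds 0) := by
    apply Tendsto.congr' _ tendsto_const_nhds
    filter_upwards [self_mem_nhdsWithin] with t ht
    exact (J_zero_outside hJsupp (by simp only [Set.mem_Icc]; intro h; linarith [ht.out])).symm
  exact tendsto_nhds_unique h1 h2

lemma J_pos (hδ : 0 < δ) (hJnonneg : ∀ x, 0 ≤ J x) (hJeven : ∀ x, J (-x) = J x)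
    (hJanti : AntitoneOn J (Set.Ici 0)) (hJsupp : tsupport J = Set.Icc (-δ) δ)
    {w : ℝ} (hw : |w| < δ) : 0 < J w := by
  rw [J_eq_abs hJeven w]
  rcases lt_or_eq_of_le (hJnonneg |w|) with h | h
  · exact h
  exfalso
  have hsupp : Function.support J ⊆ Set.Icc (-|w|) |w| := by
    intro t ht
    by_contra hmem
    apply ht
    have habs : |w| < |t| := by
      simp only [Set.mem_Icc, not_and_or, not_le] at hmem
      rcases hmem with h1 | h1
      · calc |w| < -t := by linarith
          _ ≤ |t| := neg_le_abs t
      · exact lt_of_lt_of_le h1 (le_abs_self t)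
    rw [J_eq_abs hJeven t]
    have := hJanti (abs_nonneg w) (le_trans (abs_nonneg w) habs.le) habs.le
    have h0 := hJnonneg |t|
    rw [← h] at this; linarith
  have : tsupport J ⊆ Set.Icc (-|w|) |w| := closure_minimal hsupp isClosed_Icc
  rw [hJsupp] at this
  have hδmem : δ ∈ Set.Icc (-|w|) |w| := this ⟨by linarith, le_rfl⟩
  have := hδmem.2
  linarith

lemma J0_le (hδ : 0 < δ) (hJC1 : ContDiff ℝ 1 J) (hJnonneg : ∀ x, 0 ≤ J x)
    (hJsupp : tsupport J = Set.Icc (-δ) δ) :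
    J 0 ≤ (⨆ y : ℝ, |deriv J y|) * δ := by
  have hJc := hJC1.continuous
  obtain ⟨c, _, hcd⟩ := exists_hasDerivAt_eq_slope J (deriv J) hδ hJc.continuousOn
    (fun x _ => ((hJC1.differentiable one_ne_zero) x).hasDerivAt)
  have hbdd : BddAbove (Set.range fun y => |deriv J y|) := by
    apply Continuous.bddAbove_range_of_hasCompactSupport
    · exact (hJC1.continuous_deriv le_rfl).abs
    · exact ((J_cs hJsupp).deriv).abs
  have h1 : |deriv J c| ≤ ⨆ y : ℝ, |deriv J y| := le_ciSup hbdd c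
  rw [hcd, J_delta_zero hδ hJc hJsupp] at h1
  rw [abs_div, sub_zero, abs_of_pos hδ, abs_sub_comm, sub_zero,
    abs_of_nonneg (hJnonneg 0)] at h1
  calc J 0 = J 0 / δ * δ := by field_simp
    _ ≤ (⨆ y : ℝ, |deriv J y|) * δ := by
        apply mul_le_mul_of_nonneg_right _ hδ.le
        exact h1

end Jfacts

lemma ae_fst_mem {S : Set ℝ} (hS : MeasurableSet S) :
    ∀ᵐ p : ℝ × ℝ ∂((volume.restrict S).prod volume), p.1 ∈ S := by
  rw [ae_iff]
  have h : {p : ℝ × ℝ | ¬ p.1 ∈ S} = Sᶜ ×ˢ (Set.univ : Set ℝ) := by ext p; simp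
  rw [h, Measure.prod_prod, Measure.restrict_apply hS.compl]
  simp

lemma strip_integrable {J φ : ℝ → ℝ} {δ : ℝ} (hδ : 0 < δ) (hJc : Continuous J)
    (hJnonneg : ∀ x, 0 ≤ J x) (hJ0 : ∀ w, J w ≤ J 0)
    (hJzero : ∀ w, w ∉ Set.Icc (-δ) δ → J w = 0)
    (hφC : Continuous φ) (hφnonneg : ∀ t, 0 ≤ φ t) {x R : ℝ} (hxR : x ≤ R) :
    Integrable (fun p : ℝ × ℝ => J p.2 * φ (p.1 - p.2))
      ((volume.restrict (Set.Ioc x R)).prod volume) := by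
  obtain ⟨t0, ht0mem, ht0⟩ := isCompact_Icc.exists_isMaxOn
    (⟨x - δ, by constructor <;> linarith⟩ : (Set.Icc (x - δ) (R + δ)).Nonempty)
    hφC.continuousOn
  haveI : IsFiniteMeasure (volume.restrict (Set.Ioc x R)) :=
    ⟨by rw [Measure.restrict_apply_univ]; exact measure_Ioc_lt_top⟩
  have hind : Integrable (Set.indicator (Set.Icc (-δ) δ) (fun _ => J 0 * φ t0)) volume := by
    apply MeasureTheory.IntegrableOn.integrable_indicator _ measurableSet_Icc
    rw [MeasureTheory.integrableOn_const_iff (C := J 0 * φ t0)]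
    right; exact measure_Icc_lt_top
  have hg : Integrable
      (fun p : ℝ × ℝ => (fun _ : ℝ => (1:ℝ)) p.1 *
        (Set.indicator (Set.Icc (-δ) δ) (fun _ => J 0 * φ t0)) p.2)
      ((volume.restrict (Set.Ioc x R)).prod volume) :=
    Integrable.mul_prod (integrable_const 1) hind
  refine hg.mono' ?_ ?_
  · exact (Continuous.aestronglyMeasurable
      ((hJc.comp continuous_snd).mul (hφC.comp (continuous_fst.sub continuous_snd))))
  · filter_upwards [ae_fst_mem (measurableSet_Ioc : MeasurableSet (Set.Ioc x R))] with p hp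
    by_cases hw : p.2 ∈ Set.Icc (-δ) δ
    · rw [Set.indicator_of_mem hw, one_mul]
      rw [Real.norm_eq_abs, abs_of_nonneg (mul_nonneg (hJnonneg _) (hφnonneg _))]
      apply mul_le_mul (hJ0 _) _ (hφnonneg _) (hJnonneg 0)
      apply ht0
      constructor
      · have := hp.1; have := hw.2; simp only [Set.mem_Icc] at hw ⊢; linarith [hw.2, hp.1.le]
      · have := hp.2; have := hw.1; linarith [hw.1, hp.2]
    · rw [Set.indicator_of_notMem hw, hJzero p.2 hw, zero_mul, one_mul]
      simp

lemma strip_swap {J φ : ℝ → ℝ} {δ : ℝ} (hδ : 0 < δ) (hJc : Continuous J)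
    (hJnonneg : ∀ x, 0 ≤ J x) (hJ0 : ∀ w, J w ≤ J 0)
    (hJzero : ∀ w, w ∉ Set.Icc (-δ) δ → J w = 0)
    (hφC : Continuous φ) (hφnonneg : ∀ t, 0 ≤ φ t) {x R : ℝ} (hxR : x ≤ R) :
    ∫ t in Set.Ioc x R, convol J φ t = ∫ w, J w * ∫ u in (x-w)..(R-w), φ u := by
  have h1 := MeasureTheory.integral_integral_swap
    (f := fun t w => J w * φ (t - w)) (μ := volume.restrict (Set.Ioc x R)) (ν := volume)
    (strip_integrable hδ hJc hJnonneg hJ0 hJzero hφC hφnonneg hxR)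
  calc ∫ t in Set.Ioc x R, convol J φ t
      = ∫ w, ∫ t in Set.Ioc x R, J w * φ (t - w) := h1
    _ = ∫ w, J w * ∫ u in (x-w)..(R-w), φ u := by
        congr 1; funext w
        rw [integral_const_mul, ← intervalIntegral.integral_of_le hxR,
          ← intervalIntegral.integral_comp_sub_right (fun u => φ u) w]

lemma strip_ineq {J a φ : ℝ → ℝ} {δ ap lam b : ℝ} (hδ : 0 < δ) (hJc : Continuous J)
    (hJcs : HasCompactSupport J)
    (hJnonneg : ∀ x, 0 ≤ J x) (hJ0 : ∀ w, J w ≤ J 0)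
    (hJzero : ∀ w, w ∉ Set.Icc (-δ) δ → J w = 0) (hJint : (∫ y, J y) = 1)
    (hap : IsLUB (Set.range a) ap)
    (hφC : Continuous φ) (hφnonneg : ∀ t, 0 ≤ φ t)
    (heq : ∀ x, b ≤ x → convol J φ x = (1 + lam - a x) * φ x)
    {x R : ℝ} (hbx : b ≤ x) (hxR : x ≤ R) :
    (lam - ap) * ∫ u in x..R, φ u ≤ (∫ u in (x-δ)..x, φ u) + ∫ u in R..(R+δ), φ u := by
  have hIφ : ∀ p q : ℝ, IntervalIntegrable φ volume p q := fun p q =>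
    hφC.intervalIntegrable p q
  have hψC : Continuous (convol J φ) := convol_cont hJc hJcs hφC
  set S := (∫ u in (x-δ)..x, φ u) + (∫ u in x..R, φ u) + ∫ u in R..(R+δ), φ u with hS
  -- step 1
  have A1 : (1 + lam - ap) * ∫ u in x..R, φ u ≤ ∫ t in x..R, convol J φ t := by
    rw [← intervalIntegral.integral_const_mul]
    apply intervalIntegral.integral_mono_on hxR ((hIφ x R).const_mul _)
      (hψC.intervalIntegrable x R)
    intro t ht
    rw [heq t (le_trans hbx ht.1)]
    apply mul_le_mul_of_nonneg_right _ (hφnonneg t)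
    have : a t ≤ ap := hap.1 ⟨t, rfl⟩
    linarith
  -- step 2 : Fubini
  have A2 : ∫ t in x..R, convol J φ t = ∫ w, J w * ∫ u in (x-w)..(R-w), φ u := by
    rw [intervalIntegral.integral_of_le hxR]
    exact strip_swap hδ hJc hJnonneg hJ0 hJzero hφC hφnonneg hxR
  -- step 3 : pointwise bound
  have F : Continuous fun z => ∫ u in (0:ℝ)..z, φ u :=
    intervalIntegral.continuous_primitive hIφ 0
  have A3 : (∫ w, J w * ∫ u in (x-w)..(R-w), φ u) ≤ ∫ w, J w * S := by
    apply MeasureTheory.integral_mono _ _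
    · intro w
      by_cases hw : w ∈ Set.Icc (-δ) δ
      · apply mul_le_mul_of_nonneg_left _ (hJnonneg w)
        have hsplit : (∫ u in (x-w)..x, φ u) + (∫ u in x..R, φ u) + (∫ u in R..(R-w), φ u)
            = ∫ u in (x-w)..(R-w), φ u := by
          rw [intervalIntegral.integral_add_adjacent_intervals (hIφ _ _) (hIφ _ _),
            intervalIntegral.integral_add_adjacent_intervals (hIφ _ _) (hIφ _ _)]
        have b1 : (∫ u in (x-w)..x, φ u) ≤ ∫ u in (x-δ)..x, φ u := by
          have hadj := intervalIntegral.integral_add_adjacent_intervals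
            (hIφ (x-δ) (x-w)) (hIφ (x-w) x)
          have hpos : 0 ≤ ∫ u in (x-δ)..(x-w), φ u :=
            intervalIntegral.integral_nonneg (by linarith [hw.2]) (fun u _ => hφnonneg u)
          linarith
        have b2 : (∫ u in R..(R-w), φ u) ≤ ∫ u in R..(R+δ), φ u := by
          have hadj := intervalIntegral.integral_add_adjacent_intervals
            (hIφ R (R-w)) (hIφ (R-w) (R+δ))
          have hpos : 0 ≤ ∫ u in (R-w)..(R+δ), φ u :=
            intervalIntegral.integral_nonneg (by linarith [hw.1]) (fun u _ => hφnonneg u)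
          linarith
        rw [← hsplit, hS]
        gcongr
      · show J w * (∫ u in (x-w)..(R-w), φ u) ≤ J w * S
        rw [hJzero w hw, zero_mul, zero_mul]
    · -- integrability of LHS
      have : (fun w => J w * ∫ u in (x-w)..(R-w), φ u)
          = fun w => J w * ((fun z => ∫ u in (0:ℝ)..z, φ u) (R-w)
              - (fun z => ∫ u in (0:ℝ)..z, φ u) (x-w)) := by
        funext w
        rw [intervalIntegral.integral_interval_sub_left (hIφ 0 (R-w)) (hIφ 0 (x-w))]
      rw [this]
      apply Continuous.integrable_of_hasCompactSupport
      · exact hJc.mul ((F.comp (continuous_const.sub continuous_id)).sub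
          (F.comp (continuous_const.sub continuous_id)))
      · exact hJcs.mul_right
    · exact (hJc.integrable_of_hasCompactSupport hJcs).mul_const S
  have A4 : (∫ w, J w * S) = S := by rw [integral_mul_const, hJint, one_mul]
  have := A1.trans (A2 ▸ (A3.trans_eq A4))
  rw [hS] at this
  nlinarith [this]

lemma integrableOn_tail {J a φ : ℝ → ℝ} {δ ap lam b : ℝ} (hδ : 0 < δ) (hJc : Continuous J)
    (hJcs : HasCompactSupport J)
    (hJnonneg : ∀ x, 0 ≤ J x) (hJ0 : ∀ w, J w ≤ J 0)
    (hJzero : ∀ w, w ∉ Set.Icc (-δ) δ → J w = 0) (hJint : (∫ y, J y) = 1)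
    (hap : IsLUB (Set.range a) ap) (hlam : ap < lam)
    (hφC : Continuous φ) (hφnonneg : ∀ t, 0 ≤ φ t)
    (heq : ∀ x, b ≤ x → convol J φ x = (1 + lam - a x) * φ x)
    (hφtop : Tendsto φ atTop (nhds 0))
    {x : ℝ} (hbx : b ≤ x) : IntegrableOn φ (Set.Ioi x) volume := by
  have hev : ∀ᶠ t in atTop, φ t ≤ 1 := hφtop.eventually_le_const (by norm_num)
  obtain ⟨R₀, hR₀⟩ := eventually_atTop.1 hev
  apply integrableOn_Ioi_of_intervalIntegral_norm_bounded
    (((∫ u in (x-δ)..x, φ u) + δ)/(lam - ap)) x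
    (fun R : ℝ => hφC.integrableOn_Ioc) (tendsto_id (α := ℝ))
  filter_upwards [eventually_ge_atTop (max x R₀)] with R hR
  have hxR : x ≤ R := le_trans (le_max_left _ _) hR
  have h1 := strip_ineq hδ hJc hJcs hJnonneg hJ0 hJzero hJint hap hφC hφnonneg heq hbx hxR
  have h2 : (∫ u in R..(R+δ), φ u) ≤ δ := by
    have : (∫ u in R..(R+δ), φ u) ≤ ∫ u in R..(R+δ), (1:ℝ) := by
      apply intervalIntegral.integral_mono_on (by linarith) (hφC.intervalIntegrable _ _)
        intervalIntegrable_const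
      intro t ht
      exact hR₀ t (le_trans (le_trans (le_max_right _ _) hR) ht.1)
    simpa using this
  have h3 : (∫ u in x..R, ‖φ u‖) = ∫ u in x..R, φ u := by
    congr 1; funext u; exact Real.norm_of_nonneg (hφnonneg u)
  simp only [id_eq]
  rw [h3, le_div_iff₀ (by linarith : (0:ℝ) < lam - ap)]
  calc (∫ u in x..R, φ u) * (lam - ap) = (lam - ap) * ∫ u in x..R, φ u := by ring
    _ ≤ (∫ u in (x-δ)..x, φ u) + ∫ u in R..(R+δ), φ u := h1
    _ ≤ (∫ u in (x-δ)..x, φ u) + δ := by linarith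

lemma key_step {J a φ : ℝ → ℝ} {δ ap lam b : ℝ} (hδ : 0 < δ) (hJc : Continuous J)
    (hJcs : HasCompactSupport J)
    (hJnonneg : ∀ x, 0 ≤ J x) (hJ0 : ∀ w, J w ≤ J 0)
    (hJzero : ∀ w, w ∉ Set.Icc (-δ) δ → J w = 0) (hJint : (∫ y, J y) = 1)
    (hap : IsLUB (Set.range a) ap) (hlam : ap < lam)
    (hφC : Continuous φ) (hφnonneg : ∀ t, 0 ≤ φ t)
    (heq : ∀ x, b ≤ x → convol J φ x = (1 + lam - a x) * φ x)
    (hφtop : Tendsto φ atTop (nhds 0))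
    {x : ℝ} (hbx : b ≤ x) :
    (lam - ap) * (∫ t in Set.Ioi x, φ t) ≤ ∫ u in (x-δ)..x, φ u := by
  have hint := integrableOn_tail hδ hJc hJcs hJnonneg hJ0 hJzero hJint hap hlam hφC
    hφnonneg heq hφtop hbx
  have h1 : Tendsto (fun R => ∫ u in x..R, φ u) atTop (𝓝 (∫ t in Set.Ioi x, φ t)) :=
    intervalIntegral_tendsto_integral_Ioi x hint tendsto_id
  have h1' : Tendsto (fun R : ℝ => ∫ u in x..(R+δ), φ u) atTop (𝓝 (∫ t in Set.Ioi x, φ t)) :=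
    intervalIntegral_tendsto_integral_Ioi x hint (tendsto_atTop_add_const_right _ δ tendsto_id)
  have h2 : Tendsto (fun R : ℝ => ∫ u in R..(R+δ), φ u) atTop (𝓝 0) := by
    have heq2 : ∀ᶠ R in (atTop : Filter ℝ), (∫ u in x..(R+δ), φ u) - (∫ u in x..R, φ u)
        = ∫ u in R..(R+δ), φ u := by
      filter_upwards [eventually_ge_atTop x] with R hR
      exact intervalIntegral.integral_interval_sub_left (hφC.intervalIntegrable _ _)
        (hφC.intervalIntegrable _ _)
    have := (h1'.sub h1)
    rw [sub_self] at this
    exact Tendsto.congr' heq2 this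
  have hev : ∀ᶠ R in (atTop : Filter ℝ),
      (lam - ap) * (∫ u in x..R, φ u) ≤ (∫ u in (x-δ)..x, φ u) + ∫ u in R..(R+δ), φ u := by
    filter_upwards [eventually_ge_atTop x] with R hR
    exact strip_ineq hδ hJc hJcs hJnonneg hJ0 hJzero hJint hap hφC hφnonneg heq hbx hR
  have hlim := le_of_tendsto_of_tendsto (h1.const_mul (lam - ap))
    (tendsto_const_nhds.add h2) hev
  simpa using hlim

section Ulemmas

variable {J a φ : ℝ → ℝ} {δ ap lam b : ℝ}

lemma u_anti (hφnonneg : ∀ t, 0 ≤ φ t) {p q : ℝ} (hpq : p ≤ q)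
    (hint : IntegrableOn φ (Set.Ioi p) volume) :
    (∫ t in Set.Ioi q, φ t) ≤ ∫ t in Set.Ioi p, φ t := by
  apply setIntegral_mono_set hint
  · filter_upwards with t; exact hφnonneg t
  · exact HasSubset.Subset.eventuallyLE (Set.Ioi_subset_Ioi hpq)

lemma u_split (hφnonneg : ∀ t, 0 ≤ φ t) {p q : ℝ} (hpq : p ≤ q)
    (hφC : Continuous φ) (hint : IntegrableOn φ (Set.Ioi p) volume) :
    (∫ t in Set.Ioi p, φ t) = (∫ t in p..q, φ t) + ∫ t in Set.Ioi q, φ t := by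
  rw [intervalIntegral.integral_of_le hpq, ← MeasureTheory.setIntegral_union
    (Set.Ioc_disjoint_Ioi le_rfl) measurableSet_Ioi hφC.integrableOn_Ioc
    (hint.mono_set (Set.Ioi_subset_Ioi hpq)), Set.Ioc_union_Ioi_eq_Ioi hpq]

lemma u_step (hδ : 0 < δ) (hJc : Continuous J)
    (hJcs : HasCompactSupport J)
    (hJnonneg : ∀ x, 0 ≤ J x) (hJ0 : ∀ w, J w ≤ J 0)
    (hJzero : ∀ w, w ∉ Set.Icc (-δ) δ → J w = 0) (hJint : (∫ y, J y) = 1)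
    (hap : IsLUB (Set.range a) ap) (hlam : ap < lam)
    (hφC : Continuous φ) (hφnonneg : ∀ t, 0 ≤ φ t)
    (heq : ∀ x, b ≤ x → convol J φ x = (1 + lam - a x) * φ x)
    (hφtop : Tendsto φ atTop (nhds 0))
    {x : ℝ} (hbx : b ≤ x) :
    (1 + lam - ap) * (∫ t in Set.Ioi x, φ t) ≤ ∫ t in Set.Ioi (x - δ), φ t := by
  have hint1 := integrableOn_tail hδ hJc hJcs hJnonneg hJ0 hJzero hJint hap hlam hφC
    hφnonneg heq hφtop hbx
  have hint2 : IntegrableOn φ (Set.Ioi (x - δ)) volume := by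
    rw [← Set.Ioc_union_Ioi_eq_Ioi (by linarith : x - δ ≤ x)]
    exact hφC.integrableOn_Ioc.union hint1
  have hsplit := u_split hφnonneg (by linarith : x - δ ≤ x) hφC hint2
  have hkey := key_step hδ hJc hJcs hJnonneg hJ0 hJzero hJint hap hlam hφC
    hφnonneg heq hφtop hbx
  linarith

end Ulemmas

section Ulemmas2
variable {J a φ : ℝ → ℝ} {δ ap lam b : ℝ}

lemma u_iter (hδ : 0 < δ) (hJc : Continuous J)
    (hJcs : HasCompactSupport J)
    (hJnonneg : ∀ x, 0 ≤ J x) (hJ0 : ∀ w, J w ≤ J 0)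
    (hJzero : ∀ w, w ∉ Set.Icc (-δ) δ → J w = 0) (hJint : (∫ y, J y) = 1)
    (hap : IsLUB (Set.range a) ap) (hlam : ap < lam)
    (hφC : Continuous φ) (hφnonneg : ∀ t, 0 ≤ φ t)
    (heq : ∀ x, b ≤ x → convol J φ x = (1 + lam - a x) * φ x)
    (hφtop : Tendsto φ atTop (nhds 0)) :
    ∀ k : ℕ, ∀ x, b ≤ x →
      (∫ t in Set.Ioi (x + k * δ), φ t) ≤ (1/(1+lam-ap))^k * ∫ t in Set.Ioi x, φ t := by
  have hq : (0:ℝ) < 1 + lam - ap := by linarith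
  intro k
  induction k with
  | zero => intro x hbx; simp
  | succ k ih =>
    intro x hbx
    have hstep := u_step hδ hJc hJcs hJnonneg hJ0 hJzero hJint hap hlam hφC hφnonneg heq
      hφtop (by linarith : b ≤ x + δ)
    rw [add_sub_cancel_right] at hstep
    have h1 : (∫ t in Set.Ioi (x + δ), φ t) ≤ (1/(1+lam-ap)) * ∫ t in Set.Ioi x, φ t := by
      rw [div_mul_eq_mul_div, one_mul, le_div_iff₀ hq]
      linarith [hstep]
    have h2 := ih (x + δ) (by linarith)
    have heqpt : x + (k+1 : ℕ) * δ = (x + δ) + k * δ := by push_cast; ring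
    rw [heqpt]
    calc (∫ t in Set.Ioi (x + δ + k * δ), φ t)
        ≤ (1/(1+lam-ap))^k * ∫ t in Set.Ioi (x + δ), φ t := h2
      _ ≤ (1/(1+lam-ap))^k * ((1/(1+lam-ap)) * ∫ t in Set.Ioi x, φ t) := by
          apply mul_le_mul_of_nonneg_left h1 (by positivity)
      _ = (1/(1+lam-ap))^(k+1) * ∫ t in Set.Ioi x, φ t := by ring

end Ulemmas2

section ConvAssoc
variable {J φ : ℝ → ℝ} {δ : ℝ}

lemma convJJ (hδ : 0 < δ) (hJc : Continuous J)
    (hJzero : ∀ w, w ∉ Set.Icc (-δ) δ → J w = 0)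
    (hφC : Continuous φ) (x : ℝ) :
    (∫ z, convol J J z * φ (x - z)) = ∫ w, J w * convol J φ (x - w) := by
  set g : ℝ → ℝ → ℝ := fun w z => J w * (J (z - w) * φ (x - z)) with hg
  have hf : Continuous (Function.uncurry g) := by
    apply Continuous.mul (hJc.comp continuous_fst)
    exact (hJc.comp (continuous_snd.sub continuous_fst)).mul
      (hφC.comp (continuous_const.sub continuous_snd))
  have hcs : HasCompactSupport (Function.uncurry g) := by
    apply HasCompactSupport.intro (K := Set.Icc (-δ) δ ×ˢ Set.Icc (-(2*δ)) (2*δ))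
      (isCompact_Icc.prod isCompact_Icc)
    intro p hp
    simp only [Set.mem_prod, not_and_or] at hp
    rcases hp with h | h
    · show J p.1 * _ = 0
      rw [hJzero p.1 h, zero_mul]
    · show J p.1 * (J (p.2 - p.1) * _) = 0
      by_cases h1 : p.1 ∈ Set.Icc (-δ) δ
      · have : p.2 - p.1 ∉ Set.Icc (-δ) δ := by
          simp only [Set.mem_Icc, not_and_or, not_le] at h ⊢
          rcases h with h2 | h2
          · left; have := h1.1; linarith
          · right; have := h1.2; linarith
        rw [hJzero _ this, zero_mul, mul_zero]
      · rw [hJzero p.1 h1, zero_mul]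
  have hint2 : Integrable (Function.uncurry g) (volume.prod volume) := by
    rw [← Measure.volume_eq_prod]
    exact hf.integrable_of_hasCompactSupport hcs
  calc (∫ z, convol J J z * φ (x - z))
      = ∫ z, ∫ w, g w z := by
        congr 1; funext z
        show _ = ∫ w, J w * (J (z - w) * φ (x - z))
        have : (fun w => J w * (J (z - w) * φ (x - z)))
            = fun w => (J w * J (z - w)) * φ (x - z) := by funext w; ring
        rw [this, integral_mul_const]
        rfl
    _ = ∫ w, ∫ z, g w z := (MeasureTheory.integral_integral_swap hint2).symm
    _ = ∫ w, J w * convol J φ (x - w) := by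
        congr 1; funext w
        show (∫ z, J w * (J (z - w) * φ (x - z))) = _
        have hsub := MeasureTheory.integral_sub_right_eq_self
          (fun v => J w * (J v * φ (x - w - v))) (μ := volume) w
        have heq2 : (fun z => J w * (J (z - w) * φ (x - z)))
            = fun z => (fun v => J w * (J v * φ (x - w - v))) (z - w) := by
          funext z
          simp only []
          congr 2
          ring
        rw [heq2, hsub]
        show _ = J w * ∫ v, J v * φ ((x - w) - v)
        rw [integral_const_mul]

end ConvAssoc

section Core2
variable {J a φ : ℝ → ℝ} {δ am lam b : ℝ}

lemma Jpsi_le (hδ : 0 < δ) (hJc : Continuous J) (hJcs : HasCompactSupport J)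
    (hJnonneg : ∀ x, 0 ≤ J x)
    (hJsupp : tsupport J = Set.Icc (-δ) δ)
    (ham : IsGLB (Set.range a) am)
    (hφC : Continuous φ) (hφnonneg : ∀ t, 0 ≤ φ t)
    (heq : ∀ x, b ≤ x → convol J φ x = (1 + lam - a x) * φ x)
    {x : ℝ} (hbx : b + δ ≤ x) :
    (∫ w, J w * convol J φ (x - w)) ≤ (1 + lam - am) * convol J φ x := by
  have hψC : Continuous (convol J φ) := convol_cont hJc hJcs hφC
  have h1 : (∫ w, J w * convol J φ (x - w)) ≤ ∫ w, J w * ((1 + lam - am) * φ (x - w)) := by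
    apply MeasureTheory.integral_mono
    · apply Continuous.integrable_of_hasCompactSupport
      · exact hJc.mul (hψC.comp (continuous_const.sub continuous_id))
      · exact hJcs.mul_right
    · apply Continuous.integrable_of_hasCompactSupport
      · exact hJc.mul ((continuous_const.mul (hφC.comp (continuous_const.sub continuous_id))))
      · exact hJcs.mul_right
    · intro w
      by_cases hw : J w = 0
      · simp [hw]
      · have hwmem : w ∈ Set.Icc (-δ) δ := by
          rw [← hJsupp]
          exact subset_tsupport J hw
        have hxb : b ≤ x - w := by
          have := hwmem.2; linarith
        show J w * convol J φ (x - w) ≤ J w * ((1 + lam - am) * φ (x - w))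
        rw [heq (x - w) hxb]
        apply mul_le_mul_of_nonneg_left _ (hJnonneg w)
        apply mul_le_mul_of_nonneg_right _ (hφnonneg _)
        have : am ≤ a (x - w) := ham.1 ⟨x - w, rfl⟩
        linarith
  calc (∫ w, J w * convol J φ (x - w)) ≤ ∫ w, J w * ((1 + lam - am) * φ (x - w)) := h1
    _ = (1 + lam - am) * convol J φ x := by
        have : (fun w => J w * ((1 + lam - am) * φ (x - w)))
            = fun w => (1 + lam - am) * (J w * φ (x - w)) := by funext w; ring
        rw [this, integral_const_mul]
        rfl

lemma lower_i (hδ : 0 < δ) (hJc : Continuous J) (hJcs : HasCompactSupport J)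
    (hJnonneg : ∀ x, 0 ≤ J x)
    (hJsupp : tsupport J = Set.Icc (-δ) δ)
    (ham : IsGLB (Set.range a) am)
    (hφC : Continuous φ) (hφnonneg : ∀ t, 0 ≤ φ t)
    (heq : ∀ x, b ≤ x → convol J φ x = (1 + lam - a x) * φ x)
    {x : ℝ} (hbx : b + δ ≤ x) :
    sInf (convol J J '' Set.Icc (-δ) δ) * (∫ t in (x-δ)..(x+δ), φ t)
      ≤ (1 + lam - am) * convol J φ x := by
  set i := sInf (convol J J '' Set.Icc (-δ) δ) with hi
  have hJJC : Continuous (convol J J) := convol_cont hJc hJcs hJc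
  have hJJnonneg : ∀ z, 0 ≤ convol J J z := fun z =>
    integral_nonneg (fun w => mul_nonneg (hJnonneg w) (hJnonneg _))
  have hbdd : BddBelow (convol J J '' Set.Icc (-δ) δ) :=
    ⟨0, fun v ⟨z, _, hzv⟩ => hzv ▸ hJJnonneg z⟩
  have hJzero : ∀ w, w ∉ Set.Icc (-δ) δ → J w = 0 := fun w hw => J_zero_outside hJsupp hw
  -- change of variables
  have h0 : (∫ t in (x-δ)..(x+δ), φ t) = ∫ z in (-δ)..δ, φ (x - z) := by
    rw [intervalIntegral.integral_comp_sub_left (fun t => φ t) x]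
    norm_num
  have h1 : i * (∫ t in (x-δ)..(x+δ), φ t) ≤ ∫ z in (-δ)..δ, convol J J z * φ (x - z) := by
    rw [h0, ← intervalIntegral.integral_const_mul]
    apply intervalIntegral.integral_mono_on (by linarith)
      (((hφC.comp (continuous_const.sub continuous_id)).intervalIntegrable (-δ) δ).const_mul i)
      ((hJJC.mul (hφC.comp (continuous_const.sub continuous_id))).intervalIntegrable _ _)
    intro z hz
    apply mul_le_mul_of_nonneg_right _ (hφnonneg _)
    exact csInf_le hbdd ⟨z, hz, rfl⟩
  have hcs2 : HasCompactSupport (convol J J) := by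
    rw [convol_eq_convolution]
    exact hJcs.convolution _ hJcs
  have h2 : (∫ z in (-δ)..δ, convol J J z * φ (x - z)) ≤ ∫ z, convol J J z * φ (x - z) := by
    rw [intervalIntegral.integral_of_le (by linarith)]
    apply MeasureTheory.setIntegral_le_integral
    · apply Continuous.integrable_of_hasCompactSupport
      · exact hJJC.mul (hφC.comp (continuous_const.sub continuous_id))
      · exact hcs2.mul_right
    · filter_upwards with z
      exact mul_nonneg (hJJnonneg z) (hφnonneg _)
  have h3 := convJJ hδ hJc hJzero hφC x
  have h4 := Jpsi_le hδ hJc hJcs hJnonneg hJsupp ham hφC hφnonneg heq hbx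
  calc i * (∫ t in (x-δ)..(x+δ), φ t) ≤ ∫ z in (-δ)..δ, convol J J z * φ (x - z) := h1
    _ ≤ ∫ z, convol J J z * φ (x - z) := h2
    _ = ∫ w, J w * convol J φ (x - w) := h3
    _ ≤ (1 + lam - am) * convol J φ x := h4

end Core2

section Final
variable {J φ : ℝ → ℝ} {δ : ℝ}

lemma psi_upper (hδ : 0 < δ) (hJc : Continuous J)
    (hJnonneg : ∀ x, 0 ≤ J x) (hJ0 : ∀ w, J w ≤ J 0)
    (hJzero : ∀ w, w ∉ Set.Icc (-δ) δ → J w = 0)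
    (hφC : Continuous φ) (hφnonneg : ∀ t, 0 ≤ φ t) (y : ℝ) :
    convol J φ y ≤ J 0 * ∫ t in (y-δ)..(y+δ), φ t := by
  have h0 : (∫ t in (y-δ)..(y+δ), φ t) = ∫ z in (-δ)..δ, φ (y - z) := by
    rw [intervalIntegral.integral_comp_sub_left (fun t => φ t) y]
    norm_num
  have h1 : convol J φ y = ∫ w in Set.Icc (-δ) δ, J w * φ (y - w) := by
    rw [convol]
    exact (setIntegral_eq_integral_of_forall_compl_eq_zero
      (fun w hw => by rw [hJzero w hw, zero_mul])).symm
  rw [h1, h0, ← intervalIntegral.integral_const_mul,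
    intervalIntegral.integral_of_le (by linarith : -δ ≤ δ),
    ← integral_Icc_eq_integral_Ioc]
  apply setIntegral_mono_on
  · exact (hJc.mul (hφC.comp (continuous_const.sub continuous_id))).integrableOn_Icc
  · exact ((continuous_const.mul (hφC.comp (continuous_const.sub continuous_id)))).integrableOn_Icc
  · exact measurableSet_Icc
  · intro w _
    exact mul_le_mul_of_nonneg_right (hJ0 w) (hφnonneg _)

lemma i_pos (hδ : 0 < δ) (hJc : Continuous J) (hJcs : HasCompactSupport J)
    (hJnonneg : ∀ x, 0 ≤ J x) (hJeven : ∀ x, J (-x) = J x)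
    (hJanti : AntitoneOn J (Set.Ici 0)) (hJsupp : tsupport J = Set.Icc (-δ) δ) :
    0 < sInf (convol J J '' Set.Icc (-δ) δ) := by
  have hJJC : Continuous (convol J J) := convol_cont hJc hJcs hJc
  obtain ⟨z0, hz0mem, hmin⟩ := isCompact_Icc.exists_sInf_image_eq
    (⟨0, by constructor <;> linarith⟩ : (Set.Icc (-δ) δ).Nonempty) hJJC.continuousOn
  rw [hmin]
  have hpos : 0 < J (z0/2) * J (z0 - z0/2) := by
    have habs : |z0/2| < δ := by
      rw [abs_div]
      rw [abs_of_pos (by norm_num : (0:ℝ) < 2)]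
      have h1 : |z0| ≤ δ := abs_le.2 ⟨hz0mem.1, hz0mem.2⟩
      linarith [abs_nonneg z0]
    have h2 : z0 - z0/2 = z0/2 := by ring
    rw [h2]
    exact mul_pos (J_pos hδ hJnonneg hJeven hJanti hJsupp habs)
      (J_pos hδ hJnonneg hJeven hJanti hJsupp habs)
  have hcont : Continuous (fun w => J w * J (z0 - w)) :=
    hJc.mul (hJc.comp (continuous_const.sub continuous_id))
  have hint : Integrable (fun w => J w * J (z0 - w)) := by
    apply hcont.integrable_of_hasCompactSupport hJcs.mul_right
  rw [show convol J J z0 = ∫ w, J w * J (z0 - w) from rfl]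
  rw [integral_pos_iff_support_of_nonneg (fun w => mul_nonneg (hJnonneg w) (hJnonneg _)) hint]
  have hopen : IsOpen {w | 0 < J w * J (z0 - w)} := isOpen_lt continuous_const hcont
  have hsub : {w | 0 < J w * J (z0 - w)} ⊆ Function.support fun w => J w * J (z0 - w) :=
    fun w hw => ne_of_gt hw
  calc (0:ℝ≥0∞) < volume {w | 0 < J w * J (z0 - w)} :=
        hopen.measure_pos volume ⟨z0/2, hpos⟩
    _ ≤ volume (Function.support fun w => J w * J (z0 - w)) := measure_mono hsub

lemma i_le_J0 (hδ : 0 < δ) (hJc : Continuous J) (hJcs : HasCompactSupport J)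
    (hJnonneg : ∀ x, 0 ≤ J x) (hJeven : ∀ x, J (-x) = J x) (hJ0 : ∀ w, J w ≤ J 0)
    (hJint : (∫ w, J w) = 1) :
    sInf (convol J J '' Set.Icc (-δ) δ) ≤ J 0 := by
  have hJJnonneg : ∀ z, 0 ≤ convol J J z := fun z =>
    integral_nonneg (fun w => mul_nonneg (hJnonneg w) (hJnonneg _))
  have hbdd : BddBelow (convol J J '' Set.Icc (-δ) δ) :=
    ⟨0, fun v ⟨z, _, hzv⟩ => hzv ▸ hJJnonneg z⟩
  have h1 : sInf (convol J J '' Set.Icc (-δ) δ) ≤ convol J J 0 :=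
    csInf_le hbdd ⟨0, by constructor <;> linarith, rfl⟩
  apply h1.trans
  have h2 : convol J J 0 = ∫ w, J w * J w := by
    rw [show convol J J 0 = ∫ w, J w * J (0 - w) from rfl]
    congr 1; funext w; rw [zero_sub, hJeven]
  rw [h2]
  calc (∫ w, J w * J w) ≤ ∫ w, J 0 * J w := by
        apply MeasureTheory.integral_mono
        · exact (hJc.mul hJc).integrable_of_hasCompactSupport hJcs.mul_right
        · exact ((hJc.integrable_of_hasCompactSupport hJcs).const_mul _)
        · exact fun w => mul_le_mul_of_nonneg_right (hJ0 w) (hJnonneg w)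
    _ = J 0 := by rw [integral_const_mul, hJint, mul_one]

end Final


set_option maxHeartbeats 1000000 in
/-- exponential decay estimate
`(J*φ)(y) ≤ (C/m) e^{−m(y−x)} (J*φ)(x)` for `y ≥ x ≥ b + δ`, with
`C = C_J(1+λ−a_−)` and `m = δ⁻¹ e^{−Cδ} (λ−a_+)/(1+λ−a_+)`. -/
theorem stmt4 (J a φ : ℝ → ℝ) (δ am ap lam b : ℝ) (hδ : 0 < δ)
    (hJC1 : ContDiff ℝ 1 J) (hJnonneg : ∀ x, 0 ≤ J x)
    (hJeven : ∀ x, J (-x) = J x) (hJanti : AntitoneOn J (Set.Ici 0))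
    (hJsupp : tsupport J = Set.Icc (-δ) δ) (hJint : (∫ y, J y) = 1)
    (haC : Continuous a)
    (ham : IsGLB (Set.range a) am) (hap : IsLUB (Set.range a) ap)
    (hlam : ap < lam)
    (hφC : Continuous φ) (hφpos : ∀ x, 0 < φ x)
    (heq : ∀ x, b ≤ x → convol J φ x = (1 + lam - a x) * φ x)
    (hφtop : Tendsto φ atTop (nhds 0)) :
    ∀ x y, b + δ ≤ x → x ≤ y →
      convol J φ y ≤
        (CJconst J δ * (1 + lam - am)) /
            (δ⁻¹ * Real.exp (-(CJconst J δ * (1 + lam - am) * δ)) *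
              ((lam - ap) / (1 + lam - ap))) *
          Real.exp (-(δ⁻¹ * Real.exp (-(CJconst J δ * (1 + lam - am) * δ)) *
              ((lam - ap) / (1 + lam - ap)) * (y - x))) *
          convol J φ x := by
  intro x y hx hxy
  have hJc : Continuous J := hJC1.continuous
  have hJcs : HasCompactSupport J := J_cs hJsupp
  have hJ0 : ∀ w, J w ≤ J 0 := J_le_J0 hJeven hJanti
  have hJzero : ∀ w, w ∉ Set.Icc (-δ) δ → J w = 0 := fun w hw => J_zero_outside hJsupp hw
  have hφnonneg : ∀ t, 0 ≤ φ t := fun t => (hφpos t).le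
  have hipos : 0 < sInf (convol J J '' Set.Icc (-δ) δ) :=
    i_pos hδ hJc hJcs hJnonneg hJeven hJanti hJsupp
  have hiJ0 : sInf (convol J J '' Set.Icc (-δ) δ) ≤ J 0 :=
    i_le_J0 hδ hJc hJcs hJnonneg hJeven hJ0 hJint
  have hJ0D : J 0 ≤ (⨆ y : ℝ, |deriv J y|) * δ := J0_le hδ hJC1 hJnonneg hJsupp
  have hJ0pos : 0 < J 0 :=
    J_pos hδ hJnonneg hJeven hJanti hJsupp (by rwa [abs_zero])
  set D := ⨆ y : ℝ, |deriv J y| with hD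
  set i := sInf (convol J J '' Set.Icc (-δ) δ) with hi
  have hamap : am ≤ ap := le_trans (ham.1 ⟨b, rfl⟩) (hap.1 ⟨b, rfl⟩)
  have h1ap : 0 < 1 + lam - ap := by linarith
  set r : ℝ := (lam - ap)/(1 + lam - ap) with hr
  have hrpos : 0 < r := div_pos (by linarith) h1ap
  have hr1 : r < 1 := by rw [hr, div_lt_one h1ap]; linarith
  have hCJeq : CJconst J δ = D / i := rfl
  have hCJpos : 0 < CJconst J δ := by
    rw [hCJeq]
    apply div_pos _ hipos
    calc (0:ℝ) < J 0 / δ := div_pos hJ0pos hδ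
      _ ≤ D := by rw [div_le_iff₀ hδ]; exact hJ0D
  have hCJδ : 1 ≤ CJconst J δ * δ := by
    rw [hCJeq, div_mul_eq_mul_div, le_div_iff₀ hipos, one_mul]
    exact hiJ0.trans hJ0D
  have hA1 : (1:ℝ) ≤ 1 + lam - am := by linarith
  set C := CJconst J δ * (1 + lam - am) with hC
  have hCpos : 0 < C := by positivity
  have hC1 : 1 ≤ C * δ := by
    have : C * δ = (CJconst J δ * δ) * (1 + lam - am) := by ring
    rw [this]
    calc (1:ℝ) = 1*1 := by norm_num
      _ ≤ (CJconst J δ * δ) * (1 + lam - am) :=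
          mul_le_mul hCJδ hA1 (by norm_num) (by positivity)
  set m := δ⁻¹ * Real.exp (-(C * δ)) * r with hm
  have hmpos : 0 < m := by
    apply mul_pos (mul_pos (inv_pos.2 hδ) (Real.exp_pos _)) hrpos
  set k := Nat.floor ((y - x)/δ) with hk
  have hs0 : 0 ≤ y - x := by linarith
  have hk1 : (k:ℝ) * δ ≤ y - x := by
    have h := Nat.floor_le (div_nonneg hs0 hδ.le)
    calc (k:ℝ)*δ ≤ ((y-x)/δ)*δ := mul_le_mul_of_nonneg_right h hδ.le
      _ = y - x := by field_simp
  have hk2 : y - x ≤ ((k:ℝ)+1)*δ := by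
    have h := (Nat.lt_floor_add_one ((y-x)/δ)).le
    calc y - x = ((y-x)/δ)*δ := by field_simp
      _ ≤ ((k:ℝ)+1)*δ := mul_le_mul_of_nonneg_right h hδ.le
  have hbx : b ≤ x - δ := by linarith
  have hby : b ≤ y - δ := by linarith
  have hbx0 : b ≤ x := by linarith
  -- upper bound for ψ y
  have S1a := psi_upper hδ hJc hJnonneg hJ0 hJzero hφC hφnonneg y
  have hintyd : IntegrableOn φ (Set.Ioi (y-δ)) volume :=
    integrableOn_tail hδ hJc hJcs hJnonneg hJ0 hJzero hJint hap hlam hφC hφnonneg heq hφtop hby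
  have hsplity := u_split hφnonneg (by linarith : y - δ ≤ y + δ) hφC hintyd
  have huypos : 0 ≤ ∫ t in Set.Ioi (y+δ), φ t :=
    setIntegral_nonneg measurableSet_Ioi (fun t _ => hφnonneg t)
  have S1 : convol J φ y ≤ J 0 * ∫ t in Set.Ioi (y - δ), φ t := by
    apply S1a.trans
    apply mul_le_mul_of_nonneg_left _ (hJnonneg 0)
    linarith
  -- monotonicity + iteration
  have hkδ0 : (0:ℝ) ≤ (k:ℝ) * δ := by positivity
  have hbxk : b ≤ x - δ + k*δ := by linarith
  have hintxk : IntegrableOn φ (Set.Ioi (x - δ + k*δ)) volume :=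
    integrableOn_tail hδ hJc hJcs hJnonneg hJ0 hJzero hJint hap hlam hφC hφnonneg heq hφtop hbxk
  have S2 : (∫ t in Set.Ioi (y-δ), φ t) ≤ ∫ t in Set.Ioi (x-δ+k*δ), φ t :=
    u_anti hφnonneg (by linarith) hintxk
  have S3 := u_iter hδ hJc hJcs hJnonneg hJ0 hJzero hJint hap hlam hφC hφnonneg heq hφtop
    k (x-δ) hbx
  -- lower bound for ψ x
  have hintxd : IntegrableOn φ (Set.Ioi (x-δ)) volume :=
    integrableOn_tail hδ hJc hJcs hJnonneg hJ0 hJzero hJint hap hlam hφC hφnonneg heq hφtop hbx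
  have hintx : IntegrableOn φ (Set.Ioi x) volume :=
    integrableOn_tail hδ hJc hJcs hJnonneg hJ0 hJzero hJint hap hlam hφC hφnonneg heq hφtop hbx0
  have hsplitx := u_split hφnonneg (by linarith : x - δ ≤ x + δ) hφC hintxd
  have hstep := u_step hδ hJc hJcs hJnonneg hJ0 hJzero hJint hap hlam hφC hφnonneg heq hφtop hbx0
  have hanti2 : (∫ t in Set.Ioi (x+δ), φ t) ≤ ∫ t in Set.Ioi x, φ t :=
    u_anti hφnonneg (by linarith) hintx
  have S4 := lower_i hδ hJc hJcs hJnonneg hJsupp ham hφC hφnonneg heq hx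
  rw [← hi] at S4
  set ud := ∫ t in Set.Ioi (x-δ), φ t with hud
  set ux := ∫ t in Set.Ioi x, φ t with hux
  set uxp := ∫ t in Set.Ioi (x+δ), φ t with huxp
  have hudnn : 0 ≤ ud := setIntegral_nonneg measurableSet_Ioi (fun t _ => hφnonneg t)
  -- S5 : i * (r * ud) ≤ (1+lam-am) * ψ x
  have h5a : uxp * (1 + lam - ap) ≤ ud := by
    calc uxp * (1 + lam - ap) ≤ ux * (1 + lam - ap) :=
          mul_le_mul_of_nonneg_right hanti2 h1ap.le
      _ = (1 + lam - ap) * ux := mul_comm _ _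
      _ ≤ ud := hstep
  have h5c : uxp ≤ ud / (1 + lam - ap) := by
    rw [le_div_iff₀ h1ap]; exact h5a
  have h5d : r * ud = ud - ud/(1 + lam - ap) := by
    rw [hr]; field_simp; ring
  have h5b : r * ud ≤ ∫ t in (x-δ)..(x+δ), φ t := by
    rw [h5d]; linarith
  have S5 : i * (r * ud) ≤ (1 + lam - am) * convol J φ x :=
    le_trans (mul_le_mul_of_nonneg_left h5b hipos.le) S4
  have hψxnn : 0 ≤ convol J φ x :=
    integral_nonneg (fun w => mul_nonneg (hJnonneg w) (hφnonneg _))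
  -- coefficient inequality
  have hqr : 1/(1+lam-ap) = 1 - r := by rw [hr]; field_simp; ring
  have hqk : (1/(1+lam-ap))^k ≤ Real.exp (-(r * k)) := by
    rw [hqr]
    calc (1 - r)^k ≤ (Real.exp (-r))^k := by
          apply pow_le_pow_left₀ (by linarith) _ k
          linarith [Real.add_one_le_exp (-r)]
      _ = Real.exp (-(r*k)) := by
          rw [← Real.exp_nat_mul]; congr 1; ring
  have hms : m * (y - x) ≤ r * k + C * δ := by
    have hE1 : Real.exp (-(C * δ)) ≤ 1 := Real.exp_le_one_iff.2 (by linarith)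
    have h1 : m * (y - x) ≤ m * (((k:ℝ)+1)*δ) := mul_le_mul_of_nonneg_left hk2 hmpos.le
    have h2 : m * (((k:ℝ)+1)*δ) = Real.exp (-(C * δ)) * (r * ((k:ℝ)+1)) := by
      rw [hm]; field_simp
    have h3 : Real.exp (-(C * δ)) * (r * ((k:ℝ)+1)) ≤ r * ((k:ℝ)+1) := by
      apply mul_le_of_le_one_left _ hE1
      positivity
    have h4 : r * ((k:ℝ)+1) = r * (k:ℝ) + r := by ring
    linarith
  have hexp : Real.exp (-(r * k)) ≤ Real.exp (C * δ) * Real.exp (-(m * (y-x))) := by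
    rw [← Real.exp_add]
    apply Real.exp_le_exp.2
    linarith
  have hKm : C / m = C * δ * Real.exp (C * δ) / r := by
    rw [hm, Real.exp_neg]
    field_simp
  have coef : J 0 * ((1 + lam - am) * (1/(1+lam-ap))^k)
      ≤ (C / m * Real.exp (-(m * (y-x)))) * (i * r) := by
    have hrhs : (C / m * Real.exp (-(m * (y-x)))) * (i * r)
        = (i * C) * δ * (Real.exp (C*δ) * Real.exp (-(m * (y-x)))) := by
      rw [hKm]; field_simp
    have hiC : i * C = D * (1 + lam - am) := by
      rw [hC, hCJeq]; field_simp
    rw [hrhs, hiC]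
    calc J 0 * ((1 + lam - am) * (1/(1+lam-ap))^k)
        ≤ (D * δ) * ((1 + lam - am) * (Real.exp (C*δ) * Real.exp (-(m * (y-x))))) := by
          apply mul_le_mul hJ0D _ (mul_nonneg (by linarith) (by positivity)) (by linarith)
          apply mul_le_mul_of_nonneg_left (hqk.trans hexp) (by linarith)
      _ = D * (1 + lam - am) * δ * (Real.exp (C*δ) * Real.exp (-(m * (y-x)))) := by ring
  -- final combination
  have hchain : convol J φ y ≤ J 0 * ((1/(1+lam-ap))^k * ud) := by
    apply S1.trans
    apply mul_le_mul_of_nonneg_left _ (hJnonneg 0)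
    exact S2.trans S3
  have hir : 0 < i * r := mul_pos hipos hrpos
  apply le_of_mul_le_mul_left _ hir
  calc (i * r) * convol J φ y
      ≤ (i * r) * (J 0 * ((1/(1+lam-ap))^k * ud)) :=
        mul_le_mul_of_nonneg_left hchain hir.le
    _ = (J 0 * (1/(1+lam-ap))^k) * (i * (r * ud)) := by ring
    _ ≤ (J 0 * (1/(1+lam-ap))^k) * ((1 + lam - am) * convol J φ x) := by
        apply mul_le_mul_of_nonneg_left S5
        positivity
    _ = (J 0 * ((1 + lam - am) * (1/(1+lam-ap))^k)) * convol J φ x := by ring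
    _ ≤ ((C / m * Real.exp (-(m * (y-x)))) * (i * r)) * convol J φ x :=
        mul_le_mul_of_nonneg_right coef hψxnn
    _ = (i * r) * (C / m * Real.exp (-(m * (y-x))) * convol J φ x) := by ring
end

section
/- Let J satisfy (J), let a : ℝ → ℝ be bounded and continuous with a_− := inf a, a_+ := sup a, let λ > a_+, and let φ > 0 be continuous on ℝ and satisfy (J*φ)(x) = (1 + λ − a(x))φ(x) for all x ≥ b. Then with C := C_J(1+λ−a_−), where C_J := ‖J′‖_∞ / inf_{x∈[−δ,δ]}(J*J)(x), the Harnack-type inequality φ(y) ≤ (1 + λ − a_−) e^{C|x−y|} φ(x) holds for all x, y ∈ [b+δ, ∞). -/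
open MeasureTheory Filter Real Set

lemma aux_integral_pos (f : ℝ → ℝ) (hf : Continuous f) (h0 : ∀ x, 0 ≤ f x)
    (hi : Integrable f) (t0 : ℝ) (ht : 0 < f t0) : 0 < ∫ x, f x := by
  rw [integral_pos_iff_support_of_nonneg h0 hi]
  have hopen : IsOpen {x | 0 < f x} := isOpen_lt continuous_const hf
  have hsub : {x | 0 < f x} ⊆ Function.support f := fun x hx => ne_of_gt hx
  exact lt_of_lt_of_le (hopen.measure_pos volume ⟨t0, ht⟩) (measure_mono hsub)

lemma aux_Jpos (J : ℝ → ℝ) (δ : ℝ) (hδ : 0 < δ) (hJnonneg : ∀ x, 0 ≤ J x)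
    (hJeven : ∀ x, J (-x) = J x) (hJanti : AntitoneOn J (Set.Ici 0))
    (hJsupp : tsupport J = Set.Icc (-δ) δ) : ∀ t, |t| < δ → 0 < J t := by
  intro t ht
  rcases (hJnonneg t).lt_or_eq with h | h
  · exact h
  exfalso
  have hs0 : 0 ≤ |t| := abs_nonneg t
  have hs : J |t| = 0 := by
    rcases abs_cases t with ⟨h1, _⟩ | ⟨h1, _⟩
    · rw [h1]; exact h.symm
    · rw [h1, hJeven]; exact h.symm
  have hsupp : Function.support J ⊆ Icc (-|t|) |t| := by
    intro w hw
    by_contra hw'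
    simp only [mem_Icc, not_and_or, not_le] at hw'
    apply hw
    rcases hw' with h' | h'
    · have h2 : J (-w) ≤ J |t| := hJanti hs0 (by simp; linarith) (by linarith)
      rw [hJeven] at h2
      rw [hs] at h2
      exact le_antisymm h2 (hJnonneg w)
    · have h2 : J w ≤ J |t| := hJanti hs0 (by simp; linarith) h'.le
      rw [hs] at h2
      exact le_antisymm h2 (hJnonneg w)
  have hcl : tsupport J ⊆ Icc (-|t|) |t| := closure_minimal hsupp isClosed_Icc
  have hδmem : δ ∈ tsupport J := by rw [hJsupp]; exact ⟨by linarith, le_rfl⟩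
  have := (hcl hδmem).2
  linarith

/-- the Harnack-type inequality
`φ(y) ≤ (1 + λ − a_−) e^{C|x−y|} φ(x)` for all `x, y ∈ [b+δ, ∞)`,
with `C = C_J (1 + λ − a_−)`. -/
theorem stmt6 (J a φ : ℝ → ℝ) (δ am ap lam b : ℝ) (hδ : 0 < δ)
    (hJC1 : ContDiff ℝ 1 J) (hJnonneg : ∀ x, 0 ≤ J x)
    (hJeven : ∀ x, J (-x) = J x) (hJanti : AntitoneOn J (Set.Ici 0))
    (hJsupp : tsupport J = Set.Icc (-δ) δ) (hJint : (∫ y, J y) = 1)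
    (haC : Continuous a)
    (ham : IsGLB (Set.range a) am) (hap : IsLUB (Set.range a) ap)
    (hlam : ap < lam)
    (hφC : Continuous φ) (hφpos : ∀ x, 0 < φ x)
    (heq : ∀ x, b ≤ x → convol J φ x = (1 + lam - a x) * φ x) :
    ∀ x y, b + δ ≤ x → b + δ ≤ y →
      φ y ≤ (1 + lam - am) *
        Real.exp (CJconst J δ * (1 + lam - am) * |x - y|) * φ x := by
  have hJcont : Continuous J := hJC1.continuous
  have hJc : HasCompactSupport J := by
    rw [HasCompactSupport, hJsupp]; exact isCompact_Icc
  have hJpos := aux_Jpos J δ hδ hJnonneg hJeven hJanti hJsupp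
  have hJzero : ∀ w : ℝ, w ∉ Icc (-δ) δ → J w = 0 := by
    intro w hw
    exact image_eq_zero_of_notMem_tsupport (by rw [hJsupp]; exact hw)
  -- basic order facts
  have haap : ∀ t, a t ≤ ap := fun t => hap.1 (mem_range_self t)
  have haam : ∀ t, am ≤ a t := fun t => ham.1 (mem_range_self t)
  have hamap : am ≤ ap := le_trans (haam 0) (haap 0)
  have h1am : (0:ℝ) < 1 + lam - am := by linarith
  have h1a : ∀ t, (1:ℝ) ≤ 1 + lam - a t := fun t => by have := haap t; linarith
  -- u and its basic properties
  set u : ℝ → ℝ := convol J φ with hu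
  have hint1 : ∀ (g : ℝ → ℝ), Continuous g → ∀ t : ℝ,
      Integrable (fun y => J y * g (t - y)) := by
    intro g hg t
    apply Continuous.integrable_of_hasCompactSupport
    · exact hJcont.mul (hg.comp (continuous_const.sub continuous_id))
    · exact (hJc.mul_right (f' := fun y => g (t - y)))
  have hucont : Continuous u :=
    hJc.continuous_convolution_left (ContinuousLinearMap.mul ℝ ℝ) hJcont hφC.locallyIntegrable
  have hupos : ∀ t, 0 < u t := by
    intro t
    apply aux_integral_pos _ (hJcont.mul (hφC.comp (continuous_const.sub continuous_id)))
      (fun y => mul_nonneg (hJnonneg y) (hφpos _).le) (hint1 φ hφC t) 0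
    have : (0:ℝ) < J 0 * φ (t - 0) :=
      mul_pos (hJpos 0 (by simpa using hδ)) (by rw [sub_zero]; exact hφpos t)
    simpa using this
  have huderiv : ∀ t : ℝ, HasDerivAt u (convol (deriv J) φ t) t := fun t =>
    hJc.hasDerivAt_convolution_left (ContinuousLinearMap.mul ℝ ℝ) hJC1
      hφC.locallyIntegrable t
  -- M and m
  set M : ℝ := ⨆ y : ℝ, |deriv J y| with hMdef
  have hdJcont : Continuous (deriv J) := hJC1.continuous_deriv le_rfl
  have hdJcs : HasCompactSupport (deriv J) := hJc.deriv
  have hbdd : BddAbove (Set.range fun y => |deriv J y|) := by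
    have : (fun y => |deriv J y|) = fun y => ‖deriv J y‖ := by
      funext y; simp [Real.norm_eq_abs]
    rw [this]
    exact hdJcont.norm.bddAbove_range_of_hasCompactSupport hdJcs.norm
  have hM : ∀ t, |deriv J t| ≤ M := fun t => le_ciSup hbdd t
  have hM0 : 0 ≤ M := le_trans (abs_nonneg _) (hM 0)
  have hdJzero : ∀ w : ℝ, w ∉ Icc (-δ) δ → deriv J w = 0 := by
    intro w hw
    by_contra h
    apply hw
    rw [← hJsupp]
    exact support_deriv_subset (Function.mem_support.mpr h)
  set m : ℝ := sInf (convol J J '' Set.Icc (-δ) δ) with hmdef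
  have hJJcont : Continuous (convol J J) :=
    hJc.continuous_convolution_left (ContinuousLinearMap.mul ℝ ℝ) hJcont hJcont.locallyIntegrable
  have hJJnonneg : ∀ w, 0 ≤ convol J J w := fun w =>
    integral_nonneg (fun z => mul_nonneg (hJnonneg z) (hJnonneg _))
  have hJJpos : ∀ w ∈ Icc (-δ) δ, 0 < convol J J w := by
    intro w hw
    apply aux_integral_pos _ (hJcont.mul (hJcont.comp (continuous_const.sub continuous_id)))
      (fun z => mul_nonneg (hJnonneg z) (hJnonneg _)) (hint1 J hJcont w) (w / 2)
    have habs : |w / 2| < δ := by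
      rw [abs_div]
      rw [mem_Icc] at hw
      rw [abs_of_pos (by norm_num : (0:ℝ) < 2)]
      rw [div_lt_iff₀ (by norm_num : (0:ℝ) < 2)]
      rcases abs_cases w with ⟨h1, _⟩ | ⟨h1, _⟩ <;> rw [h1] <;> linarith
    have h2 : (0:ℝ) < J (w / 2) * J (w - w / 2) := by
      rw [show w - w / 2 = w / 2 by ring]
      exact mul_pos (hJpos _ habs) (hJpos _ habs)
    simpa using h2
  have hScompact : IsCompact (convol J J '' Set.Icc (-δ) δ) :=
    (isCompact_Icc).image hJJcont
  have hSne : (convol J J '' Set.Icc (-δ) δ).Nonempty :=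
    ⟨convol J J 0, mem_image_of_mem _ (by constructor <;> [linarith; linarith])⟩
  have hmpos : 0 < m := by
    obtain ⟨w, hw, hweq⟩ := hScompact.sInf_mem hSne
    rw [hmdef, ← hweq]
    exact hJJpos w hw
  have hmle : ∀ w ∈ Icc (-δ) δ, m ≤ convol J J w := fun w hw =>
    csInf_le hScompact.bddBelow (mem_image_of_mem _ hw)
  have hCJ : CJconst J δ = M / m := rfl
  set C : ℝ := CJconst J δ * (1 + lam - am) with hCdef
  have hC0 : 0 ≤ C := by
    rw [hCdef, hCJ]
    exact mul_nonneg (div_nonneg hM0 hmpos.le) h1am.le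
  -- KEY derivative bound
  have key : ∀ t : ℝ, b + δ ≤ t → |convol (deriv J) φ t| ≤ C * u t := by
    intro t ht
    have hφti : Continuous (fun y : ℝ => φ (t - y)) :=
      hφC.comp (continuous_const.sub continuous_id)
    set I : ℝ := ∫ y in Icc (-δ) δ, φ (t - y) with hIdef
    -- step (a): |u'(t)| ≤ M * I
    have hprod_int : Integrable (fun y => deriv J y * φ (t - y)) := by
      apply Continuous.integrable_of_hasCompactSupport (hdJcont.mul hφti)
      exact hdJcs.mul_right (f' := fun y => φ (t - y))
    have hind_int : Integrable ((Icc (-δ) δ).indicator (fun y => M * φ (t - y))) :=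
      ((continuous_const.mul hφti).integrableOn_Icc).integrable_indicator measurableSet_Icc
    have ha : |convol (deriv J) φ t| ≤ M * I := by
      have h1 : |convol (deriv J) φ t| ≤ ∫ y, |deriv J y * φ (t - y)| := by
        simpa only [Real.norm_eq_abs, convol] using
          norm_integral_le_integral_norm (μ := volume) (fun y => deriv J y * φ (t - y))
      have h2 : ∫ y, |deriv J y * φ (t - y)| ≤
          ∫ y, (Icc (-δ) δ).indicator (fun y => M * φ (t - y)) y := by
        apply integral_mono hprod_int.abs hind_int
        intro y
        show |deriv J y * φ (t - y)| ≤ (Icc (-δ) δ).indicator (fun y => M * φ (t - y)) y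
        by_cases hy : y ∈ Icc (-δ) δ
        · rw [indicator_of_mem hy, abs_mul, abs_of_pos (hφpos _)]
          exact mul_le_mul_of_nonneg_right (hM y) (hφpos _).le
        · rw [indicator_of_notMem hy, hdJzero y hy]
          simp
      have h3 : ∫ y, (Icc (-δ) δ).indicator (fun y => M * φ (t - y)) y = M * I := by
        rw [integral_indicator measurableSet_Icc, integral_const_mul]
      linarith
    -- step (b): m * I ≤ (1 + lam - am) * u t
    have hb : m * I ≤ (1 + lam - am) * u t := by
      have b1 : m * I ≤ ∫ y in Icc (-δ) δ, convol J J y * φ (t - y) := by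
        rw [hIdef, ← integral_const_mul]
        apply setIntegral_mono_on ((continuous_const.mul hφti).integrableOn_Icc)
          ((hJJcont.mul hφti).integrableOn_Icc) measurableSet_Icc
        intro y hy
        exact mul_le_mul_of_nonneg_right (hmle y hy) (hφpos _).le
      have hJJcs : HasCompactSupport (convol J J) :=
        HasCompactSupport.convolution (ContinuousLinearMap.mul ℝ ℝ) hJc hJc
      have b2 : ∫ y in Icc (-δ) δ, convol J J y * φ (t - y) ≤
          ∫ y, convol J J y * φ (t - y) := by
        apply setIntegral_le_integral
        · exact Continuous.integrable_of_hasCompactSupport (hJJcont.mul hφti)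
            (hJJcs.mul_right (f' := fun y => φ (t - y)))
        · exact ae_of_all _ fun y => mul_nonneg (hJJnonneg y) (hφpos _).le
      have hFc : Continuous (fun p : ℝ × ℝ => J p.2 * J (p.1 - p.2) * φ (t - p.1)) :=
        ((hJcont.comp continuous_snd).mul
          (hJcont.comp (continuous_fst.sub continuous_snd))).mul
          (hφC.comp (continuous_const.sub continuous_fst))
      have hFcs : HasCompactSupport (fun p : ℝ × ℝ => J p.2 * J (p.1 - p.2) * φ (t - p.1)) := by
        apply HasCompactSupport.intro
          ((isCompact_Icc (a := -(2*δ)) (b := 2*δ)).prod (isCompact_Icc (a := -δ) (b := δ)))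
        intro p hp
        by_cases h2 : p.2 ∈ Icc (-δ) δ
        · have h1 : p.1 ∉ Icc (-(2*δ)) (2*δ) := fun h => hp (mem_prod.mpr ⟨h, h2⟩)
          have h3 : p.1 - p.2 ∉ Icc (-δ) δ := by
            simp only [mem_Icc, not_and_or, not_le] at h1 ⊢
            rw [mem_Icc] at h2
            rcases h1 with h1 | h1
            · left; linarith [h2.2]
            · right; linarith [h2.1]
          show J p.2 * J (p.1 - p.2) * φ (t - p.1) = 0
          rw [hJzero _ h3]; ring
        · show J p.2 * J (p.1 - p.2) * φ (t - p.1) = 0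
          rw [hJzero _ h2]; ring
      have hFint : Integrable (Function.uncurry
          (fun y z : ℝ => J z * J (y - z) * φ (t - y))) ((volume : Measure ℝ).prod volume) := by
        have : Function.uncurry (fun y z : ℝ => J z * J (y - z) * φ (t - y)) =
            fun p : ℝ × ℝ => J p.2 * J (p.1 - p.2) * φ (t - p.1) := rfl
        rw [this]
        exact hFc.integrable_of_hasCompactSupport hFcs
      have b3 : ∫ y, convol J J y * φ (t - y) = ∫ z, J z * u (t - z) := by
        have e1 : ∀ y : ℝ, convol J J y * φ (t - y) =
            ∫ z, J z * J (y - z) * φ (t - y) := by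
          intro y
          rw [show convol J J y = ∫ z, J z * J (y - z) from rfl]
          rw [← integral_mul_const]
        have e2 : ∀ z : ℝ, (∫ y, J z * J (y - z) * φ (t - y)) = J z * u (t - z) := by
          intro z
          have e3 : ∀ y : ℝ, J z * J (y - z) * φ (t - y) =
              J z * (J (y - z) * φ (t - y)) := fun y => by ring
          simp_rw [e3]
          rw [integral_const_mul]
          congr 1
          have := integral_sub_right_eq_self (fun w => J w * φ (t - z - w)) (μ := volume) z
          simp_rw [sub_sub_sub_cancel_right] at this
          exact this
        simp_rw [e1]
        rw [integral_integral_swap hFint]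
        simp_rw [e2]
      have b4 : ∫ z, J z * u (t - z) =
          ∫ z, J z * ((1 + lam - a (t - z)) * φ (t - z)) := by
        congr 1
        funext z
        by_cases hz : z ∈ Icc (-δ) δ
        · rw [heq (t - z) (by rw [mem_Icc] at hz; linarith)]
        · rw [hJzero z hz]; ring
      have b5 : ∫ z, J z * ((1 + lam - a (t - z)) * φ (t - z)) ≤
          ∫ z, (1 + lam - am) * (J z * φ (t - z)) := by
        apply integral_mono _ ((hint1 φ hφC t).const_mul _)
        · intro z
          have h1 : (1 + lam - a (t - z)) * φ (t - z) ≤ (1 + lam - am) * φ (t - z) :=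
            mul_le_mul_of_nonneg_right (by have := haam (t - z); linarith) (hφpos _).le
          calc J z * ((1 + lam - a (t - z)) * φ (t - z))
              ≤ J z * ((1 + lam - am) * φ (t - z)) :=
                mul_le_mul_of_nonneg_left h1 (hJnonneg z)
            _ = (1 + lam - am) * (J z * φ (t - z)) := by ring
        · apply Continuous.integrable_of_hasCompactSupport
          · exact hJcont.mul (((continuous_const.sub (haC.comp
              (continuous_const.sub continuous_id))).mul hφti))
          · exact hJc.mul_right (f' := fun z => (1 + lam - a (t - z)) * φ (t - z))
      have b6 : ∫ z, (1 + lam - am) * (J z * φ (t - z)) = (1 + lam - am) * u t := by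
        rw [integral_const_mul]
        rfl
      linarith
    -- combine
    have hI : I ≤ (1 + lam - am) * u t / m := by
      rw [le_div_iff₀ hmpos]
      linarith
    have hfin : M * I ≤ C * u t := by
      have h1 : M * I ≤ M * ((1 + lam - am) * u t / m) :=
        mul_le_mul_of_nonneg_left hI hM0
      have h2 : M * ((1 + lam - am) * u t / m) = C * u t := by
        rw [hCdef, hCJ]
        field_simp
      linarith
    linarith
  -- Gronwall
  have hgron : ∀ s t : ℝ, b + δ ≤ s → b + δ ≤ t →
      u t ≤ Real.exp (C * |s - t|) * u s := by
    intro s t hs ht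
    have hmvt : ‖Real.log (u t) - Real.log (u s)‖ ≤ C * ‖t - s‖ := by
      apply Convex.norm_image_sub_le_of_norm_hasDerivWithin_le
        (f := fun w => Real.log (u w)) (f' := fun w => convol (deriv J) φ w / u w)
        (s := Ici (b + δ))
      · intro w hw
        exact ((huderiv w).log (hupos w).ne').hasDerivWithinAt
      · intro w hw
        rw [Real.norm_eq_abs, abs_div, abs_of_pos (hupos w)]
        rw [div_le_iff₀ (hupos w)]
        exact key w hw
      · exact convex_Ici _
      · exact hs
      · exact ht
    rw [Real.norm_eq_abs, Real.norm_eq_abs] at hmvt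
    have h1 : Real.log (u t) ≤ Real.log (u s) + C * |t - s| := by
      have := (abs_le.mp hmvt).2; linarith
    calc u t = Real.exp (Real.log (u t)) := (Real.exp_log (hupos t)).symm
      _ ≤ Real.exp (Real.log (u s) + C * |t - s|) := Real.exp_le_exp.mpr h1
      _ = Real.exp (C * |s - t|) * u s := by
          rw [Real.exp_add, Real.exp_log (hupos s), abs_sub_comm t s]; ring
  -- final assembly
  intro x y hx hy
  have hbx : b ≤ x := by linarith
  have hby : b ≤ y := by linarith
  have hy1 : φ y ≤ u y := by
    rw [heq y hby]
    exact le_mul_of_one_le_left (hφpos y).le (h1a y)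
  have hx1 : u x ≤ (1 + lam - am) * φ x := by
    rw [heq x hbx]
    exact mul_le_mul_of_nonneg_right (by have := haam x; linarith) (hφpos x).le
  calc φ y ≤ u y := hy1
    _ ≤ Real.exp (C * |x - y|) * u x := hgron x y hx hy
    _ ≤ Real.exp (C * |x - y|) * ((1 + lam - am) * φ x) := by
        exact mul_le_mul_of_nonneg_left hx1 (Real.exp_nonneg _)
    _ = (1 + lam - am) * Real.exp (C * |x - y|) * φ x := by ring
end

section
/- Let J satisfy (J), let a : ℝ → ℝ be bounded and continuous, and let λ > sup a. Suppose η : ℝ → ℝ is continuous, compactly supported, η ≤ 0 and η ≢ 0, and suppose φ : ℝ → ℝ is continuous with lim_{|x|→∞} φ(x) = 0 and satisfies (J*φ)(x) − φ(x) + (a(x) − λ)φ(x) = η(x) for all x ∈ ℝ. Then φ(x) > 0 for every x ∈ ℝ. -/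
open MeasureTheory Filter Real Set

/-- if `(H + a − λ)φ = η` with `η ≤ 0`, `η ≢ 0` continuous and
compactly supported, `λ > sup a`, and `φ` continuous with `φ → 0` at `±∞`,
then `φ > 0` everywhere. -/
theorem stmt7 (J a η φ : ℝ → ℝ) (δ ap lam : ℝ) (hδ : 0 < δ)
    (hJC1 : ContDiff ℝ 1 J) (hJnonneg : ∀ x, 0 ≤ J x)
    (hJeven : ∀ x, J (-x) = J x) (hJanti : AntitoneOn J (Set.Ici 0))
    (hJsupp : tsupport J = Set.Icc (-δ) δ) (hJint : (∫ y, J y) = 1)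
    (haC : Continuous a) (hap : IsLUB (Set.range a) ap) (hlam : ap < lam)
    (hηC : Continuous η) (hηsupp : HasCompactSupport η)
    (hηnonpos : ∀ x, η x ≤ 0) (hηne : ∃ x, η x ≠ 0)
    (hφC : Continuous φ)
    (hφtop : Tendsto φ atTop (nhds 0)) (hφbot : Tendsto φ atBot (nhds 0))
    (heq : ∀ x, convol J φ x - φ x + (a x - lam) * φ x = η x) :
    ∀ x, 0 < φ x := by
  have hJC : Continuous J := hJC1.continuous
  have hJcs : HasCompactSupport J := by
    rw [HasCompactSupport, hJsupp]; exact isCompact_Icc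
  have hJintble : Integrable J := hJC.integrable_of_hasCompactSupport hJcs
  have hcont : ∀ x : ℝ, Continuous fun y => J y * φ (x - y) := fun x =>
    hJC.mul (hφC.comp (continuous_const.sub continuous_id))
  have hint : ∀ x : ℝ, Integrable (fun y => J y * φ (x - y)) := fun x =>
    (hcont x).integrable_of_hasCompactSupport hJcs.mul_right
  -- J is positive on (-δ, δ)
  have hJpos : ∀ y : ℝ, |y| < δ → 0 < J y := by
    have key : ∀ z : ℝ, 0 ≤ z → z < δ → 0 < J z := by
      intro z hz0 hzδ
      rcases (hJnonneg z).lt_or_eq with h | h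
      · exact h
      · exfalso
        have h0 : J z = 0 := h.symm
        have hsub : Function.support J ⊆ Set.Icc (-z) z := by
          intro w hw
          simp only [Function.mem_support] at hw
          constructor
          · by_contra hc; push_neg at hc
            exact hw (by
              rw [← hJeven w]
              exact le_antisymm
                ((hJanti hz0 (by simp only [Set.mem_Ici]; linarith) (by linarith)).trans_eq h0)
                (hJnonneg _))
          · by_contra hc; push_neg at hc
            exact hw (le_antisymm
              ((hJanti hz0 (hz0.trans hc.le) hc.le).trans_eq h0) (hJnonneg _))
        have hts : tsupport J ⊆ Set.Icc (-z) z := closure_minimal hsub isClosed_Icc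
        have hδmem : δ ∈ tsupport J := by
          rw [hJsupp]; exact ⟨by linarith, le_rfl⟩
        exact absurd (hts hδmem).2 (not_le.2 hzδ)
    intro y hy
    have hJy : J |y| = J y := by
      rcases abs_cases y with ⟨h, _⟩ | ⟨h, _⟩
      · rw [h]
      · rw [h, hJeven]
    rw [← hJy]
    exact key |y| (abs_nonneg y) hy
  -- Step 1: φ ≥ 0
  have hφnonneg : ∀ x, 0 ≤ φ x := by
    by_contra h
    push_neg at h
    obtain ⟨x₀, hx₀⟩ := h
    have hco : Tendsto φ (cocompact ℝ) (nhds 0) := by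
      rw [cocompact_eq_atBot_atTop]
      exact tendsto_sup.mpr ⟨hφbot, hφtop⟩
    have hev : ∀ᶠ x in cocompact ℝ, φ x₀ ≤ φ x :=
      (hco.eventually (eventually_gt_nhds hx₀)).mono fun x h => h.le
    obtain ⟨x₁, hx₁⟩ := hφC.exists_forall_le' x₀ hev
    have hm : φ x₁ < 0 := lt_of_le_of_lt (hx₁ x₀) hx₀
    have hlow : φ x₁ ≤ convol J φ x₁ := by
      have hmono : (∫ y, J y * φ x₁) ≤ ∫ y, J y * φ (x₁ - y) :=
        integral_mono (hJintble.mul_const _) (hint x₁)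
          (fun y => mul_le_mul_of_nonneg_left (hx₁ _) (hJnonneg y))
      calc φ x₁ = ∫ y, J y * φ x₁ := by rw [integral_mul_const, hJint, one_mul]
        _ ≤ _ := hmono
    have ha : a x₁ ≤ ap := hap.1 ⟨x₁, rfl⟩
    have heq1 := heq x₁
    have hη1 := hηnonpos x₁
    nlinarith [mul_pos (neg_pos.2 hm) (sub_pos.2 (lt_of_le_of_lt ha hlam))]
  -- Step 2: φ never vanishes
  have hφne : ∀ x, φ x ≠ 0 := by
    by_contra h
    push_neg at h
    obtain ⟨x₀, hx₀⟩ := h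
    have hZclosed : IsClosed {x : ℝ | φ x = 0} := isClosed_eq hφC continuous_const
    have hZopen : IsOpen {x : ℝ | φ x = 0} := by
      rw [Metric.isOpen_iff]
      intro x hx
      refine ⟨δ, hδ, fun z hz => ?_⟩
      have hC0 : convol J φ x = 0 := by
        have h1 : convol J φ x ≤ 0 := by
          have := heq x
          simp only [Set.mem_setOf_eq] at hx
          rw [hx] at this
          have h3 := hηnonpos x
          linarith
        have h2 : 0 ≤ convol J φ x :=
          integral_nonneg fun y => mul_nonneg (hJnonneg y) (hφnonneg _)
        linarith
      have hae := (integral_eq_zero_iff_of_nonneg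
        (fun y => mul_nonneg (hJnonneg y) (hφnonneg _)) (hint x)).mp hC0
      have hzero : ∀ y, J y * φ (x - y) = 0 := by
        have := ((hcont x).ae_eq_iff_eq volume continuous_zero).mp hae
        exact fun y => congrFun this y
      have hy : |x - z| < δ := by
        rw [Metric.mem_ball, Real.dist_eq] at hz
        rw [abs_sub_comm]; exact hz
      have := hzero (x - z)
      have hJp : 0 < J (x - z) := hJpos _ hy
      have : φ (x - (x - z)) = 0 := by
        rcases mul_eq_zero.mp this with h' | h'
        · exact absurd h' (ne_of_gt hJp)
        · exact h'
      simpa using this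
    have hZuniv : {x : ℝ | φ x = 0} = Set.univ :=
      IsClopen.eq_univ ⟨hZclosed, hZopen⟩ ⟨x₀, hx₀⟩
    have hφ0 : ∀ x, φ x = 0 := fun x => by
      have : x ∈ {x : ℝ | φ x = 0} := hZuniv ▸ Set.mem_univ x
      exact this
    obtain ⟨x, hx⟩ := hηne
    apply hx
    have := heq x
    rw [hφ0 x] at this
    have hc0 : convol J φ x = 0 := by
      simp only [convol]
      have : ∀ y : ℝ, J y * φ (x - y) = 0 := fun y => by rw [hφ0]; ring
      simp [this]
    rw [hc0] at this
    linarith [this]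
  intro x
  exact (hφnonneg x).lt_of_ne (Ne.symm (hφne x))
end

section
/- Let g satisfy (G), let α ∈ (0,1), c_α := α + α^{−1}, and let U : ℝ → (0,1) be a C² solution of U″ + c_α U′ + g(U) = 0 with U′ < 0, lim_{s→−∞} U(s) = 1, lim_{s→∞} U(s) = 0, and lim_{s→∞} e^{αs} U(s) = 1. Define h(v) := U(−α^{−1} log v) for v > 0 and h(0) := 0, and β := 2 + α^{−2}. Then the function ρ(x) := −h″(e^{−x}) is positive on ℝ and satisfies |ρ′(x)| ≤ β ρ(x) for all x ∈ ℝ; in particular, ρ(y) ≤ e^{β|x−y|} ρ(x) for all x, y ∈ ℝ. -/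
open MeasureTheory Filter Real Set

noncomputable def hOf (U : ℝ → ℝ) (α : ℝ) : ℝ → ℝ :=
  fun v => if 0 < v then U (-(α⁻¹ * Real.log v)) else 0

noncomputable def rhoOf (U : ℝ → ℝ) (α : ℝ) : ℝ → ℝ :=
  fun x => -(deriv (deriv (hOf U α)) (Real.exp (-x)))

private lemma hasDerivAt_exp_mul (a s : ℝ) :
    HasDerivAt (fun t => Real.exp (a * t)) (a * Real.exp (a * s)) s := by
  have h := (((hasDerivAt_id s).const_mul a).exp :)
  simpa [mul_comm] using h

set_option maxHeartbeats 1000000 in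
/-- `ρ > 0` on `ℝ` and `|ρ′| ≤ β ρ` with `β = 2 + α⁻²`; in particular
`ρ(y) ≤ e^{β|x−y|} ρ(x)` for all `x, y`. -/
theorem stmt8 (g U : ℝ → ℝ) (α : ℝ) (hα : α ∈ Set.Ioo (0:ℝ) 1)
    (hgC1 : ContDiff ℝ 1 g) (hgnonneg : ∀ u ∈ Set.Icc (0:ℝ) 1, 0 ≤ g u)
    (hg0 : g 0 = 0) (hg1 : g 1 = 0) (hg'0 : deriv g 0 = 1)
    (hg'anti : StrictAntiOn (deriv g) (Set.Icc 0 1)) (hg'1 : -1 ≤ deriv g 1)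
    (hgint : MeasureTheory.IntegrableOn (fun u => (u - g u) / u ^ 2) (Set.Ioc 0 1))
    (hUC2 : ContDiff ℝ 2 U) (hUrange : ∀ s, U s ∈ Set.Ioo (0:ℝ) 1)
    (hUode : ∀ s, deriv (deriv U) s + (α + α⁻¹) * deriv U s + g (U s) = 0)
    (hU' : ∀ s, deriv U s < 0)
    (hUbot : Tendsto U atBot (nhds 1)) (hUtop : Tendsto U atTop (nhds 0))
    (hUexp : Tendsto (fun s => Real.exp (α * s) * U s) atTop (nhds 1)) :
    (∀ x : ℝ, 0 < rhoOf U α x) ∧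
    (∀ x : ℝ, |deriv (rhoOf U α) x| ≤ (2 + α⁻¹ ^ 2) * rhoOf U α x) ∧
    (∀ x y : ℝ, rhoOf U α y ≤ Real.exp ((2 + α⁻¹ ^ 2) * |x - y|) * rhoOf U α x) := by
  obtain ⟨hα0, hα1⟩ := hα
  have hαne : α ≠ 0 := ne_of_gt hα0
  have hαinv : 0 < α⁻¹ := inv_pos.mpr hα0
  -- differentiability basics
  have hUdiff : Differentiable ℝ U := hUC2.differentiable (by norm_num)
  have hU'C1 : ContDiff ℝ 1 (deriv U) := by
    have h2 : ContDiff ℝ (1 + 1 : ℕ) U := by exact_mod_cast hUC2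
    exact (contDiff_succ_iff_deriv.mp (by exact_mod_cast h2)).2.2
  have hU'diff : Differentiable ℝ (deriv U) := hU'C1.differentiable (by norm_num)
  have hU'cont : Continuous (deriv U) := hU'diff.continuous
  have hUcont : Continuous U := hUdiff.continuous
  have hgdiff : Differentiable ℝ g := hgC1.differentiable (by norm_num)
  have hg'cont : Continuous (deriv g) := hgC1.continuous_deriv le_rfl
  have hU''eq : ∀ s, deriv (deriv U) s = -((α + α⁻¹) * deriv U s + g (U s)) := by
    intro s; linarith [hUode s]
  have hU''cont : Continuous (deriv (deriv U)) := by
    rw [funext hU''eq]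
    exact ((continuous_const.mul hU'cont).add (hgdiff.continuous.comp hUcont)).neg
  -- range facts
  have hU0 : ∀ s, 0 < U s := fun s => (hUrange s).1
  have hU1 : ∀ s, U s < 1 := fun s => (hUrange s).2
  have hUmem : ∀ s, U s ∈ Set.Icc (0:ℝ) 1 := fun s => ⟨(hU0 s).le, (hU1 s).le⟩
  have h0mem : (0:ℝ) ∈ Set.Icc (0:ℝ) 1 := ⟨le_rfl, by norm_num⟩
  have h1mem : (1:ℝ) ∈ Set.Icc (0:ℝ) 1 := ⟨by norm_num, le_rfl⟩
  have hg'lt1 : ∀ s, deriv g (U s) < 1 := by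
    intro s
    have := hg'anti h0mem (hUmem s) (hU0 s)
    rwa [hg'0] at this
  have hg'gem1 : ∀ s, -1 ≤ deriv g (U s) := by
    intro s
    have := hg'anti (hUmem s) h1mem (hU1 s)
    linarith
  have hgU0 : ∀ s, 0 ≤ g (U s) := fun s => hgnonneg _ (hUmem s)
  -- bound M for g on [0,1]
  obtain ⟨z, hzmem, hzmax⟩ := isCompact_Icc.exists_isMaxOn ⟨0, h0mem⟩
    (hgdiff.continuous.continuousOn (s := Set.Icc (0:ℝ) 1))
  set M : ℝ := g z with hMdef
  have hM0 : 0 ≤ M := by simpa [hg0] using hzmax h0mem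
  have hgUM : ∀ s, g (U s) ≤ M := fun s => hzmax (hUmem s)
  -- the function D and R
  set D : ℝ → ℝ := fun s => g (U s) + α⁻¹ * deriv U s with hDdef
  set R : ℝ → ℝ := fun s => (-(deriv U s)) * (1 - deriv g (U s)) with hRdef
  have hRpos : ∀ s, 0 < R s := by
    intro s
    exact mul_pos (neg_pos.mpr (hU' s)) (by linarith [hg'lt1 s])
  have hDhasDeriv : ∀ s, HasDerivAt D (R s - α⁻¹ * D s) s := by
    intro s
    have h1 : HasDerivAt (fun t => g (U t)) (deriv g (U s) * deriv U s) s :=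
      ((hgdiff (U s)).hasDerivAt).comp s (hUdiff s).hasDerivAt
    have h2 : HasDerivAt (fun t => α⁻¹ * deriv U t) (α⁻¹ * deriv (deriv U) s) s :=
      ((hU'diff s).hasDerivAt).const_mul α⁻¹
    have h3 : HasDerivAt (fun t => g (U t) + α⁻¹ * deriv U t) _ s := h1.add h2
    convert h3 using 1
    rw [hU''eq s]
    simp only [hRdef, hDdef]
    field_simp
    ring
  -- W ≥ 0
  set m : ℝ := α + 2 * α⁻¹ with hmdef
  have hmpos : 0 < m := by positivity
  set W : ℝ → ℝ := fun s => m * (-(deriv U s)) - g (U s) with hWdef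
  have hWhasDeriv : ∀ s, HasDerivAt W
      ((-(deriv U s)) * (1 + 2 * α⁻¹^2 + deriv g (U s)) - m * W s) s := by
    intro s
    have h1 : HasDerivAt (fun t => m * (-(deriv U t))) (m * (-(deriv (deriv U) s))) s :=
      ((hU'diff s).hasDerivAt.neg).const_mul m
    have h2 : HasDerivAt (fun t => g (U t)) (deriv g (U s) * deriv U s) s :=
      ((hgdiff (U s)).hasDerivAt).comp s (hUdiff s).hasDerivAt
    have h3 : HasDerivAt (fun t => m * (-(deriv U t)) - g (U t)) _ s := h1.sub h2
    convert h3 using 1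
    rw [hU''eq s]
    simp only [hWdef, hmdef]
    field_simp
    ring
  have hWlow : ∀ s, -M ≤ W s := by
    intro s
    have : 0 ≤ m * (-(deriv U s)) := le_of_lt (mul_pos hmpos (neg_pos.mpr (hU' s)))
    have := hgUM s
    simp only [hWdef]; linarith
  have hΦmono : StrictMono (fun s => Real.exp (m * s) * W s) := by
    apply strictMono_of_deriv_pos
    intro s
    have hE := hasDerivAt_exp_mul m s
    have hΦ : HasDerivAt (fun t => Real.exp (m * t) * W t) _ s := hE.mul (hWhasDeriv s)
    rw [hΦ.deriv]
    have h5 : m * Real.exp (m * s) * W s +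
        Real.exp (m * s) * ((-(deriv U s)) * (1 + 2 * α⁻¹^2 + deriv g (U s)) - m * W s) =
        Real.exp (m * s) * ((-(deriv U s)) * (1 + 2 * α⁻¹^2 + deriv g (U s))) := by ring
    rw [h5]
    have h6 : 0 < 1 + 2 * α⁻¹^2 + deriv g (U s) := by nlinarith [hg'gem1 s, hαinv]
    exact mul_pos (Real.exp_pos _) (mul_pos (neg_pos.mpr (hU' s)) h6)
  have hWpos : ∀ s, 0 ≤ W s := by
    by_contra hcon
    push_neg at hcon
    obtain ⟨s₁, hs₁⟩ := hcon
    set δ : ℝ := -W s₁ with hδdef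
    have hδ : 0 < δ := by simp only [hδdef]; linarith
    have hargpos : (0:ℝ) < M / δ + 1 := by positivity
    have hlog0 : 0 ≤ Real.log (M / δ + 1) :=
      Real.log_nonneg (by linarith [div_nonneg hM0 hδ.le])
    set s₀ : ℝ := s₁ - (Real.log (M / δ + 1) + 1) / m with hs₀def
    have hs₀lt : s₀ < s₁ := by
      have : 0 < (Real.log (M / δ + 1) + 1) / m := by positivity
      simp only [hs₀def]; linarith
    have hexp : Real.exp (m * (s₁ - s₀)) = (M / δ + 1) * Real.exp 1 := by
      have harg : m * (s₁ - s₀) = Real.log (M / δ + 1) + 1 := by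
        simp only [hs₀def]
        field_simp
        ring
      rw [harg, Real.exp_add, Real.exp_log hargpos]
    have h6 := mul_lt_mul_of_pos_left (hΦmono hs₀lt) (Real.exp_pos (-(m * s₀)))
    have h7 : Real.exp (-(m * s₀)) * (Real.exp (m * s₀) * W s₀) = W s₀ := by
      rw [← mul_assoc, ← Real.exp_add]
      simp
    have h8 : Real.exp (-(m * s₀)) * (Real.exp (m * s₁) * W s₁) =
        Real.exp (m * (s₁ - s₀)) * W s₁ := by
      rw [← mul_assoc, ← Real.exp_add]
      ring_nf
    rw [h7, h8] at h6
    have hWs₁ : W s₁ = -δ := by simp [hδdef]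
    rw [hWs₁, hexp] at h6
    have he1 : (1:ℝ) ≤ Real.exp 1 := by
      have := Real.add_one_le_exp (1:ℝ); linarith
    have h9 : (M / δ + 1) * Real.exp 1 * (-δ) = -((M + δ) * Real.exp 1) := by
      field_simp
    rw [h9] at h6
    have := hWlow s₀
    nlinarith [mul_le_mul_of_nonneg_left he1 (show (0:ℝ) ≤ M + δ by linarith)]
  -- A antitone
  have hAderiv : ∀ s, HasDerivAt (fun t => Real.exp (-(α⁻¹ * t)) * (-(deriv U t)))
      (Real.exp (-(α⁻¹ * s)) * (-(W s))) s := by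
    intro s
    have hE : HasDerivAt (fun t => Real.exp (-(α⁻¹ * t))) (-(α⁻¹) * Real.exp (-(α⁻¹ * s))) s := by
      have h1 := hasDerivAt_exp_mul (-α⁻¹) s
      simpa [neg_mul] using h1
    have h2 : HasDerivAt (fun t => -(deriv U t)) (-(deriv (deriv U) s)) s :=
      (hU'diff s).hasDerivAt.neg
    have h3 : HasDerivAt (fun t => Real.exp (-(α⁻¹ * t)) * (-(deriv U t))) _ s := hE.mul h2
    convert h3 using 1
    rw [hU''eq s]
    simp only [hWdef, hmdef]
    ring
  have hAanti : Antitone (fun s => Real.exp (-(α⁻¹ * s)) * (-(deriv U s))) := by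
    apply antitone_of_deriv_nonpos
    · exact fun s => (hAderiv s).differentiableAt
    · intro s
      rw [(hAderiv s).deriv]
      exact mul_nonpos_of_nonneg_of_nonpos (Real.exp_pos _).le (neg_nonpos.mpr (hWpos s))
  -- U strictly decreasing
  have hUanti : StrictAnti U := strictAnti_of_deriv_neg hU'
  -- e^{-t/α} R t monotone
  have hRmono : ∀ t s : ℝ, t ≤ s →
      Real.exp (-(α⁻¹ * s)) * R s ≤ Real.exp (-(α⁻¹ * t)) * R t := by
    intro t s hts
    have hfact : ∀ u : ℝ, Real.exp (-(α⁻¹ * u)) * R u =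
        (Real.exp (-(α⁻¹ * u)) * (-(deriv U u))) * (1 - deriv g (U u)) := by
      intro u; simp only [hRdef]; ring
    rw [hfact t, hfact s]
    have hA := hAanti hts
    have hBs : 0 ≤ 1 - deriv g (U s) := by linarith [hg'lt1 s]
    have hB : 1 - deriv g (U s) ≤ 1 - deriv g (U t) := by
      rcases eq_or_lt_of_le hts with h | h
      · rw [h]
      · have := hg'anti (hUmem s) (hUmem t) (hUanti h)
        linarith
    have hAt : 0 ≤ Real.exp (-(α⁻¹ * t)) * (-(deriv U t)) :=
      mul_nonneg (Real.exp_pos _).le (by linarith [hU' t])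
    exact mul_le_mul hA hB hBs hAt
  -- G strictly monotone
  have hGhasDeriv : ∀ s, HasDerivAt (fun t => Real.exp (α⁻¹ * t) * D t)
      (Real.exp (α⁻¹ * s) * R s) s := by
    intro s
    have hE := hasDerivAt_exp_mul α⁻¹ s
    have h3 : HasDerivAt (fun t => Real.exp (α⁻¹ * t) * D t) _ s := hE.mul (hDhasDeriv s)
    convert h3 using 1
    ring
  have hGmono : StrictMono (fun t => Real.exp (α⁻¹ * t) * D t) := by
    apply strictMono_of_deriv_pos
    intro s
    rw [(hGhasDeriv s).deriv]
    exact mul_pos (Real.exp_pos _) (hRpos s)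
  -- positivity of D
  have hDnonneg : ∀ s, 0 ≤ D s := by
    by_contra hcon
    push_neg at hcon
    obtain ⟨s₁, hs₁⟩ := hcon
    set δ : ℝ := -D s₁ with hδdef
    have hδ : 0 < δ := by simp only [hδdef]; linarith
    have hargpos : (1:ℝ) < 1 / (α^2 * δ) + 2 := by
      have : (0:ℝ) < 1 / (α^2 * δ) := by positivity
      linarith
    set s₀ : ℝ := s₁ - α * Real.log (1 / (α^2 * δ) + 2) with hs₀def
    have hlogpos : 0 < Real.log (1 / (α^2 * δ) + 2) := Real.log_pos hargpos
    have hs₀lt : s₀ < s₁ := by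
      have : 0 < α * Real.log (1 / (α^2 * δ) + 2) := by positivity
      simp only [hs₀def]; linarith
    -- pointwise bound on deriv U on [s₀, s₁]
    have hptwise : ∀ t ∈ Set.Icc s₀ s₁, deriv U t ≤
        -(α * δ) * Real.exp (α⁻¹ * (s₁ - t)) := by
      intro t ht
      have hGle : Real.exp (α⁻¹ * t) * D t ≤ Real.exp (α⁻¹ * s₁) * D s₁ :=
        hGmono.monotone ht.2
      have hDt : D t ≤ Real.exp (α⁻¹ * (s₁ - t)) * D s₁ := by
        have h6 := mul_le_mul_of_nonneg_left hGle (Real.exp_pos (-(α⁻¹ * t))).le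
        have h7 : Real.exp (-(α⁻¹ * t)) * (Real.exp (α⁻¹ * t) * D t) = D t := by
          rw [← mul_assoc, ← Real.exp_add]; simp
        have h8 : Real.exp (-(α⁻¹ * t)) * (Real.exp (α⁻¹ * s₁) * D s₁) =
            Real.exp (α⁻¹ * (s₁ - t)) * D s₁ := by
          rw [← mul_assoc, ← Real.exp_add]; ring_nf
        rw [h7, h8] at h6
        exact h6
      have hU'eq : deriv U t = α * (D t - g (U t)) := by
        simp only [hDdef]
        rw [show g (U t) + α⁻¹ * deriv U t - g (U t) = α⁻¹ * deriv U t by ring,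
          ← mul_assoc, mul_inv_cancel₀ hαne, one_mul]
      rw [hU'eq]
      have h9 : D t - g (U t) ≤ D t := by linarith [hgU0 t]
      have h10 : α * (D t - g (U t)) ≤ α * D t := by nlinarith [hgU0 t]
      have h11 : α * D t ≤ α * (Real.exp (α⁻¹ * (s₁ - t)) * D s₁) :=
        mul_le_mul_of_nonneg_left hDt hα0.le
      have h12 : α * (Real.exp (α⁻¹ * (s₁ - t)) * D s₁) =
          -(α * δ) * Real.exp (α⁻¹ * (s₁ - t)) := by
        rw [show D s₁ = -δ by simp [hδdef]]; ring
      linarith [h12 ▸ h11]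
    -- the exponential integral
    have hanti : ∀ t ∈ Set.uIcc s₀ s₁, HasDerivAt
        (fun u => α * δ * α * Real.exp (α⁻¹ * (s₁ - u)))
        (-(α * δ) * Real.exp (α⁻¹ * (s₁ - t))) t := by
      intro t _
      have h1 : HasDerivAt (fun u : ℝ => α⁻¹ * (s₁ - u)) (-α⁻¹) t := by
        simpa using ((hasDerivAt_id t).const_sub s₁).const_mul α⁻¹
      have h2 := (Real.hasDerivAt_exp (α⁻¹ * (s₁ - t))).comp t h1
      have h3 : HasDerivAt (fun u => α * δ * α * Real.exp (α⁻¹ * (s₁ - u))) _ t := h2.const_mul (α * δ * α)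
      convert h3 using 1
      field_simp
    have hint1 : ∫ t in s₀..s₁, deriv U t = U s₁ - U s₀ :=
      intervalIntegral.integral_deriv_eq_sub (fun t _ => hUdiff t)
        (hU'cont.intervalIntegrable _ _)
    have hint2 : ∫ t in s₀..s₁, -(α * δ) * Real.exp (α⁻¹ * (s₁ - t)) =
        α * δ * α * Real.exp (α⁻¹ * (s₁ - s₁)) - α * δ * α * Real.exp (α⁻¹ * (s₁ - s₀)) :=
      intervalIntegral.integral_eq_sub_of_hasDerivAt hanti
        (((continuous_const.mul ((continuous_const.mul
          (continuous_const.sub continuous_id)).rexp))).intervalIntegrable _ _)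
    have hmono : ∫ t in s₀..s₁, deriv U t ≤ ∫ t in s₀..s₁, -(α * δ) * Real.exp (α⁻¹ * (s₁ - t)) :=
      intervalIntegral.integral_mono_on (μ := volume) hs₀lt.le
        (hU'cont.intervalIntegrable _ _)
        (((continuous_const.mul ((continuous_const.mul
          (continuous_const.sub continuous_id)).rexp))).intervalIntegrable _ _)
        hptwise
    rw [hint1, hint2] at hmono
    have hexpval : Real.exp (α⁻¹ * (s₁ - s₀)) = 1 / (α^2 * δ) + 2 := by
      have harg : α⁻¹ * (s₁ - s₀) = Real.log (1 / (α^2 * δ) + 2) := by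
        simp only [hs₀def]
        field_simp
        ring
      rw [harg, Real.exp_log (by positivity)]
    rw [hexpval] at hmono
    simp only [sub_self, mul_zero, Real.exp_zero] at hmono
    have hcancel : α * δ * α * (1 / (α^2 * δ) + 2) = 1 + 2 * α^2 * δ := by
      field_simp
    have hU1s₀ := hU1 s₀
    have hU0s₁ := hU0 s₁
    have hpos2 : 0 < α ^ 2 * δ := by positivity
    simp only [mul_one] at hmono
    rw [hcancel] at hmono
    nlinarith
  have hDpos : ∀ s, 0 < D s := by
    intro s
    have h1 := hGmono (show s - 1 < s by linarith)
    have h2 : 0 ≤ Real.exp (α⁻¹ * (s - 1)) * D (s - 1) :=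
      mul_nonneg (Real.exp_pos _).le (hDnonneg _)
    have h3 : 0 < Real.exp (α⁻¹ * s) * D s := lt_of_le_of_lt h2 h1
    by_contra hc
    push_neg at hc
    nlinarith [Real.exp_pos (α⁻¹ * s), mul_nonpos_of_nonneg_of_nonpos (Real.exp_pos (α⁻¹ * s)).le hc]
  -- key bound
  have hkey : ∀ s, α / 2 * R s ≤ D s := by
    intro s
    have hstep : ∀ σ : ℝ, σ ≤ s →
        α / 2 * (Real.exp (-(α⁻¹ * s)) * R s) * (Real.exp (2 * α⁻¹ * s) - Real.exp (2 * α⁻¹ * σ))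
          ≤ Real.exp (α⁻¹ * s) * D s := by
      intro σ hσ
      have hGpos : 0 < Real.exp (α⁻¹ * σ) * D σ := mul_pos (Real.exp_pos _) (hDpos σ)
      have hFTC : ∫ t in σ..s, Real.exp (α⁻¹ * t) * R t =
          Real.exp (α⁻¹ * s) * D s - Real.exp (α⁻¹ * σ) * D σ :=
        intervalIntegral.integral_eq_sub_of_hasDerivAt (fun t _ => hGhasDeriv t)
          (((continuous_const.mul continuous_id).rexp.mul
            ((hU'cont.neg).mul (continuous_const.sub (hg'cont.comp hUcont)))).intervalIntegrable _ _)
      have hanti2 : ∀ t ∈ Set.uIcc σ s, HasDerivAt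
          (fun u => α / 2 * Real.exp (2 * α⁻¹ * u)) (Real.exp (2 * α⁻¹ * t)) t := by
        intro t _
        have h1 : HasDerivAt (fun u : ℝ => 2 * α⁻¹ * u) (2 * α⁻¹) t := by
          simpa using (hasDerivAt_id t).const_mul (2 * α⁻¹)
        have h2 : HasDerivAt (fun u => α / 2 * Real.exp (2 * α⁻¹ * u)) _ t :=
          ((Real.hasDerivAt_exp (2 * α⁻¹ * t)).comp t h1).const_mul (α / 2)
        convert h2 using 1
        field_simp
      have hint3 : ∫ t in σ..s, Real.exp (2 * α⁻¹ * t) =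
          α / 2 * Real.exp (2 * α⁻¹ * s) - α / 2 * Real.exp (2 * α⁻¹ * σ) :=
        intervalIntegral.integral_eq_sub_of_hasDerivAt hanti2
          (((continuous_const.mul continuous_id).rexp).intervalIntegrable _ _)
      have hptwise2 : ∀ t ∈ Set.Icc σ s,
          Real.exp (2 * α⁻¹ * t) * (Real.exp (-(α⁻¹ * s)) * R s) ≤ Real.exp (α⁻¹ * t) * R t := by
        intro t ht
        have h4 := hRmono t s ht.2
        have h5 := mul_le_mul_of_nonneg_left h4 (Real.exp_pos (2 * α⁻¹ * t)).le
        have h6 : Real.exp (2 * α⁻¹ * t) * (Real.exp (-(α⁻¹ * t)) * R t) =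
            Real.exp (α⁻¹ * t) * R t := by
          rw [← mul_assoc, ← Real.exp_add]; ring_nf
        rw [h6] at h5
        exact h5
      have hmono2 : ∫ t in σ..s, Real.exp (2 * α⁻¹ * t) * (Real.exp (-(α⁻¹ * s)) * R s) ≤
          ∫ t in σ..s, Real.exp (α⁻¹ * t) * R t :=
        intervalIntegral.integral_mono_on (μ := volume) hσ
        ((((continuous_const.mul continuous_id).rexp).mul continuous_const).intervalIntegrable _ _)
        (((continuous_const.mul continuous_id).rexp.mul
          ((hU'cont.neg).mul (continuous_const.sub (hg'cont.comp hUcont)))).intervalIntegrable _ _)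
        hptwise2
      have hint4 : ∫ t in σ..s, Real.exp (2 * α⁻¹ * t) * (Real.exp (-(α⁻¹ * s)) * R s) =
          (α / 2 * Real.exp (2 * α⁻¹ * s) - α / 2 * Real.exp (2 * α⁻¹ * σ)) *
            (Real.exp (-(α⁻¹ * s)) * R s) := by
        rw [intervalIntegral.integral_mul_const, hint3]
      rw [hint4, hFTC] at hmono2
      nlinarith [hGpos]
    have htend : Tendsto (fun σ : ℝ =>
        α / 2 * (Real.exp (-(α⁻¹ * s)) * R s) * (Real.exp (2 * α⁻¹ * s) - Real.exp (2 * α⁻¹ * σ)))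
        atBot (nhds (α / 2 * (Real.exp (-(α⁻¹ * s)) * R s) * (Real.exp (2 * α⁻¹ * s) - 0))) := by
      apply Tendsto.const_mul
      apply Tendsto.const_sub
      exact Real.tendsto_exp_atBot.comp (tendsto_id.const_mul_atBot (by positivity))
    have hlim : α / 2 * (Real.exp (-(α⁻¹ * s)) * R s) * (Real.exp (2 * α⁻¹ * s) - 0)
        ≤ Real.exp (α⁻¹ * s) * D s := by
      apply le_of_tendsto htend
      filter_upwards [eventually_le_atBot s] with σ hσ using hstep σ hσ
    have hsimp : α / 2 * (Real.exp (-(α⁻¹ * s)) * R s) * (Real.exp (2 * α⁻¹ * s) - 0) =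
        Real.exp (α⁻¹ * s) * (α / 2 * R s) := by
      rw [sub_zero]
      have h8 : Real.exp (-(α⁻¹ * s)) * Real.exp (2 * α⁻¹ * s) = Real.exp (α⁻¹ * s) := by
        rw [← Real.exp_add]; ring_nf
      linear_combination (α / 2 * R s) * h8
    rw [hsimp] at hlim
    have := mul_le_mul_of_nonneg_left hlim (Real.exp_pos (-(α⁻¹ * s))).le
    have h7 : ∀ z : ℝ, Real.exp (-(α⁻¹ * s)) * (Real.exp (α⁻¹ * s) * z) = z := by
      intro z; rw [← mul_assoc, ← Real.exp_add]; simp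
    rw [h7, h7] at this
    exact this
  have hDbound : ∀ s, |R s - α⁻¹ * D s| ≤ α⁻¹ * D s := by
    intro s
    rw [abs_le]
    constructor
    · have := (hRpos s).le; nlinarith [hDpos s]
    · have h3 := mul_le_mul_of_nonneg_left (hkey s) hαinv.le
      have h4 : α⁻¹ * (α / 2 * R s) = R s / 2 := by field_simp
      rw [h4] at h3
      linarith
  -- closed form for rho
  -- first derivative of hOf on (0,∞)
  have hstep1 : ∀ w : ℝ, 0 < w → deriv (hOf U α) w =
      deriv U (-(α⁻¹ * Real.log w)) * (-(α⁻¹ * w⁻¹)) := by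
    intro w hw
    have hev : hOf U α =ᶠ[nhds w] fun y => U (-(α⁻¹ * Real.log y)) := by
      filter_upwards [isOpen_Ioi.mem_nhds hw] with y hy
      simp only [hOf, if_pos (show (0:ℝ) < y from hy)]
    have hσ : HasDerivAt (fun y => -(α⁻¹ * Real.log y)) (-(α⁻¹ * w⁻¹)) w :=
      ((Real.hasDerivAt_log (ne_of_gt hw)).const_mul α⁻¹).neg
    have hcomp : HasDerivAt (fun y => U (-(α⁻¹ * Real.log y)))
        (deriv U (-(α⁻¹ * Real.log w)) * (-(α⁻¹ * w⁻¹))) w :=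
      (hUdiff _).hasDerivAt.comp w hσ
    rw [hev.deriv_eq, hcomp.deriv]
  have hrhoeq : rhoOf U α = fun x => α⁻¹ ^ 2 * (Real.exp (2 * x) * D (α⁻¹ * x)) := by
    funext x
    have hv : (0:ℝ) < Real.exp (-x) := Real.exp_pos _
    have hev2 : deriv (hOf U α) =ᶠ[nhds (Real.exp (-x))]
        fun y => deriv U (-(α⁻¹ * Real.log y)) * (-(α⁻¹ * y⁻¹)) := by
      filter_upwards [isOpen_Ioi.mem_nhds hv] with y hy
      exact hstep1 y hy
    have hσv : HasDerivAt (fun y => -(α⁻¹ * Real.log y)) (-(α⁻¹ * (Real.exp (-x))⁻¹))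
        (Real.exp (-x)) :=
      ((Real.hasDerivAt_log (ne_of_gt hv)).const_mul α⁻¹).neg
    have hf₁ : HasDerivAt (fun y => deriv U (-(α⁻¹ * Real.log y)))
        (deriv (deriv U) (-(α⁻¹ * Real.log (Real.exp (-x)))) * (-(α⁻¹ * (Real.exp (-x))⁻¹)))
        (Real.exp (-x)) := by
      have := (hU'diff _).hasDerivAt.comp (Real.exp (-x)) hσv
      exact this
    have hf₂ : HasDerivAt (fun y : ℝ => -(α⁻¹ * y⁻¹)) (α⁻¹ * ((Real.exp (-x)) ^ 2)⁻¹)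
        (Real.exp (-x)) := by
      have h1 : HasDerivAt (fun y : ℝ => -(α⁻¹ * y⁻¹)) _ (Real.exp (-x)) :=
        ((hasDerivAt_inv (ne_of_gt hv)).const_mul α⁻¹).neg
      convert h1 using 1
      field_simp
    have hprod := hf₁.mul hf₂
    have hval : deriv (deriv (hOf U α)) (Real.exp (-x)) =
        deriv (deriv U) (-(α⁻¹ * Real.log (Real.exp (-x)))) * (-(α⁻¹ * (Real.exp (-x))⁻¹)) *
          (-(α⁻¹ * (Real.exp (-x))⁻¹)) +
        deriv U (-(α⁻¹ * Real.log (Real.exp (-x)))) * (α⁻¹ * ((Real.exp (-x)) ^ 2)⁻¹) := by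
      rw [hev2.deriv_eq]
      exact hprod.deriv
    show -(deriv (deriv (hOf U α)) (Real.exp (-x))) = _
    rw [hval]
    have hlog : Real.log (Real.exp (-x)) = -x := Real.log_exp _
    have hinv : (Real.exp (-x))⁻¹ = Real.exp x := by rw [Real.exp_neg, inv_inv]
    have hinv2 : ((Real.exp (-x)) ^ 2)⁻¹ = Real.exp x * Real.exp x := by
      rw [Real.exp_neg, ← inv_pow, inv_inv, sq]
    have harg : -(α⁻¹ * Real.log (Real.exp (-x))) = α⁻¹ * x := by
      rw [hlog]; ring
    rw [hlog, hinv, hinv2]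
    have hexp2 : Real.exp (2 * x) = Real.exp x * Real.exp x := by
      rw [← Real.exp_add]; ring_nf
    rw [show -(α⁻¹ * -x) = α⁻¹ * x by ring] at *
    rw [hexp2, hU''eq (α⁻¹ * x)]
    simp only [hDdef]
    field_simp
    ring
  have hrhopos : ∀ x, 0 < rhoOf U α x := by
    intro x; rw [hrhoeq]
    have := hDpos (α⁻¹ * x)
    positivity
  have hrhoHasDeriv : ∀ x, HasDerivAt (rhoOf U α)
      (α⁻¹ ^ 2 * (Real.exp (2 * x) * (2 * D (α⁻¹ * x) + α⁻¹ * (R (α⁻¹ * x) - α⁻¹ * D (α⁻¹ * x))))) x := by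
    intro x
    rw [hrhoeq]
    have hE : HasDerivAt (fun x : ℝ => Real.exp (2 * x)) (2 * Real.exp (2 * x)) x :=
      hasDerivAt_exp_mul 2 x
    have hDc : HasDerivAt (fun x => D (α⁻¹ * x))
        ((R (α⁻¹ * x) - α⁻¹ * D (α⁻¹ * x)) * α⁻¹) x := by
      have h1 : HasDerivAt (fun x : ℝ => α⁻¹ * x) (α⁻¹) x := by
        simpa using (hasDerivAt_id x).const_mul α⁻¹
      have : HasDerivAt (fun x => D (α⁻¹ * x)) _ x := (hDhasDeriv (α⁻¹ * x)).comp x h1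
      simpa using this
    have : HasDerivAt (fun x => α⁻¹ ^ 2 * (Real.exp (2 * x) * D (α⁻¹ * x))) _ x :=
      (hE.mul hDc).const_mul (α⁻¹ ^ 2)
    convert this using 1
    ring
  have hrho'bound : ∀ x, |deriv (rhoOf U α) x| ≤ (2 + α⁻¹ ^ 2) * rhoOf U α x := by
    intro x
    rw [(hrhoHasDeriv x).deriv]
    have hD := hDpos (α⁻¹ * x)
    have hDb := hDbound (α⁻¹ * x)
    rw [abs_le] at hDb ⊢
    have he : (0:ℝ) < Real.exp (2 * x) := Real.exp_pos _
    rw [hrhoeq]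
    simp only
    obtain ⟨hDb1, hDb2⟩ := hDb
    have hEd : (0:ℝ) ≤ α⁻¹ ^ 2 * Real.exp (2 * x) := by positivity
    constructor
    · have hcore : -((2 + α⁻¹ ^ 2) * D (α⁻¹ * x)) ≤
          2 * D (α⁻¹ * x) + α⁻¹ * (R (α⁻¹ * x) - α⁻¹ * D (α⁻¹ * x)) := by
        nlinarith [mul_le_mul_of_nonneg_left hDb1 hαinv.le]
      calc -((2 + α⁻¹ ^ 2) * (α⁻¹ ^ 2 * (Real.exp (2 * x) * D (α⁻¹ * x))))
          = (α⁻¹ ^ 2 * Real.exp (2 * x)) * (-((2 + α⁻¹ ^ 2) * D (α⁻¹ * x))) := by ring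
        _ ≤ (α⁻¹ ^ 2 * Real.exp (2 * x)) *
            (2 * D (α⁻¹ * x) + α⁻¹ * (R (α⁻¹ * x) - α⁻¹ * D (α⁻¹ * x))) :=
          mul_le_mul_of_nonneg_left hcore hEd
        _ = α⁻¹ ^ 2 * (Real.exp (2 * x) *
            (2 * D (α⁻¹ * x) + α⁻¹ * (R (α⁻¹ * x) - α⁻¹ * D (α⁻¹ * x)))) := by ring
    · have hcore : 2 * D (α⁻¹ * x) + α⁻¹ * (R (α⁻¹ * x) - α⁻¹ * D (α⁻¹ * x)) ≤
          (2 + α⁻¹ ^ 2) * D (α⁻¹ * x) := by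
        nlinarith [mul_le_mul_of_nonneg_left hDb2 hαinv.le]
      calc α⁻¹ ^ 2 * (Real.exp (2 * x) *
            (2 * D (α⁻¹ * x) + α⁻¹ * (R (α⁻¹ * x) - α⁻¹ * D (α⁻¹ * x))))
          = (α⁻¹ ^ 2 * Real.exp (2 * x)) *
            (2 * D (α⁻¹ * x) + α⁻¹ * (R (α⁻¹ * x) - α⁻¹ * D (α⁻¹ * x))) := by ring
        _ ≤ (α⁻¹ ^ 2 * Real.exp (2 * x)) * ((2 + α⁻¹ ^ 2) * D (α⁻¹ * x)) :=
          mul_le_mul_of_nonneg_left hcore hEd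
        _ = (2 + α⁻¹ ^ 2) * (α⁻¹ ^ 2 * (Real.exp (2 * x) * D (α⁻¹ * x))) := by ring
  refine ⟨hrhopos, hrho'bound, ?_⟩
  intro x y
  set β : ℝ := 2 + α⁻¹ ^ 2 with hβdef
  have hβ0 : 0 ≤ β := by positivity
  have hLd : ∀ w : ℝ, HasDerivAt (fun t => Real.log (rhoOf U α t))
      ((rhoOf U α w)⁻¹ * deriv (rhoOf U α) w) w := by
    intro w
    have h1 := (Real.hasDerivAt_log (hrhopos w).ne').comp w (hrhoHasDeriv w)
    rw [(hrhoHasDeriv w).deriv]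
    exact h1
  have hLbound : ∀ w : ℝ, |deriv (fun t => Real.log (rhoOf U α t)) w| ≤ β := by
    intro w
    rw [(hLd w).deriv]
    rw [abs_mul, abs_inv, abs_of_pos (hrhopos w)]
    rw [inv_mul_le_iff₀ (hrhopos w)]
    calc |deriv (rhoOf U α) w| ≤ β * rhoOf U α w := hrho'bound w
      _ = rhoOf U α w * β := by ring
  have hlip : LipschitzWith β.toNNReal (fun t => Real.log (rhoOf U α t)) := by
    apply lipschitzWith_of_nnnorm_deriv_le (fun w => (hLd w).differentiableAt)
    intro w
    rw [← NNReal.coe_le_coe, coe_nnnorm, Real.norm_eq_abs, Real.coe_toNNReal _ hβ0]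
    exact hLbound w
  have hdist := hlip.dist_le_mul y x
  rw [Real.dist_eq, Real.dist_eq, Real.coe_toNNReal _ hβ0] at hdist
  have h2 : Real.log (rhoOf U α y) - Real.log (rhoOf U α x) ≤ β * |x - y| := by
    have h3 := (abs_le.mp hdist).2
    have h4 : |y - x| = |x - y| := abs_sub_comm y x
    nlinarith [abs_nonneg (x - y), h3, h4 ▸ h3]
  calc rhoOf U α y = Real.exp (Real.log (rhoOf U α y)) := (Real.exp_log (hrhopos y)).symm
    _ ≤ Real.exp (β * |x - y| + Real.log (rhoOf U α x)) := by
      apply Real.exp_le_exp.mpr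
      linarith
    _ = Real.exp (β * |x - y|) * rhoOf U α x := by
      rw [Real.exp_add, Real.exp_log (hrhopos x)]
end

section
/- Let J satisfy (J) and let f ∈ C²(ℝ × [0,1]) with f(x,0) = f(x,1) = 0. Let u : ℝ × [t₀,∞) → [0,1] be a bounded continuous solution of u_t = Hu + f(x,u), and suppose η(t₀) := sup_{0<|y−x|≤δ} |u(y,t₀) − u(x,t₀)| / (|y−x| u(x,t₀)) < ∞. Then for every t ≥ t₀ and every s with 0 < |s| ≤ δ, sup_{x∈ℝ} |u(x+s,t) − u(x,t)| / |s| ≤ [1 + η(t₀)] e^{‖f‖_{C¹}(t−t₀)} − 1. -/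
open MeasureTheory Filter Real Set
open scoped Topology

/-- Remark after Lemma 4.1: if `η(t₀) < ∞`, then for `t ≥ t₀` and
`0 < |s| ≤ δ`, `sup_x |u(x+s,t) − u(x,t)|/|s| ≤ [1 + η(t₀)] e^{‖f‖_{C¹}(t−t₀)} − 1`,
where `Mf` is a `C¹`-norm (Lipschitz) bound for `f` on `ℝ × [0,1]`. -/
theorem stmt11 (J : ℝ → ℝ) (f : ℝ → ℝ → ℝ) (u : ℝ → ℝ → ℝ) (δ t₀ Mf η₀ : ℝ)
    (hδ : 0 < δ)
    (hJC1 : ContDiff ℝ 1 J) (hJnonneg : ∀ x, 0 ≤ J x)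
    (hJeven : ∀ x, J (-x) = J x) (hJanti : AntitoneOn J (Set.Ici 0))
    (hJsupp : tsupport J = Set.Icc (-δ) δ) (hJint : (∫ y, J y) = 1)
    (hfC2 : ContDiff ℝ 2 (fun p : ℝ × ℝ => f p.1 p.2))
    (hf0 : ∀ x, f x 0 = 0) (hf1 : ∀ x, f x 1 = 0)
    (hMf : 0 ≤ Mf)
    (hMfLip : ∀ x₁ x₂ v₁ v₂ : ℝ, v₁ ∈ Set.Icc (0:ℝ) 1 → v₂ ∈ Set.Icc (0:ℝ) 1 →
      |f x₁ v₁ - f x₂ v₂| ≤ Mf * (|x₁ - x₂| + |v₁ - v₂|))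
    (huC : ContinuousOn (fun p : ℝ × ℝ => u p.1 p.2) (Set.univ ×ˢ Set.Ici t₀))
    (hurange : ∀ x t : ℝ, t₀ ≤ t → u x t ∈ Set.Icc (0:ℝ) 1)
    (hueq : ∀ x t : ℝ, t₀ < t → HasDerivAt (fun τ => u x τ)
      ((∫ y, J y * u (x - y) t) - u x t + f x (u x t)) t)
    (hη₀ : 0 ≤ η₀)
    (hinit : ∀ x y : ℝ, 0 < |y - x| → |y - x| ≤ δ →
      |u y t₀ - u x t₀| ≤ η₀ * (|y - x| * u x t₀)) :
    ∀ t, t₀ ≤ t → ∀ s : ℝ, 0 < |s| → |s| ≤ δ → ∀ x : ℝ,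
      |u (x + s) t - u x t| ≤ ((1 + η₀) * Real.exp (Mf * (t - t₀)) - 1) * |s| := by
  have hJcont : Continuous J := hJC1.continuous
  have hJcs : HasCompactSupport J := by
    rw [HasCompactSupport, hJsupp]; exact isCompact_Icc
  have hJI : Integrable J := hJcont.integrable_of_hasCompactSupport hJcs
  have hux : ∀ τ, t₀ ≤ τ → Continuous (fun y => u y τ) := by
    intro τ hτ
    rw [← continuousOn_univ]
    exact huC.comp (Continuous.continuousOn (continuous_id.prodMk continuous_const))
      (fun y _ => ⟨mem_univ y, hτ⟩)
  have hut : ∀ a, ContinuousOn (fun τ => u a τ) (Set.Ici t₀) := by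
    intro a
    exact huC.comp (Continuous.continuousOn (continuous_const.prodMk continuous_id))
      (fun τ hτ => ⟨mem_univ a, hτ⟩)
  have hIg : ∀ a τ, t₀ ≤ τ → Integrable (fun y => J y * u (a - y) τ) := by
    intro a τ hτ
    refine hJI.mono ?_ ?_
    · exact (hJcont.mul ((hux τ hτ).comp (continuous_const.sub continuous_id))).aestronglyMeasurable
    · refine Filter.Eventually.of_forall (fun y => ?_)
      have h1 := hurange (a - y) τ hτ
      rw [Real.norm_eq_abs, Real.norm_eq_abs, abs_mul, abs_of_nonneg (hJnonneg y)]
      have habs : |u (a - y) τ| ≤ 1 := abs_le.2 ⟨by linarith [h1.1], h1.2⟩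
      nlinarith [hJnonneg y, abs_nonneg (u (a-y) τ)]
  have hG01 : ∀ a τ, t₀ ≤ τ → (∫ y, J y * u (a - y) τ) ∈ Set.Icc (0:ℝ) 1 := by
    intro a τ hτ
    constructor
    · exact integral_nonneg fun y => mul_nonneg (hJnonneg y) (hurange _ τ hτ).1
    · calc (∫ y, J y * u (a - y) τ) ≤ ∫ y, J y := by
            refine integral_mono (hIg a τ hτ) hJI (fun y => ?_)
            have h1 := hurange (a - y) τ hτ
            nlinarith [hJnonneg y, h1.2]
      _ = 1 := hJint
  have hGc : ∀ a, ContinuousOn (fun τ => ∫ y, J y * u (a - y) τ) (Set.Ici t₀) := by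
    intro a
    refine continuousOn_of_dominated (fun τ hτ => (hIg a τ hτ).aestronglyMeasurable)
      (fun τ hτ => Filter.Eventually.of_forall fun y => ?_) hJI
      (Filter.Eventually.of_forall fun y => continuousOn_const.mul (hut (a - y)))
    · have h1 := hurange (a - y) τ hτ
      rw [Real.norm_eq_abs, abs_mul, abs_of_nonneg (hJnonneg y)]
      have habs : |u (a - y) τ| ≤ 1 := abs_le.2 ⟨by linarith [h1.1], h1.2⟩
      nlinarith [hJnonneg y, abs_nonneg (u (a-y) τ)]
  have hfb : ∀ x v, v ∈ Set.Icc (0:ℝ) 1 → |f x v| ≤ Mf := by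
    intro x v hv
    have := hMfLip x x v 0 hv ⟨le_rfl, zero_le_one⟩
    rw [hf0 x, sub_zero, sub_self, abs_zero, zero_add] at this
    simp only [sub_zero] at this
    have habs : |v| ≤ 1 := abs_le.2 ⟨by linarith [hv.1], hv.2⟩
    nlinarith [abs_nonneg v]
  have hfc : ∀ a, ContinuousOn (fun τ => f a (u a τ)) (Set.Ici t₀) := by
    intro a
    exact hfC2.continuous.comp_continuousOn (continuousOn_const.prodMk (hut a))
  -- continuity of the full time-derivative expression
  have hu'c : ∀ a, ContinuousOn
      (fun τ => (∫ y, J y * u (a - y) τ) - u a τ + f a (u a τ)) (Set.Ici t₀) := by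
    intro a; exact ((hGc a).sub (hut a)).add (hfc a)
  -- uniform Lipschitz bound in time
  have hLip : ∀ a p q, t₀ ≤ p → p ≤ q → |u a q - u a p| ≤ (2 + Mf) * (q - p) := by
    intro a p q hp hpq
    have hIccIci : Set.Icc p q ⊆ Set.Ici t₀ := fun τ hτ => le_trans hp hτ.1
    have hftc : (∫ τ in p..q, ((∫ y, J y * u (a - y) τ) - u a τ + f a (u a τ)))
        = u a q - u a p := by
      refine intervalIntegral.integral_eq_sub_of_hasDeriv_right_of_le hpq
        ((hut a).mono hIccIci)
        (fun τ hτ => ((hueq a τ (lt_of_le_of_lt hp hτ.1)).hasDerivWithinAt)) ?_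
      exact ((hu'c a).mono hIccIci).intervalIntegrable_of_Icc hpq
    rw [← hftc]
    have hb := intervalIntegral.norm_integral_le_of_norm_le_const
      (a := p) (b := q) (C := 2 + Mf)
      (f := fun τ => (∫ y, J y * u (a - y) τ) - u a τ + f a (u a τ)) ?_
    · rw [Real.norm_eq_abs] at hb
      rwa [abs_of_nonneg (by linarith : (0:ℝ) ≤ q - p)] at hb
    · intro τ hτ
      rw [Set.uIoc_of_le hpq] at hτ
      have hτ' : t₀ ≤ τ := le_trans hp (le_of_lt hτ.1)
      obtain ⟨h1a, h1b⟩ := hG01 a τ hτ'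
      obtain ⟨h2a, h2b⟩ := hurange a τ hτ'
      obtain ⟨h3a, h3b⟩ := abs_le.1 (hfb a (u a τ) ⟨h2a, h2b⟩)
      rw [Real.norm_eq_abs, abs_le]
      constructor <;> (beta_reduce; linarith)
  -- now fix t and s
  intro t ht s hs0 hsδ
  set C : ℝ := 2 * (2 + Mf) with hC
  have hC0 : 0 ≤ C := by positivity
  set φ : ℝ → ℝ := fun τ => ⨆ x : ℝ, |u (x + s) τ - u x τ| with hφ
  have hwb : ∀ x τ, t₀ ≤ τ → |u (x + s) τ - u x τ| ≤ 1 := by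
    intro x τ hτ
    obtain ⟨ha, hb⟩ := hurange (x + s) τ hτ
    obtain ⟨hc, hd⟩ := hurange x τ hτ
    rw [abs_le]; constructor <;> linarith
  have hbdd : ∀ τ, t₀ ≤ τ → BddAbove (Set.range fun x => |u (x + s) τ - u x τ|) := by
    intro τ hτ
    exact ⟨1, forall_mem_range.2 fun x => hwb x τ hτ⟩
  have hφle : ∀ τ, ∀ M : ℝ, (∀ x, |u (x + s) τ - u x τ| ≤ M) → φ τ ≤ M := by
    intro τ M hM; exact ciSup_le hM
  have hleφ : ∀ x τ, t₀ ≤ τ → |u (x + s) τ - u x τ| ≤ φ τ := by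
    intro x τ hτ; exact le_ciSup (hbdd τ hτ) x
  have hφ0 : ∀ τ, t₀ ≤ τ → 0 ≤ φ τ := by
    intro τ hτ; exact le_trans (abs_nonneg _) (hleφ 0 τ hτ)
  have hφLip : ∀ p q, t₀ ≤ p → p ≤ q → φ q ≤ φ p + C * (q - p) := by
    intro p q hp hpq
    refine hφle q _ (fun x => ?_)
    have h1 := hLip (x + s) p q hp hpq
    have h2 := hLip x p q hp hpq
    have h3 := hleφ x p hp
    have h4 : |u (x + s) q - u x q| - |u (x + s) p - u x p| ≤
        |u (x + s) q - u (x + s) p| + |u x q - u x p| := by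
      have := abs_sub_abs_le_abs_sub (u (x + s) q - u x q) (u (x + s) p - u x p)
      have h5 : |u (x + s) q - u x q - (u (x + s) p - u x p)| ≤
          |u (x + s) q - u (x + s) p| + |u x q - u x p| := by
        have := abs_sub (u (x + s) q - u (x + s) p) (u x q - u x p)
        calc |u (x + s) q - u x q - (u (x + s) p - u x p)|
            = |(u (x + s) q - u (x + s) p) - (u x q - u x p)| := by ring_nf
          _ ≤ |u (x + s) q - u (x + s) p| + |u x q - u x p| := abs_sub _ _
      linarith
    rw [hC]; linarith
  have hφLip' : ∀ p q, t₀ ≤ p → p ≤ q → φ p ≤ φ q + C * (q - p) := by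
    intro p q hp hpq
    refine hφle p _ (fun x => ?_)
    have h1 := hLip (x + s) p q hp hpq
    have h2 := hLip x p q hp hpq
    have h3 := hleφ x q (le_trans hp hpq)
    have h5 : |u (x + s) p - u x p| - |u (x + s) q - u x q| ≤
        |u (x + s) q - u (x + s) p| + |u x q - u x p| := by
      calc |u (x + s) p - u x p| - |u (x + s) q - u x q|
          ≤ |u (x + s) p - u x p - (u (x + s) q - u x q)| := abs_sub_abs_le_abs_sub _ _
        _ = |(u (x + s) q - u (x + s) p) - (u x q - u x p)| := by
            rw [← abs_neg]; ring_nf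
        _ ≤ |u (x + s) q - u (x + s) p| + |u x q - u x p| := abs_sub _ _
    rw [hC]; linarith
  have hφcont : ContinuousOn φ (Set.Ici t₀) := by
    refine LipschitzOnWith.continuousOn (K := Real.toNNReal C)
      (LipschitzOnWith.of_dist_le_mul fun p hp q hq => ?_)
    rw [Real.dist_eq, Real.dist_eq, Real.coe_toNNReal C hC0]
    rcases le_total p q with h | h
    · have h1 := hφLip p q hp h
      have h2 := hφLip' p q hp h
      rw [abs_of_nonpos (by linarith : p - q ≤ 0), abs_le]
      constructor <;> nlinarith
    · have h1 := hφLip q p hq h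
      have h2 := hφLip' q p hq h
      rw [abs_of_nonneg (by linarith : 0 ≤ p - q), abs_le]
      constructor <;> nlinarith
  -- bound on the difference of convolutions
  have hJw : ∀ x τ, t₀ ≤ τ →
      |(∫ y, J y * u (x + s - y) τ) - ∫ y, J y * u (x - y) τ| ≤ φ τ := by
    intro x τ hτ
    rw [← integral_sub (hIg (x + s) τ hτ) (hIg x τ hτ)]
    have hint : Integrable (fun y => J y * u (x + s - y) τ - J y * u (x - y) τ) :=
      (hIg (x + s) τ hτ).sub (hIg x τ hτ)
    calc |∫ y, (J y * u (x + s - y) τ - J y * u (x - y) τ)|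
        ≤ ∫ y, |J y * u (x + s - y) τ - J y * u (x - y) τ| := by
          simpa [Real.norm_eq_abs] using
            norm_integral_le_integral_norm (μ := volume)
              (fun y => J y * u (x + s - y) τ - J y * u (x - y) τ)
      _ ≤ ∫ y, J y * φ τ := by
          refine integral_mono hint.abs (hJI.mul_const (φ τ)) (fun y => ?_)
          have heq : x + s - y = x - y + s := by ring
          rw [← mul_sub, abs_mul, abs_of_nonneg (hJnonneg y), heq]
          exact mul_le_mul_of_nonneg_left (hleφ (x - y) τ hτ) (hJnonneg y)
      _ = φ τ := by rw [integral_mul_const, hJint, one_mul]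
  -- the key exponential integral inequality
  have hkey : ∀ p q, t₀ ≤ p → p ≤ q →
      Real.exp q * φ q ≤ Real.exp p * φ p +
        (Real.exp q - Real.exp p) * ((1 + Mf) * (φ p + C * (q - p)) + Mf * |s|) := by
    intro p q hp hpq
    set K : ℝ := (1 + Mf) * (φ p + C * (q - p)) + Mf * |s| with hK
    have hK0 : 0 ≤ K := by
      have := hφ0 p hp
      have : 0 ≤ φ p + C * (q - p) := by nlinarith
      positivity
    have hIccIci : Set.Icc p q ⊆ Set.Ici t₀ := fun τ hτ => le_trans hp hτ.1
    have hmain : ∀ x : ℝ, |u (x + s) q - u x q| ≤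
        (Real.exp p * φ p + (Real.exp q - Real.exp p) * K) / Real.exp q := by
      intro x
      set R : ℝ → ℝ := fun τ =>
        (∫ y, J y * u (x + s - y) τ) - (∫ y, J y * u (x - y) τ) +
          (f (x + s) (u (x + s) τ) - f x (u x τ)) with hR
      have hRc : ContinuousOn R (Set.Ici t₀) :=
        (((hGc (x + s)).sub (hGc x)).add ((hfc (x + s)).sub (hfc x)))
      have hderiv : ∀ τ, t₀ < τ →
          HasDerivAt (fun τ => Real.exp τ * (u (x + s) τ - u x τ)) (Real.exp τ * R τ) τ := by
        intro τ hτ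
        have hd := (hueq (x + s) τ hτ).sub (hueq x τ hτ)
        have he := Real.hasDerivAt_exp τ
        have := he.mul hd
        refine this.congr_deriv ?_
        rw [hR]; simp only [Pi.sub_apply]; ring
      have hftc : (∫ τ in p..q, Real.exp τ * R τ)
          = Real.exp q * (u (x + s) q - u x q) - Real.exp p * (u (x + s) p - u x p) := by
        refine intervalIntegral.integral_eq_sub_of_hasDeriv_right_of_le hpq
          (Real.continuous_exp.continuousOn.mul
            (((hut (x + s)).sub (hut x)).mono hIccIci))
          (fun τ hτ => (hderiv τ (lt_of_le_of_lt hp hτ.1)).hasDerivWithinAt) ?_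
        exact ((Real.continuous_exp.continuousOn.mul (hRc.mono hIccIci))).intervalIntegrable_of_Icc hpq
      have hbnd : ∀ τ ∈ Set.uIoc p q, ‖Real.exp τ * R τ‖ ≤ Real.exp τ * K := by
        intro τ hτ
        rw [Set.uIoc_of_le hpq] at hτ
        have hτ' : t₀ ≤ τ := le_trans hp (le_of_lt hτ.1)
        have h1 := hJw x τ hτ'
        have h2 := hMfLip (x + s) x (u (x + s) τ) (u x τ) (hurange _ τ hτ') (hurange _ τ hτ')
        have hxs : |x + s - x| = |s| := by rw [add_sub_cancel_left]
        rw [hxs] at h2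
        have h3 : |u (x + s) τ - u x τ| ≤ φ τ := hleφ x τ hτ'
        have h4 : φ τ ≤ φ p + C * (q - p) := by
          have := hφLip p τ hp (le_of_lt hτ.1)
          have hCm : C * (τ - p) ≤ C * (q - p) := by
            apply mul_le_mul_of_nonneg_left _ hC0; linarith [hτ.2]
          linarith
        have hRb : |R τ| ≤ K := by
          rw [hR, hK]
          have := abs_add_le ((∫ y, J y * u (x + s - y) τ) - (∫ y, J y * u (x - y) τ))
            (f (x + s) (u (x + s) τ) - f x (u x τ))
          have hφτ0 := hφ0 τ hτ'
          nlinarith [abs_nonneg (u (x + s) τ - u x τ)]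
        rw [Real.norm_eq_abs, abs_mul, abs_of_nonneg (Real.exp_pos τ).le]
        exact mul_le_mul_of_nonneg_left hRb (Real.exp_pos τ).le
      have hbI : IntervalIntegrable (fun τ => Real.exp τ * K) volume p q :=
        (Real.continuous_exp.mul continuous_const).intervalIntegrable p q
      have hIb : ‖∫ τ in p..q, Real.exp τ * R τ‖ ≤ |∫ τ in p..q, Real.exp τ * K| := by
        refine intervalIntegral.norm_integral_le_abs_of_norm_le ?_ hbI
        exact (ae_restrict_iff' measurableSet_uIoc).2 (Filter.Eventually.of_forall hbnd)
      rw [abs_of_nonneg (by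
        rw [intervalIntegral.integral_mul_const, integral_exp]
        exact mul_nonneg (by linarith [Real.exp_le_exp.2 hpq] : (0:ℝ) ≤ Real.exp q - Real.exp p) hK0)] at hIb
      have hIexp : (∫ τ in p..q, Real.exp τ * K) = (Real.exp q - Real.exp p) * K := by
        rw [intervalIntegral.integral_mul_const, integral_exp]
      rw [hftc, hIexp, Real.norm_eq_abs] at hIb
      have hgp : |Real.exp p * (u (x + s) p - u x p)| ≤ Real.exp p * φ p := by
        rw [abs_mul, abs_of_nonneg (Real.exp_pos p).le]
        exact mul_le_mul_of_nonneg_left (hleφ x p hp) (Real.exp_pos p).le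
      rw [le_div_iff₀ (Real.exp_pos q)]
      have habs := abs_sub_abs_le_abs_sub (Real.exp q * (u (x + s) q - u x q))
        (Real.exp p * (u (x + s) p - u x p))
      rw [abs_mul, abs_of_nonneg (Real.exp_pos q).le] at habs
      nlinarith [abs_nonneg (u (x + s) q - u x q)]
    have := hφle q _ hmain
    rw [le_div_iff₀ (Real.exp_pos q)] at this
    linarith [this]
  -- initial bound
  have hinit' : φ t₀ ≤ η₀ * |s| := by
    refine hφle t₀ _ (fun x => ?_)
    have hxs : |x + s - x| = |s| := by rw [add_sub_cancel_left]
    have h1 := hinit x (x + s) (by rw [hxs]; exact hs0) (by rw [hxs]; exact hsδ)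
    rw [hxs] at h1
    have h2 := (hurange x t₀ le_rfl).2
    have h3 := (hurange x t₀ le_rfl).1
    have h4 : 0 ≤ η₀ * |s| * (1 - u x t₀) :=
      mul_nonneg (mul_nonneg hη₀ (abs_nonneg s)) (by linarith)
    nlinarith [h4]
  -- Gronwall
  have hgron : ∀ τ ∈ Set.Icc t₀ t,
      φ τ ≤ gronwallBound (η₀ * |s|) Mf (Mf * |s|) (τ - t₀) := by
    refine le_gronwallBound_of_liminf_deriv_right_le
      (f' := fun τ => Mf * φ τ + Mf * |s|)
      (hφcont.mono Set.Icc_subset_Ici_self) ?_ hinit' (fun τ _ => le_rfl)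
    intro p hp r hr
    set K : ℝ → ℝ := fun z => (1 + Mf) * (φ p + C * (z - p)) + Mf * |s| with hKdef
    set A : ℝ → ℝ := fun z => (z - p)⁻¹ * (Real.exp (p - z) - 1) with hAdef
    set B : ℝ → ℝ := fun z => A z * φ p + (-(A z)) * K z with hBdef
    -- the slope is eventually bounded by B
    have hslope : ∀ᶠ z in 𝓝[>] p, (z - p)⁻¹ * (φ z - φ p) ≤ B z := by
      refine eventually_mem_nhdsWithin.mono (fun z hz => ?_)
      have hz' : p < z := hz
      have hkey' := hkey p z hp.1 hz'.le
      have hE : Real.exp p = Real.exp (p - z) * Real.exp z := by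
        rw [← Real.exp_add]; ring_nf
      have hinv : 0 ≤ (z - p)⁻¹ := inv_nonneg.2 (by linarith)
      have hdiff : φ z - φ p ≤ (Real.exp (p - z) - 1) * φ p + (1 - Real.exp (p - z)) * K z := by
        have hez := Real.exp_pos z
        rw [hE] at hkey'
        have h2 : Real.exp z * φ z ≤
            Real.exp z * (Real.exp (p - z) * φ p + (1 - Real.exp (p - z)) * K z) := by
          calc Real.exp z * φ z
              ≤ Real.exp (p - z) * Real.exp z * φ p +
                (Real.exp z - Real.exp (p - z) * Real.exp z) *
                  ((1 + Mf) * (φ p + C * (z - p)) + Mf * |s|) := hkey'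
            _ = Real.exp z * (Real.exp (p - z) * φ p + (1 - Real.exp (p - z)) * K z) := by
                rw [hKdef]; ring
        have h3 := (mul_le_mul_iff_right₀ hez).1 h2
        linarith
      have := mul_le_mul_of_nonneg_left hdiff hinv
      calc (z - p)⁻¹ * (φ z - φ p)
          ≤ (z - p)⁻¹ * ((Real.exp (p - z) - 1) * φ p + (1 - Real.exp (p - z)) * K z) := this
        _ = B z := by rw [hBdef, hAdef]; ring
    -- B tends to Mf * φ p + Mf * |s|
    have hAtend : Filter.Tendsto A (𝓝[>] p) (𝓝 (-1)) := by
      have hD : HasDerivAt (fun z => Real.exp (p - z)) (-1) p := by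
        have hin : HasDerivAt (fun z : ℝ => p - z) (0 - 1) p :=
          (hasDerivAt_const p p).sub (hasDerivAt_id p)
        have := hin.exp
        simpa using this
      have hsl := hasDerivAt_iff_tendsto_slope.1 hD
      have heq : ∀ z, slope (fun z => Real.exp (p - z)) p z = A z := by
        intro z
        rw [slope_def_field, hAdef]
        simp [sub_self, Real.exp_zero, div_eq_inv_mul]
      have : Filter.Tendsto A (𝓝[≠] p) (𝓝 (-1)) := by
        refine hsl.congr (fun z => heq z)
      exact this.mono_left (nhdsWithin_mono p (fun z hz => ne_of_gt hz))
    have hKtend : Filter.Tendsto K (𝓝[>] p) (𝓝 ((1 + Mf) * φ p + Mf * |s|)) := by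
      have hc : Continuous K := by
        rw [hKdef]
        exact (continuous_const.mul (continuous_const.add
          (continuous_const.mul ((continuous_id.sub continuous_const))))).add continuous_const
      have := (hc.tendsto p).mono_left (nhdsWithin_le_nhds (s := Set.Ioi p))
      simpa [hKdef] using this
    have hBtend : Filter.Tendsto B (𝓝[>] p) (𝓝 (Mf * φ p + Mf * |s|)) := by
      have h1 := (hAtend.mul_const (φ p)).add ((hAtend.neg).mul hKtend)
      have heq : (-1 : ℝ) * φ p + (-(-1)) * ((1 + Mf) * φ p + Mf * |s|)
          = Mf * φ p + Mf * |s| := by ring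
      rw [heq] at h1
      exact h1
    have hBlt : ∀ᶠ z in 𝓝[>] p, B z < r := hBtend.eventually_lt_const hr
    refine ((hslope.and hBlt).mono (fun z hz => lt_of_le_of_lt hz.1 hz.2)).frequently
  -- conclude
  intro x
  have h1 : |u (x + s) t - u x t| ≤ φ t := hleφ x t ht
  have h2 := hgron t ⟨ht, le_rfl⟩
  refine le_trans h1 (le_trans h2 ?_)
  rcases eq_or_ne Mf 0 with hM0 | hM0
  · subst hM0
    rw [gronwallBound_K0]
    simp [Real.exp_zero]
  · rw [gronwallBound_of_K_ne_0 hM0]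
    have : Mf * |s| / Mf = |s| := by field_simp
    rw [this]
    ring_nf
    nlinarith [Real.exp_pos (Mf * (t - t₀))]
end

section
/- Let g satisfy (G), let α ∈ (0,1), c_α := α + α^{−1}, and let U : ℝ → (0,1) be a C² solution of U″ + c_α U′ + g(U) = 0 with U′ < 0, lim_{s→−∞} U(s) = 1 and lim_{s→∞} U(s) = 0. Define r_α : (−∞,1] → ℝ by r_α(v) = α/(1 + α²(1−v)) for v ∈ [0,1] and r_α(v) = α/(1+α²) for v < 0. Then −U′(x) ≤ r_α(g′(U(x))) · g(U(x)) for every x ∈ ℝ. -/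
open MeasureTheory Filter Real Set

lemma stmt12_key (α v t : ℝ) (hα0 : 0 < α) (hα1 : α < 1) (hv1 : v < 1)
    (hR : α / (1 + α ^ 2 * (1 - max v 0)) < t) (ht1 : t < 1 / α) (htpos : 0 < t) :
    v * t ^ 2 - (α + α⁻¹) * t + 1 < 0 := by
  have hα2 : (0:ℝ) < 1 + α ^ 2 := by positivity
  have h2 : α * t < 1 := by
    rw [lt_div_iff₀ hα0] at ht1; linarith
  have hsub : α * (v * t ^ 2 - (α + α⁻¹) * t + 1) = α * v * t ^ 2 - (α ^ 2 + 1) * t + α := by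
    field_simp
  have hmain : α * (v * t ^ 2 - (α + α⁻¹) * t + 1) < 0 := by
    rw [hsub]
    rcases le_or_gt 0 v with hv | hv
    · rw [max_eq_left hv] at hR
      have hD : (0:ℝ) < 1 + α ^ 2 * (1 - v) := by nlinarith
      have h1 : α < t * (1 + α ^ 2 * (1 - v)) := (div_lt_iff₀ hD).mp hR
      have e1 : 0 < (t * (1 + α ^ 2 * (1 - v)) - α) * (1 - α * t) :=
        mul_pos (by linarith) (by linarith)
      have e2 : 0 ≤ α * (1 - v) * t * ((1 + α ^ 2) * t - α) := by
        have h3 : t * (1 + α ^ 2 * (1 - v)) ≤ t * (1 + α ^ 2) := by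
          nlinarith [mul_nonneg htpos.le (mul_nonneg (sq_nonneg α) hv)]
        have h4 : 0 ≤ (1 + α ^ 2) * t - α := by nlinarith
        exact mul_nonneg (mul_nonneg (mul_nonneg hα0.le (by linarith)) htpos.le) h4
      nlinarith [e1, e2]
    · rw [max_eq_right hv.le] at hR
      norm_num at hR
      have h1 : α < t * (1 + α ^ 2) := (div_lt_iff₀ hα2).mp hR
      have e3 : α * v * t ^ 2 ≤ 0 :=
        mul_nonpos_of_nonpos_of_nonneg (mul_nonpos_of_nonneg_of_nonpos hα0.le hv.le) (sq_nonneg t)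
      nlinarith [h1, e3]
  nlinarith [hmain, hα0]

/-- Lemma 5.1: `−U′ ≤ r_α(g′(U)) g(U)`, where
`r_α(v) = α/(1 + α²(1−v))` for `v ∈ [0,1]` and `r_α(v) = α/(1+α²)` for `v < 0`. -/
theorem stmt12 (g U : ℝ → ℝ) (α : ℝ) (hα : α ∈ Set.Ioo (0:ℝ) 1)
    (hgC1 : ContDiff ℝ 1 g) (hgnonneg : ∀ u ∈ Set.Icc (0:ℝ) 1, 0 ≤ g u)
    (hg0 : g 0 = 0) (hg1 : g 1 = 0) (hg'0 : deriv g 0 = 1)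
    (hg'anti : StrictAntiOn (deriv g) (Set.Icc 0 1)) (hg'1 : -1 ≤ deriv g 1)
    (hgint : MeasureTheory.IntegrableOn (fun u => (u - g u) / u ^ 2) (Set.Ioc 0 1))
    (hUC2 : ContDiff ℝ 2 U) (hUrange : ∀ s, U s ∈ Set.Ioo (0:ℝ) 1)
    (hUode : ∀ s, deriv (deriv U) s + (α + α⁻¹) * deriv U s + g (U s) = 0)
    (hU' : ∀ s, deriv U s < 0)
    (hUbot : Tendsto U atBot (nhds 1)) (hUtop : Tendsto U atTop (nhds 0)) :
    ∀ x : ℝ,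
      -deriv U x ≤
        (if 0 ≤ deriv g (U x) then α / (1 + α ^ 2 * (1 - deriv g (U x)))
          else α / (1 + α ^ 2)) * g (U x) := by
  obtain ⟨hα0, hα1⟩ := hα
  have hα2 : (0:ℝ) < 1 + α ^ 2 := by positivity
  -- basic regularity
  have hgdiff : Differentiable ℝ g := hgC1.differentiable one_ne_zero
  have hg'cont : Continuous (deriv g) := hgC1.continuous_deriv le_rfl
  have hUdiff : Differentiable ℝ U := hUC2.differentiable two_ne_zero
  have hU'cd : ContDiff ℝ 1 (deriv U) := by
    have := (contDiff_succ_iff_deriv.mp (by exact_mod_cast hUC2 : ContDiff ℝ ((1:ℕ)+1) U)).2.2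
    exact_mod_cast this
  have hU'diff : Differentiable ℝ (deriv U) := hU'cd.differentiable one_ne_zero
  have hUcont : Continuous U := hUdiff.continuous
  -- g is positive on (0,1)
  have hgpos : ∀ u ∈ Set.Ioo (0:ℝ) 1, 0 < g u := by
    intro u hu
    rcases le_or_gt 0 (deriv g u) with h | h
    · have hmono : StrictMonoOn g (Set.Icc 0 u) := by
        apply strictMonoOn_of_deriv_pos (convex_Icc 0 u) hgC1.continuous.continuousOn
        intro t ht
        rw [interior_Icc] at ht
        have := hg'anti ⟨ht.1.le, (ht.2.trans hu.2).le⟩ ⟨hu.1.le, hu.2.le⟩ ht.2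
        linarith
      have := hmono (left_mem_Icc.mpr hu.1.le) (right_mem_Icc.mpr hu.1.le) hu.1
      rwa [hg0] at this
    · have hanti : StrictAntiOn g (Set.Icc u 1) := by
        apply strictAntiOn_of_deriv_neg (convex_Icc u 1) hgC1.continuous.continuousOn
        intro t ht
        rw [interior_Icc] at ht
        have := hg'anti ⟨hu.1.le, hu.2.le⟩ ⟨(hu.1.trans ht.1).le, ht.2.le⟩ ht.1
        linarith
      have := hanti (left_mem_Icc.mpr hu.2.le) (right_mem_Icc.mpr hu.2.le) hu.2
      rwa [hg1] at this
  have hgU : ∀ x, 0 < g (U x) := fun x => hgpos _ (hUrange x)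
  -- deriv g (U x) < 1
  have hv1 : ∀ x, deriv g (U x) < 1 := by
    intro x
    have := hg'anti (left_mem_Icc.mpr zero_le_one)
      ⟨(hUrange x).1.le, (hUrange x).2.le⟩ (hUrange x).1
    rwa [hg'0] at this
  -- U is strictly decreasing
  have hUanti : StrictAnti U := strictAnti_of_deriv_neg hU'
  -- deriv g (U ·) is monotone
  have hvmono : ∀ {x y : ℝ}, x ≤ y → deriv g (U x) ≤ deriv g (U y) := by
    intro x y hxy
    rcases eq_or_lt_of_le hxy with rfl | h
    · exact le_refl _
    · exact (hg'anti ⟨(hUrange y).1.le, (hUrange y).2.le⟩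
        ⟨(hUrange x).1.le, (hUrange x).2.le⟩ (hUanti h)).le
  -- deriv g 1 < 0
  have hge1 : deriv g 1 < 0 := by
    by_contra h
    push_neg at h
    have hmono : StrictMonoOn g (Set.Icc (0:ℝ) 1) := by
      apply strictMonoOn_of_deriv_pos (convex_Icc 0 1) hgC1.continuous.continuousOn
      intro t ht
      rw [interior_Icc] at ht
      have := hg'anti ⟨ht.1.le, ht.2.le⟩ (right_mem_Icc.mpr zero_le_one) ht.2
      linarith
    have := hmono (left_mem_Icc.mpr zero_le_one) (right_mem_Icc.mpr zero_le_one) one_pos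
    rw [hg0, hg1] at this
    exact lt_irrefl 0 this
  -- θ = -U'/g(U)
  set θ : ℝ → ℝ := fun x => -deriv U x / g (U x) with hθdef
  have hθpos : ∀ x, 0 < θ x := fun x => div_pos (by linarith [hU' x]) (hgU x)
  have hθdAt : ∀ x, HasDerivAt θ
      (deriv g (U x) * θ x ^ 2 - (α + α⁻¹) * θ x + 1) x := by
    intro x
    have h1 : HasDerivAt (fun y => -deriv U y) (-(deriv (deriv U) x)) x :=
      ((hU'diff x).hasDerivAt).neg
    have h2 : HasDerivAt (fun y => g (U y)) (deriv g (U x) * deriv U x) x :=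
      ((hgdiff (U x)).hasDerivAt).comp x (hUdiff x).hasDerivAt
    have h3 := h1.div h2 (hgU x).ne'
    have hode : deriv (deriv U) x = -((α + α⁻¹) * deriv U x) - g (U x) := by
      linarith [hUode x]
    rw [hode] at h3
    refine h3.congr_deriv ?_
    have hg0' := (hgU x).ne'
    simp only [hθdef]
    field_simp
    ring
  have hθcont : Continuous θ := by
    rw [continuous_iff_continuousAt]
    exact fun x => (hθdAt x).differentiableAt.continuousAt
  -- Rm
  set Rm : ℝ → ℝ := fun x => α / (1 + α ^ 2 * (1 - max (deriv g (U x)) 0)) with hRmdef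
  have hden : ∀ x, 0 < 1 + α ^ 2 * (1 - max (deriv g (U x)) 0) := by
    intro x
    have h1 : max (deriv g (U x)) 0 < 1 := max_lt (hv1 x) one_pos
    nlinarith [sq_nonneg α]
  have hRmpos : ∀ x, 0 < Rm x := fun x => div_pos hα0 (hden x)
  have hRmcont : Continuous Rm := by
    apply continuous_const.div
    · exact continuous_const.add (continuous_const.mul (continuous_const.sub
        ((hg'cont.comp hUcont).max continuous_const)))
    · exact fun x => (hden x).ne'
  have hRmle : ∀ x, Rm x ≤ α := by
    intro x
    simp only [hRmdef]
    have h1 : (0:ℝ) ≤ max (deriv g (U x)) 0 := le_max_right _ _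
    have h2 : max (deriv g (U x)) 0 < 1 := max_lt (hv1 x) one_pos
    rw [div_le_iff₀ (hden x)]
    nlinarith [mul_nonneg (mul_nonneg hα0.le (sq_nonneg α)) (sub_nonneg.mpr h2.le)]
  have hrcle : ∀ x, α / (1 + α ^ 2) ≤ Rm x := by
    intro x
    have h1 : (0:ℝ) ≤ max (deriv g (U x)) 0 := le_max_right _ _
    have hd := hden x
    simp only [hRmdef]
    gcongr
    nlinarith [sq_nonneg α]
  have hRmmono : ∀ {x y : ℝ}, x ≤ y → Rm x ≤ Rm y := by
    intro x y hxy
    have h1 : max (deriv g (U x)) 0 ≤ max (deriv g (U y)) 0 :=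
      max_le_max (hvmono hxy) le_rfl
    simp only [hRmdef]
    gcongr
    exact hden y
  intro x₀
  -- reduce to θ x₀ ≤ Rm x₀
  have hgoalRm : (if 0 ≤ deriv g (U x₀) then α / (1 + α ^ 2 * (1 - deriv g (U x₀)))
      else α / (1 + α ^ 2)) = Rm x₀ := by
    simp only [hRmdef]
    split_ifs with h
    · rw [max_eq_left h]
    · rw [max_eq_right (le_of_not_ge h)]
      norm_num
  rw [hgoalRm]
  have hsuff : θ x₀ ≤ Rm x₀ → -deriv U x₀ ≤ Rm x₀ * g (U x₀) := by
    intro h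
    have := (div_le_iff₀ (hgU x₀)).mp h
    linarith
  apply hsuff
  by_contra hcon
  push_neg at hcon
  -- Step A: find x₁ ≤ x₀ with θ x₁ ≤ α/(1+α²)
  have hstepA : ∃ x₁, x₁ ≤ x₀ ∧ θ x₁ ≤ α / (1 + α ^ 2) := by
    by_contra hA
    push_neg at hA
    have hvtend : Tendsto (fun x => deriv g (U x)) atBot (nhds (deriv g 1)) :=
      (hg'cont.tendsto 1).comp hUbot
    have hev : ∀ᶠ x in atBot, deriv g (U x) < deriv g 1 / 2 :=
      hvtend.eventually (eventually_lt_nhds (by linarith))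
    obtain ⟨M, hM⟩ := eventually_atBot.mp hev
    set X := min M x₀ with hXdef
    set η : ℝ := -(deriv g 1) / 2 with hηdef
    have hη : 0 < η := by rw [hηdef]; linarith
    set ψ : ℝ → ℝ := fun x => (θ x)⁻¹ with hψdef
    have hψdAt : ∀ x, HasDerivAt ψ
        (-(deriv g (U x) * θ x ^ 2 - (α + α⁻¹) * θ x + 1) / θ x ^ 2) x :=
      fun x => (hθdAt x).inv (hθpos x).ne'
    have hψpos : ∀ x, 0 < ψ x := fun x => inv_pos.mpr (hθpos x)
    have hcpos : 0 < α + α⁻¹ := by positivity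
    have hbound : ∀ x, x ≤ X →
        η < -(deriv g (U x) * θ x ^ 2 - (α + α⁻¹) * θ x + 1) / θ x ^ 2 := by
      intro x hx
      have h1 : deriv g (U x) < deriv g 1 / 2 := hM x (hx.trans (min_le_left _ _))
      have h2 : α / (1 + α ^ 2) < θ x := hA x (hx.trans (min_le_right _ _))
      have hcθ : 1 < (α + α⁻¹) * θ x := by
        have hcc : (α + α⁻¹) * (α / (1 + α ^ 2)) = 1 := by
          field_simp
          ring
        calc (1:ℝ) = (α + α⁻¹) * (α / (1 + α ^ 2)) := hcc.symm
          _ < (α + α⁻¹) * θ x := by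
              exact mul_lt_mul_of_pos_left h2 hcpos
      rw [lt_div_iff₀ (pow_pos (hθpos x) 2)]
      have hεv : deriv g (U x) + η < 0 := by rw [hηdef]; linarith
      nlinarith [mul_neg_of_neg_of_pos hεv (pow_pos (hθpos x) 2), hcθ]
    -- monotonicity of ψ - ηx contradiction
    have hψcont : Continuous ψ := by
      rw [continuous_iff_continuousAt]
      exact fun x => (hψdAt x).differentiableAt.continuousAt
    set x' := X - (ψ X + 1) / η with hx'def
    have hx'X : x' < X := by
      have : 0 < (ψ X + 1) / η := div_pos (by linarith [hψpos X]) hη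
      rw [hx'def]; linarith
    have hmono : StrictMonoOn (fun x => ψ x - η * x) (Set.Icc x' X) := by
      apply strictMonoOn_of_deriv_pos (convex_Icc _ _)
      · exact (hψcont.sub (continuous_const.mul continuous_id)).continuousOn
      · intro x hx
        rw [interior_Icc] at hx
        have hd : HasDerivAt (fun x => ψ x - η * x)
            (-(deriv g (U x) * θ x ^ 2 - (α + α⁻¹) * θ x + 1) / θ x ^ 2 - η * 1) x :=
          (hψdAt x).sub ((hasDerivAt_id x).const_mul η)
        rw [hd.deriv]
        have := hbound x hx.2.le
        linarith
    have hlt := hmono ⟨le_refl x', hx'X.le⟩ ⟨hx'X.le, le_refl X⟩ hx'X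
    simp only at hlt
    have hXx' : η * (X - x') = ψ X + 1 := by
      rw [hx'def]
      field_simp
      ring
    have : ψ x' < -1 := by nlinarith [hlt, hXx']
    linarith [hψpos x']
  obtain ⟨x₁, hx₁le, hθx₁⟩ := hstepA
  -- sup of contact set
  set B := Set.Icc x₁ x₀ ∩ {x | θ x ≤ Rm x} with hBdef
  have hBne : x₁ ∈ B := ⟨⟨le_refl x₁, hx₁le⟩, hθx₁.trans (hrcle x₁)⟩
  have hBcpt : IsCompact B := isCompact_Icc.inter_right (isClosed_le hθcont hRmcont)
  have hx₂B : sSup B ∈ B := hBcpt.sSup_mem ⟨x₁, hBne⟩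
  set x₂ := sSup B with hx₂def
  have hx₂le : x₂ ≤ x₀ := hx₂B.1.2
  have hx₂θ : θ x₂ ≤ Rm x₂ := hx₂B.2
  have hx₂lt : x₂ < x₀ := by
    rcases lt_or_eq_of_le hx₂le with h | h
    · exact h
    · rw [h] at hx₂θ; linarith
  have hx₁x₂ : x₁ ≤ x₂ := le_csSup hBcpt.bddAbove hBne
  have habove : ∀ x, x₂ < x → x ≤ x₀ → Rm x < θ x := by
    intro x h1 h2
    by_contra h
    push_neg at h
    have hxB : x ∈ B := ⟨⟨hx₁x₂.trans h1.le, h2⟩, h⟩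
    exact absurd (le_csSup hBcpt.bddAbove hxB) (not_le.mpr h1)
  have hαinv : α < 1 / α := by
    rw [lt_div_iff₀ hα0]; nlinarith
  -- key: derivative negative when between Rm and 1/α
  have hkey : ∀ x, x₂ < x → x ≤ x₀ → θ x < 1 / α → deriv θ x < 0 := by
    intro x h1 h2 h3
    rw [(hθdAt x).deriv]
    have hRx : α / (1 + α ^ 2 * (1 - max (deriv g (U x)) 0)) < θ x := by
      have := habove x h1 h2
      rwa [hRmdef] at this
    exact stmt12_key α (deriv g (U x)) (θ x) hα0 hα1 (hv1 x) hRx h3 (hθpos x)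
  -- θ < 1/α on [x₂, x₀]
  have hTempty : ∀ x, x₂ ≤ x → x ≤ x₀ → θ x < 1 / α := by
    by_contra hT
    push_neg at hT
    obtain ⟨z, hz1, hz2, hz3⟩ := hT
    set T := Set.Icc x₂ x₀ ∩ {x | 1 / α ≤ θ x} with hTdef
    have hTcpt : IsCompact T := isCompact_Icc.inter_right (isClosed_le continuous_const hθcont)
    have hTne : T.Nonempty := ⟨z, ⟨⟨hz1, hz2⟩, hz3⟩⟩
    have hx₃T : sInf T ∈ T := hTcpt.sInf_mem hTne
    set x₃ := sInf T with hx₃def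
    have hθx₂lt : θ x₂ < 1 / α := lt_of_le_of_lt (hx₂θ.trans (hRmle x₂)) hαinv
    have hx₂x₃ : x₂ < x₃ := by
      rcases lt_or_eq_of_le hx₃T.1.1 with h | h
      · exact h
      · rw [← h] at hx₃T
        exact absurd hx₃T.2 (not_le.mpr hθx₂lt)
    have hbelow : ∀ x, x₂ ≤ x → x < x₃ → θ x < 1 / α := by
      intro x hxa hxb
      by_contra h
      push_neg at h
      have : x ∈ T := ⟨⟨hxa, hxb.le.trans hx₃T.1.2⟩, h⟩
      exact absurd (csInf_le hTcpt.bddBelow this) (not_le.mpr hxb)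
    have hanti : StrictAntiOn θ (Set.Icc x₂ x₃) := by
      apply strictAntiOn_of_deriv_neg (convex_Icc _ _) hθcont.continuousOn
      intro x hx
      rw [interior_Icc] at hx
      exact hkey x hx.1 (hx.2.le.trans hx₃T.1.2) (hbelow x hx.1.le hx.2)
    have hlast := hanti ⟨le_refl x₂, hx₂x₃.le⟩ ⟨hx₂x₃.le, le_refl x₃⟩ hx₂x₃
    have h13 : 1 / α ≤ θ x₃ := hx₃T.2
    linarith
  -- final contradiction
  have hanti2 : StrictAntiOn θ (Set.Icc x₂ x₀) := by
    apply strictAntiOn_of_deriv_neg (convex_Icc _ _) hθcont.continuousOn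
    intro x hx
    rw [interior_Icc] at hx
    exact hkey x hx.1 hx.2.le (hTempty x hx.1.le hx.2.le)
  have hfin := hanti2 ⟨le_refl x₂, hx₂le⟩ ⟨hx₂le, le_refl x₀⟩ hx₂lt
  have : θ x₀ < Rm x₀ := lt_of_lt_of_le (lt_of_lt_of_le hfin hx₂θ) (hRmmono hx₂le)
  linarith
end

section
/- Let g satisfy (G), let α ∈ (0,1), c_α := α + α^{−1}, and let U : ℝ → (0,1) be a C² solution of U″ + c_α U′ + g(U) = 0 with U′ < 0, lim_{s→−∞} U(s) = 1 and lim_{s→∞} U(s) = 0. Define q : (−∞,1] → ℝ by q(v) = 2/(c_α + √(c_α² − 4v)) for v ∈ [0,1] and q(v) = 1/c_α for v < 0. Then −U′(x) ≤ q(g′(U(x))) · g(U(x)) for every x ∈ ℝ; moreover q(v) ≤ r_α(v) for all v ∈ (−∞,1], where r_α(v) = α/(1 + α²(1−v)) for v ∈ [0,1] and r_α(v) = α/(1+α²) for v < 0. -/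
open MeasureTheory Filter Real Set Topology

noncomputable def qfun (α w : ℝ) : ℝ :=
  2 / ((α + α⁻¹) + Real.sqrt ((α + α⁻¹) ^ 2 - 4 * max w 0))

lemma cross_barrier {f f' b : ℝ → ℝ}
    (hf : ∀ t, HasDerivAt f (f' t) t)
    (hb : Continuous b) (hbm : Monotone b)
    (hneg : ∀ t, f t = b t → f' t < 0)
    {y x : ℝ} (hyx : y ≤ x) (hy : f y < b y) : f x < b x := by
  rcases hyx.eq_or_lt with rfl | hyx
  · exact hy
  by_contra hx
  push_neg at hx
  have hfc : Continuous f := Differentiable.continuous (fun t => (hf t).differentiableAt)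
  set C : Set ℝ := Icc y x ∩ {s | b s ≤ f s} with hC
  have hCne : C.Nonempty := ⟨x, ⟨hyx.le, le_rfl⟩, hx⟩
  have hCbdd : BddBelow C := ⟨y, fun s hs => hs.1.1⟩
  have hCclosed : IsClosed C := isClosed_Icc.inter (isClosed_le hb hfc)
  set T := sInf C with hT
  have hTC : T ∈ C := hCclosed.csInf_mem hCne hCbdd
  have hyT : y < T := by
    rcases hTC.1.1.eq_or_lt with h | h
    · exact absurd (h ▸ hTC.2) (not_le.2 hy)
    · exact h
  have hless : ∀ s, y ≤ s → s < T → f s < b s := by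
    intro s hys hsT
    by_contra hfs
    push_neg at hfs
    exact absurd (csInf_le hCbdd ⟨⟨hys, hsT.le.trans hTC.1.2⟩, hfs⟩) (not_le.2 hsT)
  have hfT : f T = b T := by
    refine le_antisymm ?_ hTC.2
    have ht : Tendsto f (𝓝[<] T) (𝓝 (f T)) := (hfc.tendsto T).mono_left nhdsWithin_le_nhds
    refine le_of_tendsto ht ?_
    filter_upwards [Ioo_mem_nhdsLT_of_mem (⟨hyT, le_rfl⟩ : T ∈ Ioc y T)] with s hs
    exact ((hless s hs.1.le hs.2).le).trans (hbm hs.2.le)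
  have hd : f' T < 0 := hneg T hfT
  have hslope : Tendsto (slope f T) (𝓝[<] T) (𝓝 (f' T)) :=
    (hasDerivAt_iff_tendsto_slope.mp (hf T)).mono_left
      (nhdsWithin_mono _ (fun s hs => ne_of_lt hs))
  have hev : ∀ᶠ s in 𝓝[<] T, slope f T s < 0 := hslope.eventually_lt_const hd
  have hmem : ∀ᶠ s in 𝓝[<] T, s ∈ Ioo y T :=
    eventually_of_mem (Ioo_mem_nhdsLT_of_mem (⟨hyT, le_rfl⟩ : T ∈ Ioc y T)) (fun _ h => h)
  obtain ⟨s, hs1, hs2⟩ := (hev.and hmem).exists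
  have hnum : 0 < f s - f T := by
    have hden : s - T < 0 := sub_neg.2 hs2.2
    have heq : slope f T s = (f s - f T) / (s - T) := by
      simp [slope_def_field]
    rw [heq] at hs1
    rcases div_neg_iff.mp hs1 with ⟨h1, h2⟩ | ⟨h1, h2⟩
    · linarith
    · linarith
  have hlt := hless s hs2.1.le hs2.2
  have hbs : b s ≤ b T := hbm hs2.2.le
  linarith [hfT ▸ hnum]

lemma qfun_pos {α : ℝ} (hα0 : 0 < α) (w : ℝ) : 0 < qfun α w := by
  have h1 : 0 < α⁻¹ := inv_pos.2 hα0
  have h2 : 0 ≤ Real.sqrt ((α + α⁻¹) ^ 2 - 4 * max w 0) := Real.sqrt_nonneg _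
  unfold qfun
  have : 0 < (α + α⁻¹) + Real.sqrt ((α + α⁻¹) ^ 2 - 4 * max w 0) := by linarith
  positivity

lemma sqrt_c24 {α : ℝ} (hα0 : 0 < α) (hα1 : α < 1) :
    Real.sqrt ((α + α⁻¹) ^ 2 - 4) = α⁻¹ - α := by
  have hne : α ≠ 0 := ne_of_gt hα0
  have hinv : α * α⁻¹ = 1 := mul_inv_cancel₀ hne
  have hgt : α < α⁻¹ := by nlinarith
  have h : (α + α⁻¹) ^ 2 - 4 = (α⁻¹ - α) ^ 2 := by field_simp; ring
  rw [h, Real.sqrt_sq (by linarith)]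

lemma qfun_if {α : ℝ} (hα0 : 0 < α) (w : ℝ) :
    (if 0 ≤ w then 2 / ((α + α⁻¹) + Real.sqrt ((α + α⁻¹) ^ 2 - 4 * w))
      else 1 / (α + α⁻¹)) = qfun α w := by
  have h1 : 0 < α⁻¹ := inv_pos.2 hα0
  have hc : 0 < α + α⁻¹ := by linarith
  unfold qfun
  split_ifs with h
  · rw [max_eq_left h]
  · push_neg at h
    rw [max_eq_right h.le,
      show (α + α⁻¹) ^ 2 - 4 * (0:ℝ) = (α + α⁻¹) ^ 2 by ring, Real.sqrt_sq hc.le,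
      div_eq_div_iff (ne_of_gt hc) (ne_of_gt (by linarith : (0:ℝ) < α + α⁻¹ + (α + α⁻¹)))]
    ring


lemma qfun_mono {α : ℝ} (hα0 : 0 < α) : Monotone (qfun α) := by
  intro a b hab
  have h1 : 0 < α⁻¹ := inv_pos.2 hα0
  have hc : 0 < α + α⁻¹ := by linarith
  unfold qfun
  apply div_le_div_of_nonneg_left (by norm_num) (by positivity)
  have h2 : (α + α⁻¹) ^ 2 - 4 * max b 0 ≤ (α + α⁻¹) ^ 2 - 4 * max a 0 := by
    have := max_le_max hab (le_refl (0:ℝ))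
    linarith
  have := Real.sqrt_le_sqrt h2
  linarith

lemma qfun_le {α : ℝ} (hα0 : 0 < α) (hα1 : α < 1) (w : ℝ) (hw : w ≤ 1) : qfun α w ≤ α := by
  have h1 : 0 < α⁻¹ := inv_pos.2 hα0
  have hne : α ≠ 0 := ne_of_gt hα0
  have hinv : α * α⁻¹ = 1 := mul_inv_cancel₀ hne
  have hgt : α < α⁻¹ := by nlinarith
  have hd1 : (α + α⁻¹) ^ 2 - 4 ≤ (α + α⁻¹) ^ 2 - 4 * max w 0 := by
    have : max w 0 ≤ 1 := max_le hw zero_le_one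
    linarith
  have h2 : α⁻¹ - α ≤ Real.sqrt ((α + α⁻¹) ^ 2 - 4 * max w 0) :=
    (sqrt_c24 hα0 hα1) ▸ Real.sqrt_le_sqrt hd1
  have h3 : qfun α w ≤ 2 / ((α + α⁻¹) + (α⁻¹ - α)) := by
    unfold qfun
    apply div_le_div_of_nonneg_left (by norm_num) (by linarith) (by linarith)
  have h4 : 2 / ((α + α⁻¹) + (α⁻¹ - α)) = α := by
    rw [show (α + α⁻¹) + (α⁻¹ - α) = 2 * α⁻¹ by ring, div_eq_iff (by positivity)]
    nlinarith
  linarith [h4 ▸ h3]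

lemma qfun_ge {α : ℝ} (hα0 : 0 < α) (w : ℝ) : 1 / (α + α⁻¹) ≤ qfun α w := by
  have h1 : 0 < α⁻¹ := inv_pos.2 hα0
  have hc : 0 < α + α⁻¹ := by linarith
  have hs : Real.sqrt ((α + α⁻¹) ^ 2 - 4 * max w 0) ≤ α + α⁻¹ := by
    have h2 : (α + α⁻¹) ^ 2 - 4 * max w 0 ≤ (α + α⁻¹) ^ 2 := by
      have : (0:ℝ) ≤ max w 0 := le_max_right _ _
      linarith
    calc Real.sqrt ((α + α⁻¹) ^ 2 - 4 * max w 0) ≤ Real.sqrt ((α + α⁻¹) ^ 2) :=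
          Real.sqrt_le_sqrt h2
      _ = α + α⁻¹ := Real.sqrt_sq hc.le
  have hs0 : 0 ≤ Real.sqrt ((α + α⁻¹) ^ 2 - 4 * max w 0) := Real.sqrt_nonneg _
  unfold qfun
  rw [div_le_div_iff₀ hc (by linarith)]
  linarith

lemma qfun_cont {α : ℝ} (hα0 : 0 < α) : Continuous (qfun α) := by
  have h1 : 0 < α⁻¹ := inv_pos.2 hα0
  have hc : 0 < α + α⁻¹ := by linarith
  apply continuous_const.div
  · fun_prop
  · intro w
    have : 0 ≤ Real.sqrt ((α + α⁻¹) ^ 2 - 4 * max w 0) := Real.sqrt_nonneg _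
    linarith

lemma qfun_Fneg {α : ℝ} (hα0 : 0 < α) (hα1 : α < 1) (w : ℝ) (hw : w < 1) (z : ℝ)
    (hz1 : qfun α w < z) (hz2 : z ≤ α⁻¹) :
    w * z ^ 2 - (α + α⁻¹) * z + 1 < 0 := by
  have h1 : 0 < α⁻¹ := inv_pos.2 hα0
  have hne : α ≠ 0 := ne_of_gt hα0
  have hinv : α * α⁻¹ = 1 := mul_inv_cancel₀ hne
  have hgt : α < α⁻¹ := by nlinarith
  have hc : 0 < α + α⁻¹ := by linarith
  have hc4 : 0 ≤ (α + α⁻¹) ^ 2 - 4 := by nlinarith [sq_nonneg (α⁻¹ - α)]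
  rcases le_or_gt w 0 with hw0 | hw0
  · have hqqw : qfun α w = 1 / (α + α⁻¹) := by
      unfold qfun
      rw [max_eq_right hw0,
        show (α + α⁻¹) ^ 2 - 4 * (0:ℝ) = (α + α⁻¹) ^ 2 by ring, Real.sqrt_sq hc.le,
        div_eq_div_iff (ne_of_gt (by linarith : (0:ℝ) < α + α⁻¹ + (α + α⁻¹))) (ne_of_gt hc)]
      ring
    rw [hqqw] at hz1
    have hcz : 1 < z * (α + α⁻¹) := (div_lt_iff₀ hc).mp hz1
    nlinarith [mul_nonpos_of_nonpos_of_nonneg hw0 (sq_nonneg z)]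
  · have hmax : max w 0 = w := max_eq_left hw0.le
    have hc4w : 0 ≤ (α + α⁻¹) ^ 2 - 4 * w := by nlinarith
    obtain ⟨s, hsdef⟩ : ∃ s, s = Real.sqrt ((α + α⁻¹) ^ 2 - 4 * w) := ⟨_, rfl⟩
    have hs0 : 0 ≤ s := hsdef ▸ Real.sqrt_nonneg _
    have hs2 : s ^ 2 = (α + α⁻¹) ^ 2 - 4 * w := hsdef ▸ Real.sq_sqrt hc4w
    have hslt : s < α + α⁻¹ := by
      have hlt : Real.sqrt ((α + α⁻¹) ^ 2 - 4 * w) < Real.sqrt ((α + α⁻¹) ^ 2) := by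
        apply Real.sqrt_lt_sqrt hc4w
        nlinarith
      rw [Real.sqrt_sq hc.le] at hlt
      rw [hsdef]; exact hlt
    have hsge : α⁻¹ - α ≤ s := by
      rw [hsdef, ← sqrt_c24 hα0 hα1]
      apply Real.sqrt_le_sqrt
      nlinarith
    have hden : 0 < (α + α⁻¹) + s := by positivity
    have hz0 : 0 < z := lt_trans (qfun_pos hα0 w) hz1
    have hqq : qfun α w = 2 / ((α + α⁻¹) + s) := by unfold qfun; rw [hmax, hsdef]
    rw [hqq] at hz1
    have h2lt : 2 < z * ((α + α⁻¹) + s) := (div_lt_iff₀ hden).mp hz1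
    have hh1 : (α + α⁻¹) - s < 2 * w * z := by
      have hcs : 0 < (α + α⁻¹) - s := by linarith
      have := mul_lt_mul_of_pos_right h2lt hcs
      nlinarith [hs2]
    have hh2 : 2 * w * z < (α + α⁻¹) + s := by
      have ha : 2 * w * z ≤ 2 * w * α⁻¹ := by nlinarith
      have hb : 2 * w * α⁻¹ < 2 * α⁻¹ := by nlinarith
      linarith
    have key : 0 < (2 * w * z - ((α + α⁻¹) - s)) * (((α + α⁻¹) + s) - 2 * w * z) :=
      mul_pos (by linarith) (by linarith)
    have hexp : (2 * w * z - ((α + α⁻¹) - s)) * (((α + α⁻¹) + s) - 2 * w * z)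
        = -(4 * w) * (w * z ^ 2 - (α + α⁻¹) * z + 1) := by linear_combination hs2
    rw [hexp] at key
    have key2 : 0 < -4 * (w * (w * z ^ 2 - (α + α⁻¹) * z + 1)) := by linear_combination key
    by_contra hX
    push_neg at hX
    have hmul : 0 ≤ w * (w * z ^ 2 - (α + α⁻¹) * z + 1) := mul_nonneg hw0.le hX
    linarith

set_option maxHeartbeats 2000000 in
/-- `−U′ ≤ q(g′(U)) g(U)` where `q(v) = 2/(c_α + √(c_α² − 4v))` for
`v ∈ [0,1]` and `q(v) = 1/c_α` for `v < 0`; moreover `q ≤ r_α` on `(−∞,1]`. -/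
theorem stmt13 (g U : ℝ → ℝ) (α : ℝ) (hα : α ∈ Set.Ioo (0:ℝ) 1)
    (hgC1 : ContDiff ℝ 1 g) (hgnonneg : ∀ u ∈ Set.Icc (0:ℝ) 1, 0 ≤ g u)
    (hg0 : g 0 = 0) (hg1 : g 1 = 0) (hg'0 : deriv g 0 = 1)
    (hg'anti : StrictAntiOn (deriv g) (Set.Icc 0 1)) (hg'1 : -1 ≤ deriv g 1)
    (hgint : MeasureTheory.IntegrableOn (fun u => (u - g u) / u ^ 2) (Set.Ioc 0 1))
    (hUC2 : ContDiff ℝ 2 U) (hUrange : ∀ s, U s ∈ Set.Ioo (0:ℝ) 1)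
    (hUode : ∀ s, deriv (deriv U) s + (α + α⁻¹) * deriv U s + g (U s) = 0)
    (hU' : ∀ s, deriv U s < 0)
    (hUbot : Tendsto U atBot (nhds 1)) (hUtop : Tendsto U atTop (nhds 0)) :
    (∀ x : ℝ,
      -deriv U x ≤
        (if 0 ≤ deriv g (U x)
          then 2 / ((α + α⁻¹) + Real.sqrt ((α + α⁻¹) ^ 2 - 4 * deriv g (U x)))
          else 1 / (α + α⁻¹)) * g (U x)) ∧
    (∀ v : ℝ, v ≤ 1 →
      (if 0 ≤ v then 2 / ((α + α⁻¹) + Real.sqrt ((α + α⁻¹) ^ 2 - 4 * v))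
        else 1 / (α + α⁻¹)) ≤
      (if 0 ≤ v then α / (1 + α ^ 2 * (1 - v)) else α / (1 + α ^ 2))) := by
  obtain ⟨hα0, hα1⟩ := hα
  have hne : α ≠ 0 := ne_of_gt hα0
  have hainv : 0 < α⁻¹ := inv_pos.2 hα0
  have hinv : α * α⁻¹ = 1 := mul_inv_cancel₀ hne
  have hgt : α < α⁻¹ := by nlinarith
  have hc : 0 < α + α⁻¹ := by linarith
  -- regularity facts
  have hgd : Differentiable ℝ g := hgC1.differentiable one_ne_zero
  have hg'c : Continuous (deriv g) := hgC1.continuous_deriv le_rfl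
  have hUd : Differentiable ℝ U := hUC2.differentiable two_ne_zero
  have hUc : Continuous U := hUd.continuous
  have hU'd : Differentiable ℝ (deriv U) := by
    have h2 : ContDiff ℝ (1+1) U := by convert hUC2 using 2; norm_num
    exact ((contDiff_succ_iff_deriv.mp h2).2.2).differentiable one_ne_zero
  have hU'c : Continuous (deriv U) := hU'd.continuous
  -- positivity of g on (0,1)
  have hgpos : ∀ u : ℝ, 0 < u → u < 1 → 0 < g u := by
    intro u h0 h1
    rcases (hgnonneg u ⟨h0.le, h1.le⟩).lt_or_eq with h | h
    · exact h
    exfalso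
    have hmin : deriv g u = 0 := by
      apply IsLocalMin.deriv_eq_zero
      filter_upwards [Ioo_mem_nhds h0 h1] with z hz
      rw [← h]
      exact hgnonneg z ⟨hz.1.le, hz.2.le⟩
    obtain ⟨b, hb, hb0⟩ := exists_deriv_eq_zero h1 hgd.continuous.continuousOn
      (by rw [← h, hg1])
    have := hg'anti ⟨h0.le, h1.le⟩ ⟨(h0.trans hb.1).le, hb.2.le⟩ hb.1
    rw [hmin, hb0] at this
    exact lt_irrefl 0 this
  have hGpos : ∀ x, 0 < g (U x) := fun x => hgpos _ (hUrange x).1 (hUrange x).2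
  have hζpos : ∀ x, 0 < -deriv U x / g (U x) :=
    fun x => div_pos (neg_pos.2 (hU' x)) (hGpos x)
  have hv_lt1 : ∀ x, deriv g (U x) < 1 := by
    intro x
    have := hg'anti ⟨le_rfl, zero_le_one⟩ ⟨(hUrange x).1.le, (hUrange x).2.le⟩ (hUrange x).1
    rwa [hg'0] at this
  have hUanti : StrictAnti U := strictAnti_of_deriv_neg hU'
  have hv_mono : Monotone (fun y => deriv g (U y)) := by
    intro a b hab
    rcases hab.eq_or_lt with rfl | hlt
    · exact le_rfl
    · exact (hg'anti ⟨(hUrange b).1.le, (hUrange b).2.le⟩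
        ⟨(hUrange a).1.le, (hUrange a).2.le⟩ (hUanti hlt)).le
  -- derivative of ζ = -U'/g(U)
  have hζ'fun : ∀ t, HasDerivAt (fun y => -deriv U y / g (U y))
      (deriv g (U t) * (-deriv U t / g (U t)) ^ 2
        - (α + α⁻¹) * (-deriv U t / g (U t)) + 1) t := by
    intro t
    have hU1 : HasDerivAt U (deriv U t) t := (hUd t).hasDerivAt
    have hU2 : HasDerivAt (deriv U) (deriv (deriv U) t) t := (hU'd t).hasDerivAt
    have hP : HasDerivAt (fun y => -deriv U y) (-(deriv (deriv U) t)) t := hU2.neg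
    have hGc : HasDerivAt (fun y => g (U y)) (deriv g (U t) * deriv U t) t :=
      (hgd (U t)).hasDerivAt.comp t hU1
    have hzz := hP.div hGc (ne_of_gt (hGpos t))
    refine hzz.congr_deriv ?_
    have hode : deriv (deriv U) t = -((α + α⁻¹) * deriv U t) - g (U t) := by
      linarith [hUode t]
    rw [hode]
    field_simp [hne, ne_of_gt (hGpos t)]
    ring
  have hζcont : Continuous (fun y => -deriv U y / g (U y)) :=
    Continuous.div hU'c.neg (hgd.continuous.comp hUc) (fun y => ne_of_gt (hGpos y))
  -- Step A : ζ < α⁻¹ everywhere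
  have hzeta_lt : ∀ x, -deriv U x / g (U x) < α⁻¹ := by
    by_contra hcon
    push_neg at hcon
    obtain ⟨x₀, hx₀⟩ := hcon
    have hray : ∀ y, y ≤ x₀ → α⁻¹ ≤ -deriv U y / g (U y) := by
      intro y hy
      by_contra hlt
      push_neg at hlt
      have hcr := cross_barrier hζ'fun continuous_const monotone_const ?_ hy hlt
      · exact absurd hcr (not_lt.2 hx₀)
      · intro t ht
        have h1 : qfun α (deriv g (U t)) < -deriv U t / g (U t) := by
          rw [ht]
          exact lt_of_le_of_lt (qfun_le hα0 hα1 _ (hv_lt1 t).le) hgt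
        exact qfun_Fneg hα0 hα1 _ (hv_lt1 t) _ h1 (le_of_eq ht)
    -- -U' is strictly decreasing on Iic x₀
    have hPneg : ∀ y ∈ interior (Iic x₀), deriv (fun z => -deriv U z) y < 0 := by
      intro y hy
      rw [interior_Iic] at hy
      have hray' := hray y (le_of_lt hy)
      have h2 : α⁻¹ * g (U y) ≤ -deriv U y := (le_div_iff₀ (hGpos y)).mp hray'
      have hge : g (U y) ≤ α * (-deriv U y) := by nlinarith [hGpos y]
      have hD : deriv (fun z => -deriv U z) y = -(deriv (deriv U) y) := by
        rw [deriv.fun_neg]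
      rw [hD]
      nlinarith [hUode y, mul_neg_of_pos_of_neg hainv (hU' y)]
    have hPanti : StrictAntiOn (fun z => -deriv U z) (Iic x₀) :=
      strictAntiOn_of_deriv_neg (convex_Iic x₀) (hU'c.neg.continuousOn) hPneg
    obtain ⟨m, hm, hmdef⟩ : ∃ m, 0 < m ∧ m = -deriv U x₀ :=
      ⟨_, neg_pos.2 (hU' x₀), rfl⟩
    obtain ⟨y, hydef⟩ : ∃ y, y = x₀ - 2 / m := ⟨_, rfl⟩
    have hyx : y < x₀ := by
      rw [hydef]
      have : 0 < 2 / m := by positivity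
      linarith
    obtain ⟨ξ, hξ, hslope⟩ := exists_hasDerivAt_eq_slope U (fun z => deriv U z) hyx
      (hUc.continuousOn) (fun z _ => (hUd z).hasDerivAt)
    have hPξ : m < -deriv U ξ := by
      rw [hmdef]
      exact hPanti (le_of_lt hξ.2 : ξ ∈ Iic x₀) (mem_Iic.2 le_rfl) hξ.2
    have hxy : x₀ - y = 2 / m := by rw [hydef]; ring
    have hxypos : 0 < x₀ - y := by linarith
    have hUval : U x₀ - U y = deriv U ξ * (x₀ - y) := by
      rw [hslope]
      field_simp
    have hbound : deriv U ξ * (x₀ - y) ≤ -m * (2 / m) := by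
      rw [hxy]
      apply mul_le_mul_of_nonneg_right (by linarith) (by positivity)
    have hmm : m * (2 / m) = 2 := by field_simp
    have : U y ≥ U x₀ + 2 := by nlinarith [hUval, hbound, hmm]
    have h1 := (hUrange y).2
    have h0 := (hUrange x₀).1
    linarith
  -- Main comparison
  constructor
  · intro x₀
    rw [qfun_if hα0]
    by_contra hcon
    push_neg at hcon
    have hgt0 : qfun α (deriv g (U x₀)) < -deriv U x₀ / g (U x₀) :=
      (lt_div_iff₀ (hGpos x₀)).2 hcon
    obtain ⟨ε, hε, hεeq⟩ : ∃ ε, 0 < ε ∧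
        -deriv U x₀ / g (U x₀) = qfun α (deriv g (U x₀)) + ε :=
      ⟨_, sub_pos.2 hgt0, by ring⟩
    have hbc : Continuous (fun y => qfun α (deriv g (U y)) + ε) :=
      ((qfun_cont hα0).comp (hg'c.comp hUc)).add continuous_const
    have hbm : Monotone (fun y => qfun α (deriv g (U y)) + ε) :=
      fun a b hab => add_le_add_left ((qfun_mono hα0) (hv_mono hab)) _
    have hray : ∀ y, y ≤ x₀ → qfun α (deriv g (U y)) + ε ≤ -deriv U y / g (U y) := by
      intro y hy
      by_contra hlt
      push_neg at hlt
      have hcr := cross_barrier hζ'fun hbc hbm ?_ hy hlt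
      · rw [← hεeq] at hcr
        exact lt_irrefl _ hcr
      · intro t ht
        apply qfun_Fneg hα0 hα1 _ (hv_lt1 t) _ ?_ (hzeta_lt t).le
        rw [ht]
        exact lt_add_of_pos_right _ hε
    -- towards -∞ : contradiction
    have hg'1le : deriv g 1 ≤ 0 := by
      have hd := (hgd 1).hasDerivAt
      rw [hasDerivAt_iff_tendsto_slope] at hd
      have hd' : Tendsto (slope g 1) (𝓝[<] 1) (𝓝 (deriv g 1)) :=
        hd.mono_left (nhdsWithin_mono _ (fun z hz => ne_of_lt hz))
      refine le_of_tendsto hd' ?_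
      filter_upwards [Ioo_mem_nhdsLT_of_mem (show (1:ℝ) ∈ Ioc 0 1 from ⟨zero_lt_one, le_rfl⟩)]
        with z hz
      have h1 : 0 ≤ g z := hgnonneg z ⟨hz.1.le, hz.2.le⟩
      have h2 : slope g 1 z = (g z - g 1) / (z - 1) := by simp [slope_def_field]
      rw [h2, hg1]
      exact div_nonpos_of_nonneg_of_nonpos (by linarith) (by linarith [hz.2])
    obtain ⟨δ, hδpos, hδval⟩ : ∃ δ, 0 < δ ∧ δ = ε * (α + α⁻¹) * α ^ 2 / 2 :=
      ⟨_, by positivity, rfl⟩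
    have hvbot : Tendsto (fun y => deriv g (U y)) atBot (𝓝 (deriv g 1)) :=
      (hg'c.tendsto 1).comp hUbot
    have hev : ∀ᶠ y in atBot, deriv g (U y) < δ :=
      hvbot.eventually_lt_const (lt_of_le_of_lt hg'1le hδpos)
    obtain ⟨Y0, hY0⟩ := eventually_atBot.mp hev
    obtain ⟨Y, hYdef⟩ : ∃ Y, Y = min Y0 x₀ := ⟨_, rfl⟩
    have hinv2 : α ^ 2 * α⁻¹ ^ 2 = 1 := by rw [← mul_pow, hinv, one_pow]
    have hcc : (α + α⁻¹) * (1 / (α + α⁻¹)) = 1 := mul_one_div_cancel (ne_of_gt hc)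
    have hFneg2 : ∀ y, y ≤ Y →
        deriv g (U y) * (-deriv U y / g (U y)) ^ 2
          - (α + α⁻¹) * (-deriv U y / g (U y)) + 1 ≤ -(ε * (α + α⁻¹) / 2) := by
      intro y hy
      rw [hYdef] at hy
      have h1 : deriv g (U y) < δ := hY0 y (le_trans hy (min_le_left _ _))
      have h2 := hray y (le_trans hy (min_le_right _ _))
      have h3 : 1 / (α + α⁻¹) + ε ≤ -deriv U y / g (U y) :=
        le_trans (by linarith [qfun_ge hα0 (deriv g (U y))]) h2
      have h4 := hzeta_lt y
      have h5 := hζpos y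
      obtain ⟨Z, hZdef⟩ : ∃ Z, Z = -deriv U y / g (U y) := ⟨_, rfl⟩
      rw [← hZdef] at h3 h4 h5 ⊢
      have hZ2 : Z ^ 2 ≤ α⁻¹ ^ 2 := by nlinarith
      have hA : deriv g (U y) * Z ^ 2 ≤ δ * α⁻¹ ^ 2 := by
        calc deriv g (U y) * Z ^ 2 ≤ δ * Z ^ 2 :=
              mul_le_mul_of_nonneg_right h1.le (sq_nonneg _)
          _ ≤ δ * α⁻¹ ^ 2 := mul_le_mul_of_nonneg_left hZ2 hδpos.le
      have hB : 1 + (α + α⁻¹) * ε ≤ (α + α⁻¹) * Z := by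
        have := mul_le_mul_of_nonneg_left h3 hc.le
        nlinarith [hcc]
      have hδa : δ * α⁻¹ ^ 2 = ε * (α + α⁻¹) / 2 := by
        rw [hδval]
        linear_combination (ε * (α + α⁻¹) / 2) * hinv2
      nlinarith [hA, hB, hδa]
    have hκ : 0 < ε * (α + α⁻¹) / 2 := by positivity
    obtain ⟨y₁, hy₁def⟩ : ∃ y₁, y₁ = Y - (α⁻¹ + 1) / (ε * (α + α⁻¹) / 2) := ⟨_, rfl⟩
    have hy₁Y : y₁ < Y := by
      rw [hy₁def]
      have : 0 < (α⁻¹ + 1) / (ε * (α + α⁻¹) / 2) := by positivity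
      linarith
    obtain ⟨ξ, hξ, hsl⟩ := exists_hasDerivAt_eq_slope
      (fun y => -deriv U y / g (U y))
      (fun t => deriv g (U t) * (-deriv U t / g (U t)) ^ 2
        - (α + α⁻¹) * (-deriv U t / g (U t)) + 1)
      hy₁Y (hζcont.continuousOn) (fun z _ => hζ'fun z)
    have h6 := hFneg2 ξ hξ.2.le
    rw [hsl] at h6
    have hYy : Y - y₁ = (α⁻¹ + 1) / (ε * (α + α⁻¹) / 2) := by rw [hy₁def]; ring
    have hpos : 0 < Y - y₁ := by linarith
    have h7 : (-deriv U Y / g (U Y)) - (-deriv U y₁ / g (U y₁))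
        ≤ -(ε * (α + α⁻¹) / 2) * (Y - y₁) := by
      rw [div_le_iff₀ hpos] at h6
      linarith [h6]
    have h8 : -(ε * (α + α⁻¹) / 2) * (Y - y₁) = -(α⁻¹ + 1) := by
      rw [hYy]
      field_simp
    linarith [hzeta_lt y₁, hζpos Y, h7, h8 ▸ h7]
  · -- Part 2 : q ≤ r
    intro v hv
    have hc_pos : 0 < α + α⁻¹ := hc
    by_cases h0 : 0 ≤ v
    · simp only [if_pos h0]
      have hc4 : 0 ≤ (α + α⁻¹) ^ 2 - 4 * v := by nlinarith [sq_nonneg (α⁻¹ - α)]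
      set s := Real.sqrt ((α + α⁻¹) ^ 2 - 4 * v) with hs
      have hs0 : 0 ≤ s := Real.sqrt_nonneg _
      have hs2 : s ^ 2 = (α + α⁻¹) ^ 2 - 4 * v := Real.sq_sqrt hc4
      have hden1 : 0 < (α + α⁻¹) + s := by positivity
      have hden2 : 0 < 1 + α ^ 2 * (1 - v) := by nlinarith
      rw [div_le_div_iff₀ hden1 hden2]
      have hac : α * (α + α⁻¹) = 1 + α ^ 2 := by field_simp; ring
      have hB0 : 0 ≤ 1 + α ^ 2 - 2 * α ^ 2 * v := by nlinarith
      have hBs : 1 + α ^ 2 - 2 * α ^ 2 * v ≤ α * s := by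
        by_contra hlt
        push_neg at hlt
        have h2 : (α * s) * (α * s) < (1 + α ^ 2 - 2 * α ^ 2 * v) * (1 + α ^ 2 - 2 * α ^ 2 * v) :=
          mul_self_lt_mul_self (by positivity) hlt
        have h3 : α ^ 2 * s ^ 2 = (α * (α + α⁻¹)) ^ 2 - 4 * α ^ 2 * v := by rw [hs2]; ring
        rw [hac] at h3
        nlinarith [h2, h3, mul_nonneg (mul_nonneg (pow_nonneg hα0.le 4) h0) (sub_nonneg.2 hv)]
      nlinarith [hBs, hac]
    · simp only [if_neg h0]
      have hac : α * (α + α⁻¹) = 1 + α ^ 2 := by field_simp; ring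
      rw [div_le_div_iff₀ hc_pos (by nlinarith : (0:ℝ) < 1 + α ^ 2)]
      nlinarith [hac]
end
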